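/- arXiv:1910.02816 — 7 statements merged into one kernel-verified Lean document; each statement's English description precedes it below -/
import Mathlib

section
/- The collection {T ⊆ [n] : T ≤ S} (where T ≤ S means #T = #S and, writing T = {a_1 < ... < a_k}, S = {b_1 < ... < b_k}, we have a_i ≤ b_i for all i) forms the set of bases of a matroid on [n]. -/
/-- Domination order on finsets of `Fin n`: `T ≤ S` iff they have the same
cardinality and the `i`-th smallest element of `T` is at most the `i`-th
smallest element of `S` for every `i`. -/
def SchubertDom {n : ℕ} (T S : Finset (Fin n)) : Prop :=
  List.Forall₂ (· ≤ ·) (T.sort (· ≤ ·)) (S.sort (· ≤ ·))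

variable {n : ℕ}

lemma countP_le_of_forall₂ {l l' : List (Fin n)} (t : Fin n)
    (h : List.Forall₂ (· ≤ ·) l l') :
    l.countP (fun x => t ≤ x) ≤ l'.countP (fun x => t ≤ x) := by
  induction h with
  | nil => simp
  | @cons a b l l' hab htl ih =>
    simp only [List.countP_cons]
    by_cases h1 : t ≤ a
    · have h2 : t ≤ b := h1.trans hab
      simp [h1, h2]; omega
    · simp only [h1]
      exact le_trans (by simp; omega) (Nat.le_add_right _ _)

lemma card_filter_eq_countP (T : Finset (Fin n)) (t : Fin n) :
    (T.filter (fun x => t ≤ x)).card = (T.sort (· ≤ ·)).countP (fun x => t ≤ x) := by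
  rw [((Finset.sort_perm_toList T (· ≤ ·)).countP_eq _)]
  simp [List.countP_eq_length_filter, Finset.filter, Finset.card]
  rw [Finset.toList, ← Multiset.coe_card, ← Multiset.filter_coe, Multiset.coe_toList]

lemma schubertDom_iff (T S : Finset (Fin n)) :
    SchubertDom T S ↔ T.card = S.card ∧
      ∀ t : Fin n, (T.filter (fun x => t ≤ x)).card ≤ (S.filter (fun x => t ≤ x)).card := by
  constructor
  · intro h
    refine ⟨?_, fun t => ?_⟩
    · have := h.length_eq; simpa using this
    · rw [card_filter_eq_countP, card_filter_eq_countP]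
      exact countP_le_of_forall₂ t h
  · rintro ⟨hcard, hcount⟩
    have hlen : (T.sort (· ≤ ·)).length = (S.sort (· ≤ ·)).length := by simp [hcard]
    rw [SchubertDom, List.forall₂_iff_get]
    refine ⟨hlen, fun i h₁ h₂ => ?_⟩
    by_contra hlt
    push_neg at hlt
    set lT := T.sort (· ≤ ·) with hlT
    set lS := S.sort (· ≤ ·) with hlS
    set t := lT.get ⟨i, h₁⟩ with ht
    have hTsort : lT.Pairwise (· ≤ ·) := Finset.pairwise_sort _ _
    have hSsort : lS.Pairwise (· < ·) := (Finset.sortedLT_sort _).pairwise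
    -- lower bound for T
    have hdropT : (lT.drop i).countP (fun x => t ≤ x) = (lT.drop i).length := by
      rw [List.countP_eq_length]
      intro x hx
      rw [List.mem_iff_getElem] at hx
      obtain ⟨j, hj, rfl⟩ := hx
      have hj' : i + j < lT.length := by
        have := hj; rw [List.length_drop] at this; omega
      rw [List.getElem_drop]
      simp only [decide_eq_true_eq]
      rcases Nat.eq_or_lt_of_le (Nat.le_add_right i j) with heq | hltij
      · exact le_of_eq (by simp [ht, ← heq])
      · exact List.pairwise_iff_get.mp hTsort ⟨i, h₁⟩ ⟨i + j, hj'⟩ hltij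
    have hlowT : lT.length - i ≤ lT.countP (fun x => t ≤ x) := by
      have hsplit : lT.countP (fun x => t ≤ x) =
          (lT.take i).countP (fun x => t ≤ x) + (lT.drop i).countP (fun x => t ≤ x) := by
        rw [← List.countP_append, List.take_append_drop]
      rw [hsplit, hdropT, List.length_drop]
      omega
    -- upper bound for S
    have htakeS : (lS.take (i + 1)).countP (fun x => t ≤ x) = 0 := by
      rw [List.countP_eq_zero]
      intro x hx
      rw [List.mem_iff_getElem] at hx
      obtain ⟨j, hj, rfl⟩ := hx
      have hj' : j < lS.length := by
        have := hj; rw [List.length_take] at this; omega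
      have hji : j ≤ i := by
        have := hj; rw [List.length_take] at this; omega
      rw [List.getElem_take]
      simp only [decide_eq_true_eq, not_le]
      rcases Nat.eq_or_lt_of_le hji with heq | hltji
      · calc lS[j] = lS.get ⟨i, h₂⟩ := by simp [heq]
          _ < t := hlt
      · calc lS[j] < lS.get ⟨i, h₂⟩ :=
            List.pairwise_iff_get.mp hSsort ⟨j, hj'⟩ ⟨i, h₂⟩ hltji
          _ < t := hlt
    have hupS : lS.countP (fun x => t ≤ x) ≤ lS.length - (i + 1) := by
      have hsplit : lS.countP (fun x => t ≤ x) =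
          (lS.take (i+1)).countP (fun x => t ≤ x) + (lS.drop (i+1)).countP (fun x => t ≤ x) := by
        rw [← List.countP_append, List.take_append_drop]
      rw [hsplit, htakeS, Nat.zero_add]
      exact le_trans List.countP_le_length (le_of_eq List.length_drop)
    have hcmp : lT.countP (fun x => t ≤ x) ≤ lS.countP (fun x => t ≤ x) := by
      rw [← card_filter_eq_countP, ← card_filter_eq_countP]
      exact hcount t
    omega

/-- The collection `{T ⊆ [n] : T ≤ S}` forms the set of bases of a matroid on `[n]`:
it is nonempty and satisfies the basis exchange axiom. -/
theorem schubert_matroid_basis_axioms (n : ℕ) (S : Finset (Fin n)) :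
    (∃ T : Finset (Fin n), SchubertDom T S) ∧
    (∀ A B : Finset (Fin n), SchubertDom A S → SchubertDom B S →
      ∀ a ∈ A \ B, ∃ b ∈ B \ A, SchubertDom (insert b (A.erase a)) S) := by
  constructor
  · exact ⟨S, List.forall₂_same.mpr fun x _ => le_refl x⟩
  · intro A B hA hB a ha
    rw [Finset.mem_sdiff] at ha
    rw [schubertDom_iff] at hA hB
    obtain ⟨hAc, hAf⟩ := hA
    obtain ⟨hBc, hBf⟩ := hB
    have hABc : A.card = B.card := hAc.trans hBc.symm
    have hBA : (B \ A).Nonempty := by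
      rw [Finset.sdiff_nonempty]
      intro hsub
      have hBAeq : B = A := Finset.eq_of_subset_of_card_le hsub hABc.le
      exact ha.2 (hBAeq ▸ ha.1)
    set b := (B \ A).min' hBA with hb
    have hbBA : b ∈ B \ A := Finset.min'_mem _ _
    rw [Finset.mem_sdiff] at hbBA
    refine ⟨b, Finset.mem_sdiff.mpr hbBA, ?_⟩
    rw [schubertDom_iff]
    have hbnA : b ∉ A.erase a := fun h => hbBA.2 (Finset.mem_of_mem_erase h)
    constructor
    · rw [Finset.card_insert_of_notMem hbnA, Finset.card_erase_of_mem ha.1]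
      have h1 : 1 ≤ A.card := Finset.card_pos.mpr ⟨a, ha.1⟩
      omega
    · intro t
      rw [Finset.filter_insert, Finset.filter_erase]
      by_cases htb : t ≤ b
      · by_cases hta : t ≤ a
        · rw [if_pos htb]
          have haf : a ∈ A.filter (fun x => t ≤ x) := Finset.mem_filter.mpr ⟨ha.1, hta⟩
          have hbf : b ∉ (A.filter (fun x => t ≤ x)).erase a :=
            fun h => hbBA.2 (Finset.mem_of_mem_filter b (Finset.mem_of_mem_erase h))
          rw [Finset.card_insert_of_notMem hbf, Finset.card_erase_of_mem haf]
          have h1 : 1 ≤ (A.filter (fun x => t ≤ x)).card := Finset.card_pos.mpr ⟨a, haf⟩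
          have h2 := hAf t
          omega
        · rw [if_pos htb]
          have herase : (A.filter (fun x => t ≤ x)).erase a = A.filter (fun x => t ≤ x) :=
            Finset.erase_eq_of_notMem (fun h => hta (Finset.mem_filter.mp h).2)
          rw [herase]
          have hbf : b ∉ A.filter (fun x => t ≤ x) := fun h => hbBA.2 (Finset.mem_of_mem_filter b h)
          rw [Finset.card_insert_of_notMem hbf]
          have key : (A.filter (fun x => t ≤ x)).card + 1 ≤ (B.filter (fun x => t ≤ x)).card := by
            set C := (A ∩ B).filter (fun x => t ≤ x) with hC
            have h1 : C ∪ (B \ A) ⊆ B.filter (fun x => t ≤ x) := by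
              intro x hx
              rw [Finset.mem_union] at hx
              rcases hx with hx | hx
              · rw [hC, Finset.mem_filter] at hx
                exact Finset.mem_filter.mpr ⟨(Finset.mem_inter.mp hx.1).2, hx.2⟩
              · exact Finset.mem_filter.mpr ⟨(Finset.mem_sdiff.mp hx).1,
                  htb.trans (Finset.min'_le _ x hx)⟩
            have hdisj : Disjoint C (B \ A) := by
              rw [Finset.disjoint_left]
              intro x hxC hxBA
              exact (Finset.mem_sdiff.mp hxBA).2
                (Finset.mem_inter.mp (Finset.mem_filter.mp hxC).1).1
            have h1c : C.card + (B \ A).card ≤ (B.filter (fun x => t ≤ x)).card := by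
              rw [← Finset.card_union_of_disjoint hdisj]
              exact Finset.card_le_card h1
            have h2 : A.filter (fun x => t ≤ x) ⊆ C ∪ ((A \ B).erase a) := by
              intro x hx
              rw [Finset.mem_filter] at hx
              by_cases hxB : x ∈ B
              · exact Finset.mem_union_left _
                  (Finset.mem_filter.mpr ⟨Finset.mem_inter.mpr ⟨hx.1, hxB⟩, hx.2⟩)
              · refine Finset.mem_union_right _ (Finset.mem_erase.mpr ⟨?_,
                  Finset.mem_sdiff.mpr ⟨hx.1, hxB⟩⟩)
                rintro rfl
                exact hta hx.2
            have h2c : (A.filter (fun x => t ≤ x)).card ≤ C.card + ((A \ B).card - 1) := by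
              calc (A.filter (fun x => t ≤ x)).card ≤ (C ∪ ((A \ B).erase a)).card :=
                  Finset.card_le_card h2
                _ ≤ C.card + ((A \ B).erase a).card := Finset.card_union_le _ _
                _ = C.card + ((A \ B).card - 1) := by
                    rw [Finset.card_erase_of_mem (Finset.mem_sdiff.mpr ha)]
            have hsd : (A \ B).card = (B \ A).card := Finset.card_sdiff_comm hABc
            have hpos : 1 ≤ (A \ B).card := Finset.card_pos.mpr ⟨a, Finset.mem_sdiff.mpr ha⟩
            omega
          exact key.trans (hBf t)
      · rw [if_neg htb]
        exact le_trans (Finset.card_le_card (Finset.erase_subset _ _)) (hAf t)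
end

section
/- Let f : 2^{[n]} → ℝ be submodular with f(∅) = 0. Then every vertex of the base polytope B_f is of the form x(w) for some permutation w of [n], where x(w)_{w_k} = f({w_1,...,w_k}) − f({w_1,...,w_{k−1}}); conversely every such point x(w) is a vertex of B_f. -/
/-- The greedy vector `x(w)`: `x_{w_k} = f({w_1,…,w_k}) − f({w_1,…,w_{k−1}})`. -/
noncomputable def greedyVec {n : ℕ} (f : Finset (Fin n) → ℝ) (w : Equiv.Perm (Fin n)) :
    Fin n → ℝ :=
  fun i => f ((Finset.Iic (w.symm i)).image w) - f ((Finset.Iio (w.symm i)).image w)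

/-- The base polytope of a set function `f` on subsets of `[n]`. -/
def basePolytope {n : ℕ} (f : Finset (Fin n) → ℝ) : Set (Fin n → ℝ) :=
  {x | (∑ i, x i) = f Finset.univ ∧
    ∀ S : Finset (Fin n), S ⊂ Finset.univ → ∑ i ∈ S, x i ≤ f S}

namespace EdmondsAux

variable {n : ℕ}

/-- The first `k` elements in order `w`. -/
def pre (w : Equiv.Perm (Fin n)) (k : ℕ) : Finset (Fin n) :=
  (Finset.univ.filter (fun j : Fin n => (j : ℕ) < k)).image w

lemma filt_succ {k : ℕ} (hk : k < n) :
    (Finset.univ.filter (fun j : Fin n => (j : ℕ) < k + 1)) =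
      insert ⟨k, hk⟩ (Finset.univ.filter (fun j : Fin n => (j : ℕ) < k)) := by
  ext j
  simp only [Finset.mem_filter, Finset.mem_univ, true_and, Finset.mem_insert, Fin.ext_iff]
  omega

lemma filt_card : ∀ {k : ℕ}, k ≤ n →
    (Finset.univ.filter (fun j : Fin n => (j : ℕ) < k)).card = k := by
  intro k
  induction k with
  | zero => intro _; simp
  | succ k ih =>
    intro hk
    rw [filt_succ (by omega), Finset.card_insert_of_notMem (by simp), ih (by omega)]

lemma filt_n : (Finset.univ.filter (fun j : Fin n => (j : ℕ) < n)) = Finset.univ := by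
  apply Finset.filter_true_of_mem
  intro j _; exact j.isLt

lemma mem_pre_iff {w : Equiv.Perm (Fin n)} {k : ℕ} {i : Fin n} :
    i ∈ pre w k ↔ (w.symm i : ℕ) < k := by
  simp only [pre, Finset.mem_image, Finset.mem_filter, Finset.mem_univ, true_and]
  constructor
  · rintro ⟨j, hj, rfl⟩; simpa using hj
  · intro h; exact ⟨w.symm i, h, by simp⟩

lemma pre_zero (w : Equiv.Perm (Fin n)) : pre w 0 = ∅ := by
  ext i; simp [mem_pre_iff]

lemma pre_n (w : Equiv.Perm (Fin n)) : pre w n = Finset.univ := by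
  apply Finset.eq_univ_iff_forall.mpr
  intro i; exact mem_pre_iff.mpr (w.symm i).isLt

lemma pre_card (w : Equiv.Perm (Fin n)) {k : ℕ} (hk : k ≤ n) : (pre w k).card = k := by
  rw [pre, Finset.card_image_of_injective _ w.injective, filt_card hk]

lemma pre_succ' (w : Equiv.Perm (Fin n)) (j : Fin n) :
    pre w ((j : ℕ) + 1) = insert (w j) (pre w (j : ℕ)) := by
  rw [pre, filt_succ j.isLt, Finset.image_insert, Fin.eta]; rfl

lemma not_mem_pre_self (w : Equiv.Perm (Fin n)) (j : Fin n) : w j ∉ pre w (j : ℕ) := by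
  simp [mem_pre_iff]

lemma image_Iic (w : Equiv.Perm (Fin n)) (j : Fin n) :
    (Finset.Iic j).image w = pre w ((j : ℕ) + 1) := by
  unfold pre; congr 1; ext j'
  simp only [Finset.mem_Iic, Finset.mem_filter, Finset.mem_univ, true_and, Fin.le_def,
    Nat.lt_succ_iff]

lemma image_Iio (w : Equiv.Perm (Fin n)) (j : Fin n) :
    (Finset.Iio j).image w = pre w (j : ℕ) := by
  unfold pre; congr 1; ext j'
  simp only [Finset.mem_Iio, Finset.mem_filter, Finset.mem_univ, true_and, Fin.lt_def]

lemma tele (F : ℕ → ℝ) : ∀ {k : ℕ}, k ≤ n →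
    ∑ j ∈ Finset.univ.filter (fun j : Fin n => (j : ℕ) < k),
      (F ((j : ℕ) + 1) - F (j : ℕ)) = F k - F 0 := by
  intro k
  induction k with
  | zero => intro _; simp
  | succ k ih =>
    intro hk
    rw [filt_succ (by omega), Finset.sum_insert (by simp), ih (by omega)]
    ring

variable {f : Finset (Fin n) → ℝ} {w : Equiv.Perm (Fin n)}

lemma greedy_apply (f : Finset (Fin n) → ℝ) (w : Equiv.Perm (Fin n)) (j : Fin n) :
    greedyVec f w (w j) = f (pre w ((j : ℕ) + 1)) - f (pre w (j : ℕ)) := by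
  simp [greedyVec, image_Iic, image_Iio]

lemma greedy_sum_pre (f : Finset (Fin n) → ℝ) (w : Equiv.Perm (Fin n)) {k : ℕ} (hk : k ≤ n) :
    ∑ i ∈ pre w k, greedyVec f w i = f (pre w k) - f ∅ := by
  have ht := tele (fun m => f (pre w m)) hk
  simp only [pre_zero] at ht
  calc ∑ i ∈ pre w k, greedyVec f w i
      = ∑ j ∈ Finset.univ.filter (fun j : Fin n => (j : ℕ) < k), greedyVec f w (w j) := by
        rw [pre]; exact Finset.sum_image (fun a _ b _ h => w.injective h)
    _ = f (pre w k) - f ∅ := by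
        rw [← ht]; exact Finset.sum_congr rfl fun j _ => greedy_apply f w j

lemma greedy_sum_le (hsub : ∀ S T : Finset (Fin n), f (S ∪ T) + f (S ∩ T) ≤ f S + f T)
    (S : Finset (Fin n)) :
    ∑ i ∈ S, greedyVec f w i ≤ f S - f ∅ := by
  classical
  set G : ℕ → ℝ := fun m => f (S ∩ pre w m) with hG
  have hSim : S = (Finset.univ.filter fun j : Fin n => w j ∈ S).image w := by
    ext i
    simp only [Finset.mem_image, Finset.mem_filter, Finset.mem_univ, true_and]
    constructor
    · intro hi; exact ⟨w.symm i, by simpa using hi, by simp⟩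
    · rintro ⟨j, hj, rfl⟩; exact hj
  have h1 : ∑ i ∈ S, greedyVec f w i
      = ∑ j ∈ Finset.univ.filter (fun j : Fin n => w j ∈ S), greedyVec f w (w j) := by
    conv_lhs => rw [hSim]
    exact Finset.sum_image (fun a _ b _ h => w.injective h)
  have hbound : ∀ j : Fin n, w j ∈ S →
      greedyVec f w (w j) ≤ G ((j : ℕ) + 1) - G (j : ℕ) := by
    intro j hj
    rw [greedy_apply]
    have hu : pre w (j : ℕ) ∪ (S ∩ pre w ((j : ℕ) + 1)) = pre w ((j : ℕ) + 1) := by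
      rw [pre_succ']
      ext t
      simp only [Finset.mem_union, Finset.mem_inter, Finset.mem_insert]
      constructor
      · rintro (h | ⟨_, h⟩) <;> [exact Or.inr h; exact h]
      · rintro (rfl | h)
        · exact Or.inr ⟨hj, Or.inl rfl⟩
        · exact Or.inl h
    have hi : pre w (j : ℕ) ∩ (S ∩ pre w ((j : ℕ) + 1)) = S ∩ pre w (j : ℕ) := by
      rw [pre_succ']
      ext t
      simp only [Finset.mem_inter, Finset.mem_insert]
      constructor
      · rintro ⟨h1, h2, _⟩; exact ⟨h2, h1⟩
      · rintro ⟨h1, h2⟩; exact ⟨h2, h1, Or.inr h2⟩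
    have := hsub (pre w (j : ℕ)) (S ∩ pre w ((j : ℕ) + 1))
    rw [hu, hi] at this
    simp only [hG]
    linarith
  have hzero : ∀ j : Fin n, w j ∉ S → G ((j : ℕ) + 1) - G (j : ℕ) = 0 := by
    intro j hj
    have : S ∩ pre w ((j : ℕ) + 1) = S ∩ pre w (j : ℕ) := by
      rw [pre_succ']
      ext t
      simp only [Finset.mem_inter, Finset.mem_insert]
      constructor
      · rintro ⟨h1, rfl | h2⟩
        · exact absurd h1 hj
        · exact ⟨h1, h2⟩
      · rintro ⟨h1, h2⟩; exact ⟨h1, Or.inr h2⟩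
    simp only [hG, this, sub_self]
  have h2 : ∑ j ∈ Finset.univ.filter (fun j : Fin n => w j ∈ S),
      (G ((j : ℕ) + 1) - G (j : ℕ)) ≤ f S - f ∅ := by
    have htot : ∑ j : Fin n, (G ((j : ℕ) + 1) - G (j : ℕ)) = f S - f ∅ := by
      have := tele (n := n) G le_rfl
      rw [filt_n] at this
      rw [this]
      simp only [hG, pre_n, pre_zero, Finset.inter_univ, Finset.inter_empty]
    rw [← htot, ← Finset.sum_filter_add_sum_filter_not Finset.univ
      (fun j : Fin n => w j ∈ S) (fun j : Fin n => G ((j : ℕ) + 1) - G (j : ℕ))]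
    have : ∑ j ∈ Finset.univ.filter (fun j : Fin n => ¬ w j ∈ S),
        (G ((j : ℕ) + 1) - G (j : ℕ)) = 0 := by
      apply Finset.sum_eq_zero
      intro j hj
      exact hzero j (Finset.mem_filter.mp hj).2
    rw [this, add_zero]
  calc ∑ i ∈ S, greedyVec f w i
      = ∑ j ∈ Finset.univ.filter (fun j : Fin n => w j ∈ S), greedyVec f w (w j) := h1
    _ ≤ ∑ j ∈ Finset.univ.filter (fun j : Fin n => w j ∈ S),
        (G ((j : ℕ) + 1) - G (j : ℕ)) :=
        Finset.sum_le_sum fun j hj => hbound j (Finset.mem_filter.mp hj).2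
    _ ≤ f S - f ∅ := h2

lemma greedy_mem (hsub : ∀ S T : Finset (Fin n), f (S ∪ T) + f (S ∩ T) ≤ f S + f T)
    (h0 : f ∅ = 0) (w : Equiv.Perm (Fin n)) : greedyVec f w ∈ basePolytope f := by
  constructor
  · have := greedy_sum_pre f w (le_refl n)
    rw [pre_n, h0] at this
    simpa using this
  · intro S _
    have := greedy_sum_le (w := w) hsub S
    rw [h0] at this
    linarith

lemma seg_eq {a b u v c : ℝ} (ha : 0 < a) (hb : 0 < b) (hab : a + b = 1)
    (hu : u ≤ c) (hv : v ≤ c) (h : a * u + b * v = c) : u = c ∧ v = c := by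
  have hc : a * c + b * c = c := by rw [← add_mul, hab, one_mul]
  constructor
  · refine le_antisymm hu (le_of_mul_le_mul_left ?_ ha)
    linarith [mul_le_mul_of_nonneg_left hv hb.le]
  · refine le_antisymm hv (le_of_mul_le_mul_left ?_ hb)
    linarith [mul_le_mul_of_nonneg_left hu ha.le]

lemma pre_ssubset (w : Equiv.Perm (Fin n)) {k : ℕ} (hk : k < n) : pre w k ⊂ Finset.univ := by
  rw [Finset.ssubset_univ_iff]
  intro h
  have := pre_card w (le_of_lt hk)
  rw [h, Finset.card_univ, Fintype.card_fin] at this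
  omega

lemma greedy_extreme (hsub : ∀ S T : Finset (Fin n), f (S ∪ T) + f (S ∩ T) ≤ f S + f T)
    (h0 : f ∅ = 0) (w : Equiv.Perm (Fin n)) :
    greedyVec f w ∈ Set.extremePoints ℝ (basePolytope f) := by
  refine ⟨greedy_mem hsub h0 w, ?_⟩
  intro y hy z hz hseg
  obtain ⟨a, b, ha, hb, hab, hxy⟩ := hseg
  have hpt : ∀ i, a * y i + b * z i = greedyVec f w i := by
    intro i
    have := congrFun hxy i
    simpa using this
  have key : ∀ k : ℕ, k ≤ n →
      (∑ i ∈ pre w k, y i = f (pre w k) - f ∅) ∧ (∑ i ∈ pre w k, z i = f (pre w k) - f ∅) := by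
    intro k hk
    have hx : ∑ i ∈ pre w k, greedyVec f w i = f (pre w k) - f ∅ := greedy_sum_pre f w hk
    have hcomb : a * (∑ i ∈ pre w k, y i) + b * (∑ i ∈ pre w k, z i) = f (pre w k) - f ∅ := by
      rw [← hx, Finset.mul_sum, Finset.mul_sum, ← Finset.sum_add_distrib]
      exact Finset.sum_congr rfl fun i _ => hpt i
    have hyle : ∑ i ∈ pre w k, y i ≤ f (pre w k) - f ∅ := by
      rcases lt_or_eq_of_le hk with hlt | rfl
      · have := hy.2 _ (pre_ssubset w hlt); rw [h0]; linarith
      · exact le_of_eq (by rw [pre_n, h0, sub_zero, ← hy.1])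
    have hzle : ∑ i ∈ pre w k, z i ≤ f (pre w k) - f ∅ := by
      rcases lt_or_eq_of_le hk with hlt | rfl
      · have := hz.2 _ (pre_ssubset w hlt); rw [h0]; linarith
      · exact le_of_eq (by rw [pre_n, h0, sub_zero, ← hz.1])
    exact seg_eq ha hb hab hyle hzle hcomb
  have coord : ∀ (u : Fin n → ℝ),
      (∀ k : ℕ, k ≤ n → ∑ i ∈ pre w k, u i = f (pre w k) - f ∅) → u = greedyVec f w := by
    intro u hu
    funext i
    have hij : w (w.symm i) = i := w.apply_symm_apply i
    set j := w.symm i with hj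
    have h1 : ∑ i ∈ pre w ((j : ℕ) + 1), u i = f (pre w ((j : ℕ) + 1)) - f ∅ := hu _ j.isLt
    have h2 : ∑ i ∈ pre w (j : ℕ), u i = f (pre w (j : ℕ)) - f ∅ := hu _ (le_of_lt j.isLt)
    rw [pre_succ', Finset.sum_insert (not_mem_pre_self w j)] at h1
    have : u (w j) = f (pre w ((j : ℕ) + 1)) - f (pre w (j : ℕ)) := by
      rw [pre_succ' w j]; linarith
    rw [hij] at this
    rw [this, ← greedy_apply f w j, hij]
  exact coord y fun k hk => (key k hk).1

end EdmondsAux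

open EdmondsAux

/-- (Edmonds) For a submodular `f` with `f(∅) = 0`, the vertices (extreme points)
of the base polytope `B_f` are exactly the greedy vectors `x(w)` for
permutations `w` of `[n]`. -/
theorem basePolytope_extremePoints (n : ℕ) (f : Finset (Fin n) → ℝ)
    (hsub : ∀ S T : Finset (Fin n), f (S ∪ T) + f (S ∩ T) ≤ f S + f T)
    (h0 : f ∅ = 0) :
    Set.extremePoints ℝ (basePolytope f) =
      {x | ∃ w : Equiv.Perm (Fin n), x = greedyVec f w} := by
  classical
  ext x
  simp only [Set.mem_setOf_eq]
  constructor
  · rintro ⟨hxB, hxext⟩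
    obtain ⟨hx1, hx2⟩ := hxB
    have hle : ∀ S : Finset (Fin n), ∑ t ∈ S, x t ≤ f S := by
      intro S
      rcases eq_or_ne S Finset.univ with rfl | hne
      · exact le_of_eq hx1
      · exact hx2 S (Finset.ssubset_univ_iff.mpr hne)
    have t_empty : ∑ t ∈ (∅ : Finset (Fin n)), x t = f ∅ := by simp [h0]
    have t_univ : ∑ t ∈ (Finset.univ : Finset (Fin n)), x t = f Finset.univ := hx1
    have t_closed : ∀ S T : Finset (Fin n),
        (∑ t ∈ S, x t = f S) → (∑ t ∈ T, x t = f T) →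
        (∑ t ∈ S ∪ T, x t = f (S ∪ T)) ∧ (∑ t ∈ S ∩ T, x t = f (S ∩ T)) := by
      intro S T hS hT
      have h1 := hle (S ∪ T)
      have h2 := hle (S ∩ T)
      have h3 := hsub S T
      have h4 : ∑ t ∈ S ∪ T, x t + ∑ t ∈ S ∩ T, x t = ∑ t ∈ S, x t + ∑ t ∈ T, x t :=
        Finset.sum_union_inter
      constructor <;> linarith
    -- Step 1: separation
    have hsep : ∀ i j : Fin n, i ≠ j → ∃ S : Finset (Fin n),
        (∑ t ∈ S, x t = f S) ∧ ¬ (i ∈ S ↔ j ∈ S) := by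
      intro i j hij
      by_contra hcon
      push_neg at hcon
      set d : Fin n → ℝ := fun t => (if t = i then (1 : ℝ) else 0) - (if t = j then 1 else 0)
        with hd
      have hdsum : ∀ S : Finset (Fin n),
          ∑ t ∈ S, d t = (if i ∈ S then (1 : ℝ) else 0) - (if j ∈ S then 1 else 0) := by
        intro S
        simp [hd, Finset.sum_sub_distrib]
      have hdtight : ∀ S : Finset (Fin n), (∑ t ∈ S, x t = f S) → ∑ t ∈ S, d t = 0 := by
        intro S hS
        rw [hdsum]
        by_cases hiS : i ∈ S
        · rw [if_pos hiS, if_pos ((hcon S hS).mp hiS), sub_self]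
        · rw [if_neg hiS, if_neg (fun hjS => hiS ((hcon S hS).mpr hjS)), sub_self]
      set N : Finset (Finset (Fin n)) :=
          Finset.univ.filter (fun S => S ⊂ Finset.univ ∧ ∑ t ∈ S, x t < f S) with hN
      have hiN : ({i} : Finset (Fin n)) ∈ N := by
        refine Finset.mem_filter.mpr ⟨Finset.mem_univ _, ?_, ?_⟩
        · rw [Finset.ssubset_univ_iff]
          intro h
          have hj : j ∈ ({i} : Finset (Fin n)) := h ▸ Finset.mem_univ j
          exact hij (Finset.mem_singleton.mp hj).symm
        · rcases lt_or_eq_of_le (hle {i}) with h | h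
          · exact h
          · exfalso
            have hiff := hcon {i} h
            have hj : j ∈ ({i} : Finset (Fin n)) := hiff.mp (Finset.mem_singleton_self i)
            exact hij (Finset.mem_singleton.mp hj).symm
      have hNne : N.Nonempty := ⟨{i}, hiN⟩
      have hNine : (N.image (fun S => f S - ∑ t ∈ S, x t)).Nonempty := hNne.image _
      set ε : ℝ := (N.image (fun S => f S - ∑ t ∈ S, x t)).min' hNine with hε
      have hεpos : 0 < ε := by
        obtain ⟨S, hS, hSe⟩ := Finset.mem_image.mp (Finset.min'_mem _ hNine)
        have hlt := (Finset.mem_filter.mp hS).2.2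
        rw [hε, ← hSe]
        linarith
      have hεle : ∀ S ∈ N, ε ≤ f S - ∑ t ∈ S, x t := by
        intro S hS
        exact Finset.min'_le _ _ (Finset.mem_image_of_mem _ hS)
      have hmem : ∀ s : ℝ, |s| ≤ ε → (fun t => x t + s * d t) ∈ basePolytope f := by
        intro s hs
        constructor
        · have hsplit : ∑ t, (x t + s * d t) = ∑ t, x t + s * ∑ t, d t := by
            rw [Finset.sum_add_distrib, Finset.mul_sum]
          rw [hsplit, hdtight Finset.univ t_univ, mul_zero, add_zero]
          exact hx1
        · intro S hSs
          have hsplit : ∑ t ∈ S, (x t + s * d t) = ∑ t ∈ S, x t + s * ∑ t ∈ S, d t := by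
            rw [Finset.sum_add_distrib, Finset.mul_sum]
          by_cases ht : ∑ t ∈ S, x t = f S
          · rw [hsplit, hdtight S ht, mul_zero, add_zero, ht]
          · have hSN : S ∈ N :=
              Finset.mem_filter.mpr ⟨Finset.mem_univ _, hSs, lt_of_le_of_ne (hle S) ht⟩
            have h1 := hεle S hSN
            have h2 : |∑ t ∈ S, d t| ≤ 1 := by
              rw [hdsum]
              by_cases hiS : i ∈ S <;> by_cases hjS : j ∈ S <;> simp [hiS, hjS]
            have h3 : s * (∑ t ∈ S, d t) ≤ ε := by
              calc s * (∑ t ∈ S, d t) ≤ |s * (∑ t ∈ S, d t)| := le_abs_self _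
                _ = |s| * |∑ t ∈ S, d t| := abs_mul _ _
                _ ≤ ε * 1 := mul_le_mul hs h2 (abs_nonneg _) (le_trans (abs_nonneg s) hs)
                _ = ε := mul_one ε
            rw [hsplit]
            linarith
      have hy := hmem ε (le_of_eq (abs_of_pos hεpos))
      have hz := hmem (-ε) (le_of_eq (by rw [abs_neg, abs_of_pos hεpos]))
      have hseg : x ∈ openSegment ℝ (fun t => x t + ε * d t) (fun t => x t + (-ε) * d t) := by
        refine ⟨1/2, 1/2, by norm_num, by norm_num, by norm_num, ?_⟩
        funext t
        simp only [Pi.add_apply, Pi.smul_apply, smul_eq_mul]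
        ring
      have heq := hxext hy hz hseg
      have hi := congrFun heq i
      simp only [hd, if_pos rfl, if_neg (fun h : i = j => hij h), if_true, sub_zero,
        mul_one] at hi
      have : ε = 0 := by linarith
      exact absurd this (ne_of_gt hεpos)
    -- Step 2: augmenting a tight set
    have step2 : ∀ T : Finset (Fin n), (∑ t ∈ T, x t = f T) → T ≠ Finset.univ →
        ∃ T', (∑ t ∈ T', x t = f T') ∧ T ⊆ T' ∧ T'.card = T.card + 1 := by
      intro T hT hTne
      set M : Finset (Finset (Fin n)) :=
        Finset.univ.filter (fun S => (∑ t ∈ S, x t = f S) ∧ T ⊂ S) with hM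
      have hMne : M.Nonempty :=
        ⟨Finset.univ, Finset.mem_filter.mpr
          ⟨Finset.mem_univ _, t_univ, Finset.ssubset_univ_iff.mpr hTne⟩⟩
      obtain ⟨S₀, hS₀M, hS₀min⟩ := Finset.exists_min_image M Finset.card hMne
      obtain ⟨hS₀t, hTS₀⟩ := (Finset.mem_filter.mp hS₀M).2
      refine ⟨S₀, hS₀t, hTS₀.subset, ?_⟩
      by_contra hcard
      have hlt : T.card < S₀.card := Finset.card_lt_card hTS₀
      have hsd : 1 < (S₀ \ T).card := by
        rw [Finset.card_sdiff_of_subset hTS₀.subset]; omega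
      obtain ⟨i, hi, j, hj, hij⟩ := Finset.one_lt_card.mp hsd
      obtain ⟨S, hSt, hS⟩ := hsep i j hij
      have key : ∀ p q : Fin n, p ∈ S₀ \ T → q ∈ S₀ \ T → p ∈ S → q ∉ S → False := by
        intro p q hp hq hpS hqS
        obtain ⟨hpS₀, hpT⟩ := Finset.mem_sdiff.mp hp
        obtain ⟨hqS₀, hqT⟩ := Finset.mem_sdiff.mp hq
        have hUt := (t_closed S T hSt hT).1
        have hT't := (t_closed S₀ (S ∪ T) hS₀t hUt).2
        have hsub0 : T ⊆ S₀ ∩ (S ∪ T) := fun t ht =>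
          Finset.mem_inter.mpr ⟨hTS₀.subset ht, Finset.mem_union_right _ ht⟩
        have hsub1 : T ⊂ S₀ ∩ (S ∪ T) :=
          (Finset.ssubset_iff_of_subset hsub0).mpr
            ⟨p, Finset.mem_inter.mpr ⟨hpS₀, Finset.mem_union_left _ hpS⟩, hpT⟩
        have hsub2 : S₀ ∩ (S ∪ T) ⊂ S₀ :=
          (Finset.ssubset_iff_of_subset (Finset.inter_subset_left)).mpr
            ⟨q, hqS₀, fun hmem => by
              rcases Finset.mem_union.mp (Finset.mem_inter.mp hmem).2 with h | h
              · exact hqS h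
              · exact hqT h⟩
        have hmemM : S₀ ∩ (S ∪ T) ∈ M :=
          Finset.mem_filter.mpr ⟨Finset.mem_univ _, hT't, hsub1⟩
        exact absurd (Finset.card_lt_card hsub2) (not_lt.mpr (hS₀min _ hmemM))
      have hcases : (i ∈ S ∧ j ∉ S) ∨ (j ∈ S ∧ i ∉ S) := by tauto
      rcases hcases with ⟨h1, h2⟩ | ⟨h1, h2⟩
      · exact key i j hi hj h1 h2
      · exact key j i hj hi h1 h2
    -- Step 3: build a full chain of tight sets
    have chain : ∃ c : ℕ → Finset (Fin n), c 0 = ∅ ∧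
        (∀ m ≤ n, (∑ t ∈ c m, x t = f (c m)) ∧ (c m).card = m) ∧
        (∀ m < n, c m ⊆ c (m + 1)) := by
      have main : ∀ k, k ≤ n → ∃ c : ℕ → Finset (Fin n), c 0 = ∅ ∧
          (∀ m ≤ k, (∑ t ∈ c m, x t = f (c m)) ∧ (c m).card = m) ∧
          (∀ m < k, c m ⊆ c (m + 1)) := by
        intro k
        induction k with
        | zero =>
          intro _
          refine ⟨fun _ => ∅, rfl, ?_, by omega⟩
          intro m hm
          have : m = 0 := Nat.le_zero.mp hm
          subst this
          exact ⟨t_empty, Finset.card_empty⟩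
        | succ k ih =>
          intro hk
          obtain ⟨c, hc0, hcm, hmono⟩ := ih (by omega)
          have hck := hcm k (le_refl k)
          have hne : c k ≠ Finset.univ := by
            intro h
            have := hck.2
            rw [h, Finset.card_univ, Fintype.card_fin] at this
            omega
          obtain ⟨T', hT't, hT'sub, hT'card⟩ := step2 (c k) hck.1 hne
          refine ⟨fun m => if m ≤ k then c m else T', by simp [hc0], ?_, ?_⟩
          · intro m hm
            by_cases hmk : m ≤ k
            · simpa [hmk] using hcm m hmk
            · have hm1 : m = k + 1 := by omega
              subst hm1
              simp only [if_neg hmk]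
              exact ⟨hT't, by rw [hT'card, hck.2]⟩
          · intro m hm
            show (if m ≤ k then c m else T') ⊆ (if m + 1 ≤ k then c (m + 1) else T')
            by_cases hmk : m < k
            · rw [if_pos (by omega : m ≤ k), if_pos (by omega : m + 1 ≤ k)]
              exact hmono m hmk
            · have hm1 : m = k := by omega
              subst hm1
              rw [if_pos (le_refl m), if_neg (by omega)]
              exact hT'sub
      exact main n (le_refl n)
    obtain ⟨c, hc0, hcm, hmono⟩ := chain
    have hmono' : ∀ a b : ℕ, a ≤ b → b ≤ n → c a ⊆ c b := by
      intro a b hab hbn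
      induction b with
      | zero =>
        have : a = 0 := by omega
        subst this
        exact Finset.Subset.refl _
      | succ b ih =>
        rcases Nat.lt_or_ge a (b + 1) with h | h
        · exact (ih (by omega) (by omega)).trans (hmono b (by omega))
        · have : a = b + 1 := by omega
          subst this
          exact Finset.Subset.refl _
    have hsd1 : ∀ j : Fin n, (c ((j : ℕ) + 1) \ c (j : ℕ)).card = 1 := by
      intro j
      have h1 := (hcm ((j : ℕ) + 1) j.isLt).2
      have h2 := (hcm (j : ℕ) (le_of_lt j.isLt)).2
      rw [Finset.card_sdiff_of_subset (hmono (j : ℕ) j.isLt), h1, h2]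
      omega
    have hone : ∀ j : Fin n, ∃ a, c ((j : ℕ) + 1) \ c (j : ℕ) = {a} :=
      fun j => Finset.card_eq_one.mp (hsd1 j)
    choose φ hφ using hone
    have hφmem : ∀ j : Fin n, φ j ∈ c ((j : ℕ) + 1) ∧ φ j ∉ c (j : ℕ) := by
      intro j
      have h : φ j ∈ c ((j : ℕ) + 1) \ c (j : ℕ) := by
        rw [hφ j]; exact Finset.mem_singleton_self _
      exact Finset.mem_sdiff.mp h
    have hφinj : Function.Injective φ := by
      have key : ∀ a b : Fin n, a < b → φ a ≠ φ b := by
        intro a b hab h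
        have h1 : φ a ∈ c (b : ℕ) :=
          hmono' ((a : ℕ) + 1) (b : ℕ) (Fin.lt_def.mp hab) (le_of_lt b.isLt) (hφmem a).1
        rw [h] at h1
        exact (hφmem b).2 h1
      intro a b hab
      rcases lt_trichotomy a b with h | h | h
      · exact absurd hab (key a b h)
      · exact h
      · exact absurd hab.symm (key b a h)
    set w : Equiv.Perm (Fin n) :=
      Equiv.ofBijective φ (Finite.injective_iff_bijective.mp hφinj) with hw
    have hwφ : ∀ j, w j = φ j := fun j => rfl
    have hcpre : ∀ k, k ≤ n → c k = pre w k := by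
      intro k
      induction k with
      | zero => intro _; rw [hc0, pre_zero]
      | succ k ih =>
        intro hk
        have hkn : k < n := by omega
        have hins : c (k + 1) = insert (φ ⟨k, hkn⟩) (c k) := by
          have hst := hφ ⟨k, hkn⟩
          rw [show ((⟨k, hkn⟩ : Fin n) : ℕ) = k from rfl] at hst
          rw [← Finset.sdiff_union_of_subset (hmono k hkn), hst, ← Finset.insert_eq]
        have hps := pre_succ' w ⟨k, hkn⟩
        rw [show ((⟨k, hkn⟩ : Fin n) : ℕ) = k from rfl] at hps
        rw [hins, ih (by omega), hps, hwφ]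
    refine ⟨w, ?_⟩
    funext i
    have hij : w (w.symm i) = i := w.apply_symm_apply i
    set j := w.symm i with hj
    have h1 := (hcm ((j : ℕ) + 1) j.isLt).1
    have h2 := (hcm (j : ℕ) (le_of_lt j.isLt)).1
    rw [hcpre _ j.isLt] at h1
    rw [hcpre _ (le_of_lt j.isLt)] at h2
    have hg : greedyVec f w i = f (pre w ((j : ℕ) + 1)) - f (pre w (j : ℕ)) := by
      rw [← hij, greedy_apply]
    rw [hg, ← h1, ← h2, pre_succ', Finset.sum_insert (not_mem_pre_self w j), hij]
    ring
  · rintro ⟨w, rfl⟩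
    exact greedy_extreme hsub h0 w
end

section
/- Let α be a composition of length n and w(α) the minimal-length permutation with λ(α)·w(α) = α, where λ(α) is the decreasing rearrangement of α and (v·w)_i = v_{w(i)}. Then for any permutation σ ≤ w(α) in Bruhat order, the composition β = λ(α)·σ satisfies w(β) ≤ w(α) in Bruhat order. -/
/-- The Coxeter length of a permutation of `Fin n`, i.e. its inversion number. -/
def permLength {n : ℕ} (w : Equiv.Perm (Fin n)) : ℕ :=
  ((Finset.univ : Finset (Fin n × Fin n)).filter
    (fun p => p.1 < p.2 ∧ w p.2 < w p.1)).card

/-- The Bruhat order on `S_n`: the reflexive-transitive closure of the covering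
relation `u ⋖ u·t_{ij}` with the length increasing by exactly one. -/
def BruhatLE {n : ℕ} (u w : Equiv.Perm (Fin n)) : Prop :=
  Relation.ReflTransGen
    (fun a b => (∃ i j : Fin n, i ≠ j ∧ b = a * Equiv.swap i j) ∧
      permLength b = permLength a + 1) u w

namespace BruhatAux
variable {n : ℕ}
def pairMap (i j : Fin n) (x : Fin n × Fin n) : Fin n × Fin n :=
  if (i < x.1 ∧ x.1 < j) ∨ (i < x.2 ∧ x.2 < j) then x
  else (Equiv.swap i j x.1, Equiv.swap i j x.2)

lemma swap_cases (i j x : Fin n) :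
    (x = i ∧ Equiv.swap i j x = j) ∨ (x = j ∧ Equiv.swap i j x = i) ∨
      (x ≠ i ∧ x ≠ j ∧ Equiv.swap i j x = x) := by
  rcases eq_or_ne x i with h | h
  · exact Or.inl ⟨h, by simp [h]⟩
  rcases eq_or_ne x j with h2 | h2
  · exact Or.inr (Or.inl ⟨h2, by simp [h2]⟩)
  · exact Or.inr (Or.inr ⟨h, h2, Equiv.swap_apply_of_ne_of_ne h h2⟩)

lemma pairMap_involutive (i j : Fin n) (x : Fin n × Fin n) :
    pairMap i j (pairMap i j x) = x := by
  obtain ⟨p, q⟩ := x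
  unfold pairMap
  by_cases hM : (i < p ∧ p < j) ∨ (i < q ∧ q < j)
  · simp [hM]
  · simp only [hM, if_false]
    have h1 : ¬ ((i < Equiv.swap i j p ∧ Equiv.swap i j p < j) ∨
        (i < Equiv.swap i j q ∧ Equiv.swap i j q < j)) := by
      push_neg at hM ⊢
      rcases swap_cases i j p with ⟨h, e⟩ | ⟨h, e⟩ | ⟨h, h', e⟩ <;>
        rcases swap_cases i j q with ⟨h2, e2⟩ | ⟨h2, e2⟩ | ⟨h2, h2', e2⟩ <;>
        rw [e, e2] <;>
        constructor <;> intro hlt <;> simp_all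
    simp [h1]

lemma pairMap_sorted (i j : Fin n) (hij : i < j) (p q : Fin n) (hpq : p < q)
    (hne : (p, q) ≠ (i, j)) :
    (pairMap i j (p, q)).1 < (pairMap i j (p, q)).2 ∧ pairMap i j (p, q) ≠ (i, j) := by
  unfold pairMap
  by_cases hM : (i < p ∧ p < j) ∨ (i < q ∧ q < j)
  · simp only [hM, if_true]
    exact ⟨hpq, hne⟩
  · simp only [hM, if_false]
    push_neg at hM
    obtain ⟨hM1, hM2⟩ := hM
    rcases eq_or_ne p i with hpi | hpi
    · rcases eq_or_ne q j with hqj | hqj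
      · exact absurd (by rw [hpi, hqj]) hne
      · have hiq : i < q := hpi ▸ hpq
        have hqi : q ≠ i := ne_of_gt hiq
        rw [hpi, Equiv.swap_apply_left, Equiv.swap_apply_of_ne_of_ne hqi hqj]
        have hjq : j < q := (hM2 hiq).lt_of_ne (Ne.symm hqj)
        exact ⟨hjq, by simp [Prod.ext_iff, hij.ne']⟩
    rcases eq_or_ne p j with hpj | hpj
    · have hjq : j < q := hpj ▸ hpq
      have hqj : q ≠ j := ne_of_gt hjq
      have hqi : q ≠ i := ne_of_gt (hij.trans hjq)
      rw [hpj, Equiv.swap_apply_right, Equiv.swap_apply_of_ne_of_ne hqi hqj]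
      exact ⟨hij.trans hjq, by simp [Prod.ext_iff, hqj]⟩
    rw [Equiv.swap_apply_of_ne_of_ne hpi hpj]
    rcases eq_or_ne q i with hqi | hqi
    · have hpi2 : p < i := hqi ▸ hpq
      rw [hqi, Equiv.swap_apply_left]
      exact ⟨hpi2.trans hij, by simp [Prod.ext_iff, hpi]⟩
    rcases eq_or_ne q j with hqj | hqj
    · have hpj2 : p < j := hqj ▸ hpq
      rw [hqj, Equiv.swap_apply_right]
      have hpi' : p < i := by
        by_contra h
        exact absurd (hM1 (lt_of_le_of_ne (not_lt.1 h) (Ne.symm hpi))) (not_le.2 hpj2)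
      exact ⟨hpi', by simp [Prod.ext_iff, hpi]⟩
    · rw [Equiv.swap_apply_of_ne_of_ne hqi hqj]
      exact ⟨hpq, by simp [Prod.ext_iff, hpi]⟩

lemma pairMap_inv (u : Equiv.Perm (Fin n)) (i j : Fin n) (hij : i < j)
    (huv : u i < u j)
    (hmid : ∀ k, i < k → k < j → u k < u i ∨ u j < u k)
    (p q : Fin n) (hpq : p < q) (hne : (p, q) ≠ (i, j)) :
    ((u * Equiv.swap i j) (pairMap i j (p, q)).2 < (u * Equiv.swap i j) (pairMap i j (p, q)).1
      ↔ u q < u p) := by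
  set v := u * Equiv.swap i j with hv
  have hvi : v i = u j := by rw [hv, Equiv.Perm.mul_apply, Equiv.swap_apply_left]
  have hvj : v j = u i := by rw [hv, Equiv.Perm.mul_apply, Equiv.swap_apply_right]
  have hvo : ∀ x, x ≠ i → x ≠ j → v x = u x := by
    intro x h1 h2; rw [hv, Equiv.Perm.mul_apply, Equiv.swap_apply_of_ne_of_ne h1 h2]
  unfold pairMap
  by_cases hM : (i < p ∧ p < j) ∨ (i < q ∧ q < j)
  · simp only [hM, if_true]
    by_cases hPm : i < p ∧ p < j
    · obtain ⟨hip, hpj⟩ := hPm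
      have hvp : v p = u p := hvo p (ne_of_gt hip) (ne_of_lt hpj)
      rcases eq_or_ne q j with hqj | hqj
      · rw [hqj, hvp, hvj]
        rcases hmid p hip hpj with h | h
        · exact iff_of_false (lt_asymm h) (fun h'' => lt_asymm huv ((hqj ▸ h'' : u j < u p).trans h))
        · exact iff_of_true (huv.trans h) (hqj ▸ h)
      · have hqi : q ≠ i := ne_of_gt (hip.trans hpq)
        rw [hvp, hvo q hqi hqj]
    · have hQm : i < q ∧ q < j := hM.resolve_left hPm
      obtain ⟨hiq, hqj⟩ := hQm
      have hvq : v q = u q := hvo q (ne_of_gt hiq) (ne_of_lt hqj)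
      rcases eq_or_ne p i with hpi | hpi
      · rw [hpi, hvq, hvi]
        rcases hmid q hiq hqj with h | h
        · exact iff_of_true (h.trans huv) (hpi ▸ h)
        · exact iff_of_false (lt_asymm h) (fun h'' => lt_asymm huv (h.trans (hpi ▸ h'' : u q < u i)))
      · have hpj : p ≠ j := ne_of_lt (hpq.trans hqj)
        rw [hvq, hvo p hpi hpj]
  · simp only [hM, if_false]
    rw [hv]
    simp only [Equiv.Perm.mul_apply, Equiv.swap_apply_self]

end BruhatAux

namespace BruhatAux

lemma swap_length (u : Equiv.Perm (Fin n)) (i j : Fin n) (hij : i < j)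
    (huv : u i < u j)
    (hmid : ∀ k, i < k → k < j → u k < u i ∨ u j < u k) :
    permLength (u * Equiv.swap i j) = permLength u + 1 := by
  set v := u * Equiv.swap i j with hv
  have hS : permLength u = (Finset.univ.filter
      (fun p : Fin n × Fin n => p.1 < p.2 ∧ u p.2 < u p.1)).card := rfl
  have hT : permLength v = (Finset.univ.filter
      (fun p : Fin n × Fin n => p.1 < p.2 ∧ v p.2 < v p.1)).card := rfl
  set S := Finset.univ.filter (fun p : Fin n × Fin n => p.1 < p.2 ∧ u p.2 < u p.1) with hSdef
  set T := Finset.univ.filter (fun p : Fin n × Fin n => p.1 < p.2 ∧ v p.2 < v p.1) with hTdef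
  have hijT : (i, j) ∈ T := by
    have h1 : v j = u i := by rw [hv, Equiv.Perm.mul_apply, Equiv.swap_apply_right]
    have h2 : v i = u j := by rw [hv, Equiv.Perm.mul_apply, Equiv.swap_apply_left]
    simp only [hTdef, Finset.mem_filter, Finset.mem_univ, true_and, h1, h2]
    exact ⟨hij, huv⟩
  have hcard : S.card = (T.erase (i, j)).card := by
    apply Finset.card_nbij' (pairMap i j) (pairMap i j)
    · intro x hx
      obtain ⟨p, q⟩ := x
      simp only [Finset.mem_coe, hSdef, Finset.mem_filter, Finset.mem_univ, true_and] at hx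
      obtain ⟨hpq, hinv⟩ := hx
      have hne : (p, q) ≠ (i, j) := by
        intro h
        simp only [Prod.mk.injEq] at h
        rw [h.1, h.2] at hinv
        exact lt_asymm huv hinv
      obtain ⟨hsort, hne'⟩ := pairMap_sorted i j hij p q hpq hne
      have hiff := pairMap_inv u i j hij huv hmid p q hpq hne
      rw [Finset.mem_coe, Finset.mem_erase]
      refine ⟨hne', ?_⟩
      simp only [hTdef, Finset.mem_filter, Finset.mem_univ, true_and]
      exact ⟨hsort, (hiff.2 hinv : _)⟩
    · intro x hx
      obtain ⟨p, q⟩ := x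
      rw [Finset.mem_coe, Finset.mem_erase] at hx
      obtain ⟨hne, hx⟩ := hx
      simp only [hTdef, Finset.mem_filter, Finset.mem_univ, true_and] at hx
      obtain ⟨hpq, hinv⟩ := hx
      obtain ⟨hsort, hne'⟩ := pairMap_sorted i j hij p q hpq hne
      obtain ⟨a, b, hab⟩ : ∃ a b, pairMap i j (p, q) = (a, b) :=
        ⟨_, _, rfl⟩
      rw [hab] at hsort hne'
      have hiff := pairMap_inv u i j hij huv hmid a b hsort hne'
      rw [← hab, pairMap_involutive] at hiff
      simp only [Finset.mem_coe, hSdef, Finset.mem_filter, Finset.mem_univ, true_and, hab]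
      exact ⟨hsort, hiff.1 hinv⟩
    · intro x _; exact pairMap_involutive i j x
    · intro x _; exact pairMap_involutive i j x
  rw [hT, hS, hcard, Finset.card_erase_of_mem hijT]
  have hpos : 0 < T.card := Finset.card_pos.2 ⟨_, hijT⟩
  omega

end BruhatAux

namespace BruhatAux

lemma bruhat_le_swap : ∀ (d : ℕ) (u : Equiv.Perm (Fin n)) (i j : Fin n),
    j.val - i.val ≤ d → i < j → u i < u j → BruhatLE u (u * Equiv.swap i j) := by
  intro d
  induction d with
  | zero =>
    intro u i j hd hij _
    rw [Fin.lt_def] at hij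
    omega
  | succ d ih =>
    intro u i j hd hij huv
    by_cases hex : ∃ k, i < k ∧ k < j ∧ u i < u k ∧ u k < u j
    · obtain ⟨k, hik, hkj, h1, h2⟩ := hex
      have hki : k ≠ i := ne_of_gt hik
      have hji : j ≠ i := ne_of_gt hij
      have hjk : j ≠ k := ne_of_gt hkj
      have nik : i.val < k.val := hik
      have nkj : k.val < j.val := hkj
      set u1 := u * Equiv.swap i k with hu1
      set u2 := u1 * Equiv.swap k j with hu2
      have e1 : u1 k = u i := by rw [hu1, Equiv.Perm.mul_apply, Equiv.swap_apply_right]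
      have e2 : u1 j = u j := by
        rw [hu1, Equiv.Perm.mul_apply, Equiv.swap_apply_of_ne_of_ne hji hjk]
      have e3 : u2 i = u k := by
        rw [hu2, Equiv.Perm.mul_apply,
          Equiv.swap_apply_of_ne_of_ne (ne_of_lt hik) (ne_of_lt hij), hu1,
          Equiv.Perm.mul_apply, Equiv.swap_apply_left]
      have e4 : u2 k = u j := by rw [hu2, Equiv.Perm.mul_apply, Equiv.swap_apply_left, e2]
      have hstep1 : BruhatLE u u1 := ih u i k (by omega) hik h1
      have hstep2 : BruhatLE u1 u2 := ih u1 k j (by omega) hkj (by rw [e1, e2]; exact huv)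
      have hstep3 : BruhatLE u2 (u2 * Equiv.swap i k) :=
        ih u2 i k (by omega) hik (by rw [e3, e4]; exact h2)
      have hsw : Equiv.swap i k * Equiv.swap k j * Equiv.swap i k = Equiv.swap i j := by
        have h := Equiv.swap_mul_swap_mul_swap hjk hji
        rwa [Equiv.swap_comm k i, Equiv.swap_comm j k] at h
      have hsw' : Equiv.swap i k * (Equiv.swap k j * Equiv.swap i k) = Equiv.swap i j := by
        rw [← mul_assoc]; exact hsw
      have hfinal : u2 * Equiv.swap i k = u * Equiv.swap i j := by
        rw [hu2, hu1]
        simp only [mul_assoc, hsw']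
      rw [← hfinal]
      exact (hstep1.trans hstep2).trans hstep3
    · push_neg at hex
      have hmid : ∀ k, i < k → k < j → u k < u i ∨ u j < u k := by
        intro k hik hkj
        have hki : u k ≠ u i := fun h => absurd (u.injective h) (ne_of_gt hik)
        have hkjv : u k ≠ u j := fun h => absurd (u.injective h) (ne_of_lt hkj)
        rcases lt_trichotomy (u k) (u i) with h | h | h
        · exact Or.inl h
        · exact absurd h hki
        · exact Or.inr ((hex k hik hkj h).lt_of_ne (Ne.symm hkjv))
      exact Relation.ReflTransGen.single
        ⟨⟨i, j, ne_of_lt hij, rfl⟩, swap_length u i j hij huv hmid⟩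

lemma bruhat_length_lt {a b : Equiv.Perm (Fin n)} (h : BruhatLE a b) :
    a = b ∨ permLength a < permLength b := by
  induction h with
  | refl => exact Or.inl rfl
  | tail hab hstep ih =>
    obtain ⟨_, hlen⟩ := hstep
    right
    rcases ih with rfl | hlt
    · omega
    · omega

lemma op_unique (lam : Fin n → ℕ) (hanti : Antitone lam)
    (π₁ π₂ : Equiv.Perm (Fin n))
    (hc : ∀ x, lam (π₁ x) = lam (π₂ x))
    (h1 : ∀ x y, x < y → lam (π₁ x) = lam (π₁ y) → π₁ x < π₁ y)
    (h2 : ∀ x y, x < y → lam (π₂ x) = lam (π₂ y) → π₂ x < π₂ y) :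
    π₁ = π₂ := by
  have key : ∀ x y, π₁ x < π₁ y → π₂ x < π₂ y := by
    intro x y hxy
    have hne : x ≠ y := fun h => absurd (h ▸ hxy) (lt_irrefl _)
    rcases lt_trichotomy (lam (π₁ x)) (lam (π₁ y)) with hl | hl | hl
    · exact absurd (hanti hxy.le) (not_le.2 hl)
    · rcases lt_trichotomy x y with ho | ho | ho
      · exact h2 x y ho (by rw [← hc, ← hc, hl])
      · exact absurd ho hne
      · exact absurd (h1 y x ho hl.symm) (lt_asymm hxy)
    · have hthis : lam (π₂ y) < lam (π₂ x) := by rw [← hc, ← hc]; exact hl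
      rcases lt_trichotomy (π₂ x) (π₂ y) with h | h | h
      · exact h
      · rw [h] at hthis; exact absurd hthis (lt_irrefl _)
      · exact absurd (hanti h.le) (not_le.2 hthis)
  have hsm : StrictMono (fun z => π₂ (π₁.symm z)) := by
    intro a b hab
    refine key _ _ ?_
    rwa [Equiv.apply_symm_apply, Equiv.apply_symm_apply]
  have hsurj : Function.Surjective (fun z => π₂ (π₁.symm z)) :=
    π₂.surjective.comp π₁.symm.surjective
  let e : Fin n ≃o Fin n := StrictMono.orderIsoOfSurjective _ hsm hsurj
  have h2 : e = OrderIso.refl (Fin n) := Subsingleton.elim _ _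
  have hid : ∀ z, π₂ (π₁.symm z) = z := by
    intro z
    calc π₂ (π₁.symm z) = e z := rfl
      _ = z := by rw [h2]; rfl
  ext x
  have hz := hid (π₁ x)
  rw [Equiv.symm_apply_apply] at hz
  rw [hz]

end BruhatAux

namespace BruhatAux

lemma reach (lam : Fin n → ℕ) (hanti : Antitone lam) (β : Fin n → ℕ)
    (wβ : Equiv.Perm (Fin n)) (hwβ : ∀ i, lam (wβ i) = β i)
    (hminβ : ∀ τ : Equiv.Perm (Fin n), (∀ i, lam (τ i) = β i) →
      permLength wβ ≤ permLength τ) :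
    ∀ σ : Equiv.Perm (Fin n), (∀ i, lam (σ i) = β i) → BruhatLE wβ σ := by
  have hOP : ∀ x y, x < y → lam (wβ x) = lam (wβ y) → wβ x < wβ y := by
    intro x y hxy hl
    rcases lt_trichotomy (wβ x) (wβ y) with h | h | h
    · exact h
    · exact absurd (wβ.injective h) (ne_of_lt hxy)
    · exfalso
      set wβ' := wβ * Equiv.swap x y with hw'
      have e1 : wβ' x = wβ y := by rw [hw', Equiv.Perm.mul_apply, Equiv.swap_apply_left]
      have e2 : wβ' y = wβ x := by rw [hw', Equiv.Perm.mul_apply, Equiv.swap_apply_right]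
      have hco : ∀ i, lam (wβ' i) = β i := by
        intro i
        rcases eq_or_ne i x with rfl | hix
        · rw [e1, ← hl, hwβ]
        rcases eq_or_ne i y with rfl | hiy
        · rw [e2, hl, hwβ]
        · rw [hw', Equiv.Perm.mul_apply, Equiv.swap_apply_of_ne_of_ne hix hiy, hwβ]
      have hb : BruhatLE wβ' (wβ' * Equiv.swap x y) :=
        bruhat_le_swap (y.val - x.val) wβ' x y le_rfl hxy (by rw [e1, e2]; exact h)
      have hw2 : wβ' * Equiv.swap x y = wβ := by
        rw [hw', mul_assoc, Equiv.swap_mul_self, mul_one]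
      rw [hw2] at hb
      have hne : wβ' ≠ wβ := by
        intro hcontra
        have := congrArg (fun τ : Equiv.Perm (Fin n) => τ x) hcontra
        rw [e1] at this
        exact absurd this (ne_of_lt h)
      rcases bruhat_length_lt hb with heq | hlt
      · exact hne heq
      · exact absurd (hminβ wβ' hco) (not_le.2 hlt)
  suffices H : ∀ m σ, permLength σ = m → (∀ i, lam (σ i) = β i) → BruhatLE wβ σ by
    intro σ h; exact H _ σ rfl h
  intro m
  induction m using Nat.strong_induction_on with
  | _ m ih =>
    intro σ hm hσc
    by_cases hex : ∃ x y, x < y ∧ lam (σ x) = lam (σ y) ∧ σ y < σ x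
    · obtain ⟨x, y, hxy, hl, hinv⟩ := hex
      set σ' := σ * Equiv.swap x y with hs'
      have e1 : σ' x = σ y := by rw [hs', Equiv.Perm.mul_apply, Equiv.swap_apply_left]
      have e2 : σ' y = σ x := by rw [hs', Equiv.Perm.mul_apply, Equiv.swap_apply_right]
      have hco : ∀ i, lam (σ' i) = β i := by
        intro i
        rcases eq_or_ne i x with rfl | hix
        · rw [e1, ← hl, hσc]
        rcases eq_or_ne i y with rfl | hiy
        · rw [e2, hl, hσc]
        · rw [hs', Equiv.Perm.mul_apply, Equiv.swap_apply_of_ne_of_ne hix hiy, hσc]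
      have hb : BruhatLE σ' σ := by
        have hb' : BruhatLE σ' (σ' * Equiv.swap x y) :=
          bruhat_le_swap (y.val - x.val) σ' x y le_rfl hxy (by rw [e1, e2]; exact hinv)
        have hw2 : σ' * Equiv.swap x y = σ := by
          rw [hs', mul_assoc, Equiv.swap_mul_self, mul_one]
        rwa [hw2] at hb'
      have hne : σ' ≠ σ := by
        intro hcontra
        have := congrArg (fun τ : Equiv.Perm (Fin n) => τ x) hcontra
        rw [e1] at this
        exact absurd this (ne_of_lt hinv)
      rcases bruhat_length_lt hb with heq | hlt
      · exact absurd heq hne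
      · exact Relation.ReflTransGen.trans
          (ih (permLength σ') (by omega) σ' rfl hco) hb
    · push_neg at hex
      have hOPσ : ∀ x y, x < y → lam (σ x) = lam (σ y) → σ x < σ y := by
        intro x y hxy hl
        rcases lt_trichotomy (σ x) (σ y) with h | h | h
        · exact h
        · exact absurd (σ.injective h) (ne_of_lt hxy)
        · exact absurd h (not_lt.2 (hex x y hxy hl))
      have heq : wβ = σ :=
        op_unique lam hanti wβ σ (fun i => by rw [hwβ, hσc]) hOP hOPσ
      rw [heq]
      exact Relation.ReflTransGen.refl

end BruhatAux

/-- Let `lam` be the decreasing rearrangement of the composition `α` and `wα`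
the shortest permutation with `lam·wα = α` (where `(v·w)_i = v_{w(i)}`).  For
any `σ ≤ wα` in Bruhat order, the composition `β = lam·σ` satisfies
`w(β) ≤ wα` in Bruhat order (here `wβ` denotes the shortest permutation with
`lam·wβ = β`; note `λ(β) = λ(α) = lam`). -/
theorem minimal_perm_le_of_bruhat (n : ℕ) (α lam β : Fin n → ℕ)
    (hanti : Antitone lam)
    (wα : Equiv.Perm (Fin n)) (hwα : ∀ i, lam (wα i) = α i)
    (hmin : ∀ τ : Equiv.Perm (Fin n), (∀ i, lam (τ i) = α i) →
      permLength wα ≤ permLength τ)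
    (σ : Equiv.Perm (Fin n)) (hσ : BruhatLE σ wα)
    (hβ : ∀ i, β i = lam (σ i))
    (wβ : Equiv.Perm (Fin n)) (hwβ : ∀ i, lam (wβ i) = β i)
    (hminβ : ∀ τ : Equiv.Perm (Fin n), (∀ i, lam (τ i) = β i) →
      permLength wβ ≤ permLength τ) :
    BruhatLE wβ wα := by
  have h1 : BruhatLE wβ σ :=
    BruhatAux.reach lam hanti β wβ hwβ hminβ σ (fun i => (hβ i).symm)
  exact Relation.ReflTransGen.trans h1 hσ
end

section
/- Let α be a composition with λ(α)·w(α) = α as above, and define V(α) = {β : λ(β) = λ(α) and w(β) ≤ w(α) in Bruhat order}. Then V(α) = {λ(α)·σ : σ ∈ S_n, σ ≤ w(α)}. -/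
open Finset

theorem Equiv.Perm.apply_inv_self {α : Type*} (f : Equiv.Perm α) (x : α) : f (f⁻¹ x) = x :=
  f.apply_symm_apply x

theorem Equiv.Perm.inv_apply_self {α : Type*} (f : Equiv.Perm α) (x : α) : f⁻¹ (f x) = x :=
  f.symm_apply_apply x

lemma swap_lt_iff {n : ℕ} {a b : Fin n} (hab : (b:ℕ) = (a:ℕ) + 1) (x y : Fin n) :
    Equiv.swap a b x < Equiv.swap a b y ↔ ((x < y ∧ ¬(x = a ∧ y = b)) ∨ (x = b ∧ y = a)) := by
  simp only [Equiv.swap_apply_def]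
  split_ifs <;>
    (simp only [Fin.lt_def, Fin.ext_iff, not_and] at *; omega)

lemma length_swap_mul {n : ℕ} {a b : Fin n} (hab : (b:ℕ) = (a:ℕ) + 1)
    (σ : Equiv.Perm (Fin n)) (h : σ⁻¹ a < σ⁻¹ b) :
    permLength (Equiv.swap a b * σ) = permLength σ + 1 := by
  unfold permLength
  have hset : (Finset.univ : Finset (Fin n × Fin n)).filter
      (fun p => p.1 < p.2 ∧ (Equiv.swap a b * σ) p.2 < (Equiv.swap a b * σ) p.1)
      = insert (σ⁻¹ a, σ⁻¹ b) ((Finset.univ : Finset (Fin n × Fin n)).filter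
        (fun p => p.1 < p.2 ∧ σ p.2 < σ p.1)) := by
    ext ⟨p1, p2⟩
    simp only [mem_filter, mem_univ, true_and, mem_insert, Prod.mk.injEq]
    simp only [Equiv.Perm.mul_apply]
    rw [swap_lt_iff hab]
    constructor
    · rintro ⟨hp, (⟨hlt, _⟩ | ⟨h2, h1⟩)⟩
      · exact Or.inr ⟨hp, hlt⟩
      · exact Or.inl ⟨by rw [← h1, Equiv.Perm.inv_apply_self],
          by rw [← h2, Equiv.Perm.inv_apply_self]⟩
    · rintro (⟨rfl, rfl⟩ | ⟨hp, hlt⟩)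
      · exact ⟨h, Or.inr ⟨Equiv.Perm.apply_inv_self σ b, Equiv.Perm.apply_inv_self σ a⟩⟩
      · refine ⟨hp, Or.inl ⟨hlt, ?_⟩⟩
        rintro ⟨h2, h1⟩
        have hp1 : p1 = σ⁻¹ b := by rw [← h1, Equiv.Perm.inv_apply_self]
        have hp2 : p2 = σ⁻¹ a := by rw [← h2, Equiv.Perm.inv_apply_self]
        rw [hp1, hp2] at hp
        exact absurd h (not_lt.2 (le_of_lt hp))
  rw [hset, Finset.card_insert_of_notMem]
  simp only [mem_filter, mem_univ, true_and, not_and, Equiv.Perm.apply_inv_self]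
  intro _
  simp only [Fin.lt_def, not_lt]; omega

lemma Q_of_P {n : ℕ} (lam : Fin n → ℕ) (hanti : Antitone lam) (σ : Equiv.Perm (Fin n))
    (hP : ∀ a b : Fin n, (b:ℕ) = (a:ℕ) + 1 → lam a = lam b → σ⁻¹ a < σ⁻¹ b) :
    ∀ j k : Fin n, j < k → lam j = lam k → σ⁻¹ j < σ⁻¹ k := by
  have main : ∀ d : ℕ, ∀ j k : Fin n, (k:ℕ) = (j:ℕ) + d + 1 → lam j = lam k → σ⁻¹ j < σ⁻¹ k := by
    intro d
    induction d with
    | zero => exact fun j k hk hl => hP j k (by omega) hl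
    | succ d ih =>
      intro j k hk hl
      have hkn : (j:ℕ) + d + 1 < n := by have := k.isLt; omega
      set k' : Fin n := ⟨(j:ℕ) + d + 1, hkn⟩ with hk'
      have h1 : lam k ≤ lam k' := hanti (by simp only [Fin.le_def, hk']; omega)
      have h2 : lam k' ≤ lam j := hanti (by simp only [Fin.le_def, hk']; omega)
      have hl1 : lam j = lam k' := le_antisymm (hl ▸ h1) h2
      have ha := ih j k' rfl hl1
      have hb := hP k' k (by simp only [hk']; omega) (hl1.symm.trans hl)
      exact lt_trans ha hb
  intro j k hjk hl
  refine main ((k:ℕ) - (j:ℕ) - 1) j k ?_ hl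
  rw [Fin.lt_def] at hjk; omega

lemma inv_filter_eq {n : ℕ} (lam : Fin n → ℕ) (σ : Equiv.Perm (Fin n))
    (hQ : ∀ j k : Fin n, j < k → lam j = lam k → σ⁻¹ j < σ⁻¹ k) (j : Fin n) :
    Finset.filter (fun x => lam (σ x) = lam j ∧ x < σ⁻¹ j) Finset.univ
      = Finset.image (fun j' => σ⁻¹ j')
          (Finset.filter (fun j' => j' < j ∧ lam j' = lam j) Finset.univ) := by
  ext x
  simp only [mem_filter, mem_univ, true_and, mem_image]
  constructor
  · rintro ⟨hx, hlt⟩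
    refine ⟨σ x, ⟨?_, hx⟩, by simp⟩
    rcases lt_trichotomy (σ x) j with h1 | h1 | h1
    · exact h1
    · exfalso
      have : x = σ⁻¹ j := by rw [← h1, Equiv.Perm.inv_apply_self]
      rw [this] at hlt; exact lt_irrefl _ hlt
    · exfalso
      have h2 := hQ j (σ x) h1 hx.symm
      rw [Equiv.Perm.inv_apply_self] at h2
      exact absurd hlt (not_lt.2 (le_of_lt h2))
  · rintro ⟨j', ⟨hj1, hj2⟩, rfl⟩
    refine ⟨by rw [Equiv.Perm.apply_inv_self]; exact hj2, hQ j' j hj1 hj2⟩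

lemma unique_min {n : ℕ} (lam : Fin n → ℕ) (σ τ : Equiv.Perm (Fin n))
    (h : ∀ i, lam (σ i) = lam (τ i))
    (hQσ : ∀ j k : Fin n, j < k → lam j = lam k → σ⁻¹ j < σ⁻¹ k)
    (hQτ : ∀ j k : Fin n, j < k → lam j = lam k → τ⁻¹ j < τ⁻¹ k) : σ = τ := by
  suffices hinv : ∀ j, σ⁻¹ j = τ⁻¹ j by
    exact inv_injective (Equiv.ext hinv)
  intro j
  have hcards : (Finset.filter (fun x => lam (σ x) = lam j ∧ x < σ⁻¹ j) Finset.univ).card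
      = (Finset.filter (fun x => lam (σ x) = lam j ∧ x < τ⁻¹ j) Finset.univ).card := by
    have e1 := inv_filter_eq lam σ hQσ j
    have e2 := inv_filter_eq lam τ hQτ j
    have e3 : Finset.filter (fun x => lam (σ x) = lam j ∧ x < τ⁻¹ j) Finset.univ
        = Finset.filter (fun x => lam (τ x) = lam j ∧ x < τ⁻¹ j) Finset.univ := by
      apply Finset.filter_congr; intro x _; rw [h x]
    rw [e1, e3, e2, Finset.card_image_of_injective _ (Equiv.injective _),
      Finset.card_image_of_injective _ (Equiv.injective _)]
  have helper : ∀ u v : Fin n, u < v → lam (σ u) = lam j →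
      (Finset.filter (fun x => lam (σ x) = lam j ∧ x < u) Finset.univ).card
        < (Finset.filter (fun x => lam (σ x) = lam j ∧ x < v) Finset.univ).card := by
    intro u v huv hu
    apply Finset.card_lt_card
    constructor
    · intro x hx
      simp only [mem_filter, mem_univ, true_and] at *
      exact ⟨hx.1, lt_trans hx.2 huv⟩
    · intro hsub
      have hu' : u ∈ Finset.filter (fun x => lam (σ x) = lam j ∧ x < v) Finset.univ := by
        simp only [mem_filter, mem_univ, true_and]; exact ⟨hu, huv⟩
      have := hsub hu'
      simp only [mem_filter, mem_univ, true_and] at this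
      exact lt_irrefl _ this.2
  rcases lt_trichotomy (σ⁻¹ j) (τ⁻¹ j) with h1 | h1 | h1
  · exact absurd hcards (ne_of_lt (helper _ _ h1 (by rw [Equiv.Perm.apply_inv_self])))
  · exact h1
  · exact absurd hcards.symm (ne_of_lt (helper _ _ h1 (by rw [h, Equiv.Perm.apply_inv_self])))

lemma lam_swap {n : ℕ} (lam : Fin n → ℕ) {a b : Fin n} (hl : lam a = lam b) (z : Fin n) :
    lam (Equiv.swap a b z) = lam z := by
  rcases eq_or_ne z a with rfl | hza
  · rw [Equiv.swap_apply_left, hl]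
  rcases eq_or_ne z b with rfl | hzb
  · rw [Equiv.swap_apply_right, hl]
  · rw [Equiv.swap_apply_of_ne_of_ne hza hzb]

lemma key_lemma {n : ℕ} (lam : Fin n → ℕ) (hanti : Antitone lam) (wβ : Equiv.Perm (Fin n))
    (hmin : ∀ τ : Equiv.Perm (Fin n), (∀ i, lam (τ i) = lam (wβ i)) →
      permLength wβ ≤ permLength τ) :
    ∀ m : ℕ, ∀ σ : Equiv.Perm (Fin n), permLength σ = m →
      (∀ i, lam (σ i) = lam (wβ i)) → BruhatLE wβ σ := by
  intro m
  induction m using Nat.strong_induction_on with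
  | _ m IH =>
  intro σ hm hσ
  by_cases hc : ∃ a b : Fin n, (b:ℕ) = (a:ℕ) + 1 ∧ lam a = lam b ∧ σ⁻¹ b < σ⁻¹ a
  · obtain ⟨a, b, hab, hl, hlt⟩ := hc
    set σ' := Equiv.swap a b * σ with hσ'def
    have hss : Equiv.swap a b * σ' = σ := by
      rw [hσ'def, ← mul_assoc, Equiv.swap_mul_self, one_mul]
    have hinva : σ'⁻¹ a = σ⁻¹ b := by
      rw [hσ'def, mul_inv_rev, Equiv.Perm.mul_apply, Equiv.swap_inv, Equiv.swap_apply_left]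
    have hinvb : σ'⁻¹ b = σ⁻¹ a := by
      rw [hσ'def, mul_inv_rev, Equiv.Perm.mul_apply, Equiv.swap_inv, Equiv.swap_apply_right]
    have hinv : σ'⁻¹ a < σ'⁻¹ b := by rw [hinva, hinvb]; exact hlt
    have hlen : permLength σ = permLength σ' + 1 := by
      rw [← hss]; exact length_swap_mul hab σ' hinv
    have hσ'lam : ∀ i, lam (σ' i) = lam (wβ i) := by
      intro i
      rw [hσ'def, Equiv.Perm.mul_apply, lam_swap lam hl]; exact hσ i
    have hstep : BruhatLE wβ σ' :=
      IH (permLength σ') (by omega) σ' rfl hσ'lam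
    refine Relation.ReflTransGen.tail hstep ⟨⟨σ'⁻¹ a, σ'⁻¹ b, ?_, ?_⟩, by omega⟩
    · intro hcon
      have : a = b := Equiv.injective σ'⁻¹ hcon
      rw [this] at hab; omega
    · rw [Equiv.mul_swap_eq_swap_mul, Equiv.Perm.apply_inv_self, Equiv.Perm.apply_inv_self, hss]
  · push_neg at hc
    have hPσ : ∀ a b : Fin n, (b:ℕ) = (a:ℕ) + 1 → lam a = lam b → σ⁻¹ a < σ⁻¹ b := by
      intro a b h1 h2
      have hne : σ⁻¹ a ≠ σ⁻¹ b := by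
        intro hcon
        have : a = b := Equiv.injective _ hcon
        rw [this] at h1; omega
      exact lt_of_le_of_ne (hc a b h1 h2) hne
    have hPw : ∀ a b : Fin n, (b:ℕ) = (a:ℕ) + 1 → lam a = lam b → wβ⁻¹ a < wβ⁻¹ b := by
      intro a b h1 h2
      by_contra hcon
      have hne : wβ⁻¹ a ≠ wβ⁻¹ b := by
        intro hcon'
        have : a = b := Equiv.injective _ hcon'
        rw [this] at h1; omega
      have hlt' : wβ⁻¹ b < wβ⁻¹ a := lt_of_le_of_ne (not_lt.1 hcon) (Ne.symm hne)
      set τ := Equiv.swap a b * wβ with hτdef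
      have hτlam : ∀ i, lam (τ i) = lam (wβ i) := by
        intro i; rw [hτdef, Equiv.Perm.mul_apply, lam_swap lam h2]
      have hle := hmin τ hτlam
      have hss : Equiv.swap a b * τ = wβ := by
        rw [hτdef, ← mul_assoc, Equiv.swap_mul_self, one_mul]
      have hinva : τ⁻¹ a = wβ⁻¹ b := by
        rw [hτdef, mul_inv_rev, Equiv.Perm.mul_apply, Equiv.swap_inv, Equiv.swap_apply_left]
      have hinvb : τ⁻¹ b = wβ⁻¹ a := by
        rw [hτdef, mul_inv_rev, Equiv.Perm.mul_apply, Equiv.swap_inv, Equiv.swap_apply_right]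
      have hlen : permLength wβ = permLength τ + 1 := by
        rw [← hss]
        exact length_swap_mul h1 τ (by rw [hinva, hinvb]; exact hlt')
      omega
    have hQσ := Q_of_P lam hanti σ hPσ
    have hQw := Q_of_P lam hanti wβ hPw
    have heq : wβ = σ := unique_min lam wβ σ (fun i => (hσ i).symm) hQw hQσ
    rw [heq]
    exact Relation.ReflTransGen.refl

/-- Let `lam` be the decreasing rearrangement of `α` and `wα` the shortest
permutation with `lam·wα = α`.  Then
`V(α) = {β : λ(β) = λ(α) and w(β) ≤ wα} = {lam·σ : σ ≤ wα}`.
Here `λ(β) = λ(α)` is expressed by `β` being a rearrangement of `lam`, and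
`w(β)` by the characterizing property of the shortest permutation sorting `β`. -/
theorem V_eq_orbit_of_lower_interval (n : ℕ) (α lam : Fin n → ℕ)
    (hanti : Antitone lam)
    (wα : Equiv.Perm (Fin n)) (hwα : ∀ i, lam (wα i) = α i)
    (hmin : ∀ τ : Equiv.Perm (Fin n), (∀ i, lam (τ i) = α i) →
      permLength wα ≤ permLength τ) :
    {β : Fin n → ℕ |
        (∃ τ : Equiv.Perm (Fin n), ∀ i, β i = lam (τ i)) ∧
        ∀ wβ : Equiv.Perm (Fin n),
          ((∀ i, lam (wβ i) = β i) ∧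
            ∀ τ : Equiv.Perm (Fin n), (∀ i, lam (τ i) = β i) →
              permLength wβ ≤ permLength τ) →
          BruhatLE wβ wα} =
      {β : Fin n → ℕ | ∃ σ : Equiv.Perm (Fin n), BruhatLE σ wα ∧ ∀ i, β i = lam (σ i)} := by
  ext β
  simp only [Set.mem_setOf_eq]
  constructor
  · rintro ⟨⟨τ, hτ⟩, hAll⟩
    have hne : (Finset.univ.filter
        (fun τ' : Equiv.Perm (Fin n) => ∀ i, lam (τ' i) = β i)).Nonempty :=
      ⟨τ, Finset.mem_filter.2 ⟨Finset.mem_univ _, fun i => (hτ i).symm⟩⟩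
    obtain ⟨wβ, hwβmem, hwβmin⟩ := Finset.exists_min_image _ permLength hne
    simp only [Finset.mem_filter, Finset.mem_univ, true_and] at hwβmem
    exact ⟨wβ, hAll wβ ⟨hwβmem, fun τ' hτ' =>
      hwβmin τ' (Finset.mem_filter.2 ⟨Finset.mem_univ _, hτ'⟩)⟩,
      fun i => (hwβmem i).symm⟩
  · rintro ⟨σ, hσle, hσ⟩
    refine ⟨⟨σ, hσ⟩, ?_⟩
    rintro wβ ⟨hw1, hw2⟩
    have hmin' : ∀ τ : Equiv.Perm (Fin n), (∀ i, lam (τ i) = lam (wβ i)) →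
        permLength wβ ≤ permLength τ :=
      fun τ hτ => hw2 τ (fun i => (hτ i).trans (hw1 i))
    have hk := key_lemma lam hanti wβ hmin' (permLength σ) σ rfl
      (fun i => (hσ i).symm.trans (hw1 i).symm)
    exact Relation.ReflTransGen.trans hk hσle
end

section
/- Let α be a composition with α_r < α_{r+1} for some r, and let α' = α·s_r (swap entries r and r+1). Then V(α) = V(α') ∪ {v·s_r : v ∈ V(α')}, where V(α) = {β : λ(β) = λ(α), w(β) ≤ w(α)}. -/
set_option maxHeartbeats 2000000

/-- `Vset lam W = {β : λ(β) = lam and w(β) ≤ W}`: the compositions `β` that are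
rearrangements of the partition `lam` whose shortest sorting permutation `w(β)`
(characterized by `lam·w(β) = β` and minimality of length) is below `W` in
Bruhat order. -/
def Vset {n : ℕ} (lam : Fin n → ℕ) (W : Equiv.Perm (Fin n)) : Set (Fin n → ℕ) :=
  {β | (∃ τ : Equiv.Perm (Fin n), ∀ i, β i = lam (τ i)) ∧
    ∀ wβ : Equiv.Perm (Fin n),
      ((∀ i, lam (wβ i) = β i) ∧
        ∀ τ : Equiv.Perm (Fin n), (∀ i, lam (τ i) = β i) →
          permLength wβ ≤ permLength τ) →
      BruhatLE wβ W}

namespace VAux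
variable {n : ℕ}

lemma permLength_eq_sum (u : Equiv.Perm (Fin n)) :
    permLength u = ∑ p : Fin n × Fin n, if p.1 < p.2 ∧ u p.2 < u p.1 then 1 else 0 :=
  Finset.card_filter _ _

lemma permLength_mul_swap (u : Equiv.Perm (Fin n)) (i j : Fin n) :
    permLength (u * Equiv.swap i j) =
      ∑ p : Fin n × Fin n,
        if Equiv.swap i j p.1 < Equiv.swap i j p.2 ∧ u p.2 < u p.1 then 1 else 0 := by
  rw [permLength_eq_sum]
  exact (Fintype.sum_equiv ((Equiv.swap i j).prodCongr (Equiv.swap i j)) _ _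
    (fun p => by simp [Equiv.Perm.mul_apply])).symm

lemma adj_swap_order {i j a b : Fin n} (hij : (j : ℕ) = (i : ℕ) + 1)
    (h1 : ¬(a = i ∧ b = j)) (h2 : ¬(a = j ∧ b = i)) :
    (Equiv.swap i j a < Equiv.swap i j b ↔ a < b) := by
  simp only [Equiv.swap_apply_def, Fin.lt_def]
  split_ifs <;> simp_all [Fin.ext_iff] <;> omega

lemma permLength_mul_adj_swap {u : Equiv.Perm (Fin n)} {i j : Fin n}
    (hij : (j : ℕ) = (i : ℕ) + 1) (h : u i < u j) :
    permLength (u * Equiv.swap i j) = permLength u + 1 := by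
  have hne : i ≠ j := by simp [Fin.ext_iff]; omega
  have hpair : ((i, j) : Fin n × Fin n) ≠ (j, i) := by
    simp [Prod.ext_iff, Fin.ext_iff]; omega
  rw [permLength_mul_swap, permLength_eq_sum]
  have key : ∀ p : Fin n × Fin n, p ≠ (i, j) → p ≠ (j, i) →
      (if Equiv.swap i j p.1 < Equiv.swap i j p.2 ∧ u p.2 < u p.1 then 1 else 0) =
      (if p.1 < p.2 ∧ u p.2 < u p.1 then (1:ℕ) else 0) := by
    intro p hp1 hp2
    have := adj_swap_order (a := p.1) (b := p.2) hij
      (fun hh => hp1 (Prod.ext hh.1 hh.2)) (fun hh => hp2 (Prod.ext hh.1 hh.2))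
    simp [this]
  set f : Fin n × Fin n → ℕ := fun p =>
    if Equiv.swap i j p.1 < Equiv.swap i j p.2 ∧ u p.2 < u p.1 then 1 else 0 with hf
  set g : Fin n × Fin n → ℕ := fun p =>
    if p.1 < p.2 ∧ u p.2 < u p.1 then 1 else 0 with hg
  have hij' : i < j := by rw [Fin.lt_def]; omega
  have e1 : ∀ (f : Fin n × Fin n → ℕ),
      ∑ p, f p = (∑ p ∈ ({(i,j), (j,i)} : Finset (Fin n × Fin n)), f p) +
        ∑ p ∈ ({(i,j), (j,i)} : Finset (Fin n × Fin n))ᶜ, f p :=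
    fun f => (Finset.sum_add_sum_compl _ f).symm
  rw [e1 f, e1 g]
  have hc : ∑ p ∈ ({(i,j), (j,i)} : Finset (Fin n × Fin n))ᶜ, f p =
      ∑ p ∈ ({(i,j), (j,i)} : Finset (Fin n × Fin n))ᶜ, g p := by
    apply Finset.sum_congr rfl
    intro p hp
    simp only [Finset.mem_compl, Finset.mem_insert, Finset.mem_singleton, not_or] at hp
    exact key p hp.1 hp.2
  rw [hc, Finset.sum_pair hpair, Finset.sum_pair hpair]
  have hfij : f (i, j) = 0 := by
    simp only [hf, Equiv.swap_apply_left, Equiv.swap_apply_right]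
    rw [if_neg]; rintro ⟨h1, -⟩; exact absurd h1 (not_lt.2 hij'.le)
  have hfji : f (j, i) = 1 := by
    simp only [hf, Equiv.swap_apply_left, Equiv.swap_apply_right]
    rw [if_pos ⟨hij', h⟩]
  have hgij : g (i, j) = 0 := by
    simp only [hg]; rw [if_neg]; rintro ⟨-, h2⟩; exact absurd h2 (not_lt.2 h.le)
  have hgji : g (j, i) = 0 := by
    simp only [hg]; rw [if_neg]; rintro ⟨h1, -⟩; exact absurd h1 (not_lt.2 hij'.le)
  rw [hfij, hfji, hgij, hgji]
  omega

/-- number of intermediate positions with intermediate values -/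
def midcount (u : Equiv.Perm (Fin n)) (i j : Fin n) : ℕ :=
  (Finset.univ.filter (fun x : Fin n => i < x ∧ x < j ∧ u i < u x ∧ u x < u j)).card


lemma permLength_swap_formula (u : Equiv.Perm (Fin n)) (i j : Fin n) (hij : i < j)
    (huv : u i < u j) :
    permLength (u * Equiv.swap i j) = permLength u + 2 * midcount u i j + 1 := by
  generalize hd : (j : ℕ) - (i : ℕ) = d
  induction d using Nat.strong_induction_on generalizing u i j with
  | _ d IH =>
  rcases Nat.lt_or_ge ((i:ℕ)+1) (j:ℕ) with hgap | hgap
  · -- general step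
    have hkn : (i:ℕ)+1 < n := lt_trans hgap j.isLt
    set k : Fin n := ⟨(i:ℕ)+1, hkn⟩ with hk
    have hik : i < k := by simp [Fin.lt_def, hk]
    have hkj : k < j := by simp [Fin.lt_def, hk]; omega
    have hine_k : i ≠ k := Fin.ne_of_lt hik
    have hkne_j : k ≠ j := Fin.ne_of_lt hkj
    have hine_j : i ≠ j := Fin.ne_of_lt hij
    -- swap identity : swap i j = swap i k * swap k j * swap i k
    have hswid : Equiv.swap i j = Equiv.swap i k * Equiv.swap k j * Equiv.swap i k := by
      have := Equiv.swap_mul_swap_mul_swap (x := j) (y := k) (z := i)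
        hkne_j.symm hine_j.symm
      -- swap k i * swap j k * swap k i = swap i j
      rw [Equiv.swap_comm k i, Equiv.swap_comm j k] at this
      rw [← this]
    set v1 := u * Equiv.swap i k with hv1
    set v2 := v1 * Equiv.swap k j with hv2
    have hv1i : v1 i = u k := by simp [hv1, Equiv.Perm.mul_apply]
    have hv1k : v1 k = u i := by simp [hv1, Equiv.Perm.mul_apply]
    have hv1j : v1 j = u j := by
      simp [hv1, Equiv.Perm.mul_apply,
        Equiv.swap_apply_of_ne_of_ne hine_j.symm hkne_j.symm]
    have hv1x : ∀ x : Fin n, x ≠ i → x ≠ k → v1 x = u x := by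
      intro x hx1 hx2
      simp [hv1, Equiv.Perm.mul_apply, Equiv.swap_apply_of_ne_of_ne hx1 hx2]
    have hv2i : v2 i = u k := by
      rw [hv2, Equiv.Perm.mul_apply,
        Equiv.swap_apply_of_ne_of_ne hine_k hine_j, hv1i]
    have hv2k : v2 k = u j := by
      rw [hv2, Equiv.Perm.mul_apply, Equiv.swap_apply_left, hv1j]
    have hv2x : ∀ x : Fin n, x ≠ i → x ≠ k → x ≠ j → v2 x = u x := by
      intro x h1 h2 h3
      rw [hv2, Equiv.Perm.mul_apply, Equiv.swap_apply_of_ne_of_ne h2 h3, hv1x x h1 h2]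
    have hfin : u * Equiv.swap i j = v2 * Equiv.swap i k := by
      rw [hswid, hv2, hv1]; group
    -- length of v2 via IH
    have hlv2 : permLength v2 = permLength v1 + 2 * midcount v1 k j + 1 := by
      apply IH ((j:ℕ) - (k:ℕ)) (by simp [hk]; omega) v1 k j hkj
        (by rw [hv1k, hv1j]; exact huv) rfl
    have hmce : midcount v1 k j =
        (Finset.univ.filter (fun x : Fin n => k < x ∧ x < j ∧ u i < u x ∧ u x < u j)).card := by
      unfold midcount
      congr 1
      apply Finset.filter_congr
      intro x _
      constructor
      · rintro ⟨h1, h2, h3, h4⟩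
        rw [hv1x x (by intro hh; subst hh; exact absurd h1 (not_lt.2 hik.le))
            (Fin.ne_of_gt h1)] at h3 h4
        rw [hv1k] at h3
        rw [hv1j] at h4
        exact ⟨h1, h2, h3, h4⟩
      · rintro ⟨h1, h2, h3, h4⟩
        rw [hv1k, hv1j]
        refine ⟨h1, h2, ?_, ?_⟩ <;>
          rw [hv1x x (by intro hh; subst hh; exact absurd h1 (not_lt.2 hik.le))
            (Fin.ne_of_gt h1)] <;> assumption
    have hkadj : (k:ℕ) = (i:ℕ) + 1 := rfl
    have hswss : ∀ w : Equiv.Perm (Fin n), w * Equiv.swap i k * Equiv.swap i k = w := by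
      intro w; rw [mul_assoc, Equiv.swap_mul_self, mul_one]
    have hukui : u k ≠ u i := fun hh => hine_k.symm (u.injective hh)
    have hukuj : u k ≠ u j := fun hh => hkne_j (u.injective hh)
    set S2 : Finset (Fin n) :=
      Finset.univ.filter (fun x : Fin n => k < x ∧ x < j ∧ u i < u x ∧ u x < u j) with hS2
    rcases lt_trichotomy (u k) (u i) with hc | hc | hc
    · -- case A : u k < u i
      have hA1 : permLength u = permLength v1 + 1 := by
        have := permLength_mul_adj_swap (u := v1) hkadj (by rw [hv1i, hv1k]; exact hc)
        rw [hv1, hswss] at this; exact this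
      have hA2 : permLength (u * Equiv.swap i j) = permLength v2 + 1 := by
        rw [hfin]
        exact permLength_mul_adj_swap hkadj (by rw [hv2i, hv2k]; exact lt_trans hc huv)
      have hmA : midcount u i j = S2.card := by
        unfold midcount
        congr 1
        apply Finset.filter_congr
        intro x _
        constructor
        · rintro ⟨h1, h2, h3, h4⟩
          have hxk : x ≠ k := by
            intro hh; subst hh; exact absurd h3 (not_lt.2 hc.le)
          refine ⟨?_, h2, h3, h4⟩
          rw [Fin.lt_def] at h1 ⊢
          rcases Nat.lt_or_ge (k:ℕ) (x:ℕ) with hh | hh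
          · exact hh
          · exfalso; exact hxk (Fin.ext (by omega))
        · rintro ⟨h1, h2, h3, h4⟩
          exact ⟨lt_trans hik h1, h2, h3, h4⟩
      rw [hA2, hlv2, hmce, hmA]; omega
    · exact absurd hc hukui
    · -- u i < u k
      have hB1 : permLength v1 = permLength u + 1 := by
        rw [hv1]; exact permLength_mul_adj_swap hkadj hc
      rcases lt_trichotomy (u k) (u j) with hd2 | hd2 | hd2
      · -- case C : u i < u k < u j
        have hC2 : permLength (u * Equiv.swap i j) = permLength v2 + 1 := by
          rw [hfin]
          exact permLength_mul_adj_swap hkadj (by rw [hv2i, hv2k]; exact hd2)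
        have hmC : midcount u i j = S2.card + 1 := by
          unfold midcount
          have hins : Finset.univ.filter
              (fun x : Fin n => i < x ∧ x < j ∧ u i < u x ∧ u x < u j) = insert k S2 := by
            ext x
            simp only [hS2, Finset.mem_insert, Finset.mem_filter, Finset.mem_univ, true_and]
            constructor
            · rintro ⟨h1, h2, h3, h4⟩
              rcases eq_or_ne x k with hh | hh
              · exact Or.inl hh
              · refine Or.inr ⟨?_, h2, h3, h4⟩
                rw [Fin.lt_def] at h1 ⊢
                have : (x:ℕ) ≠ (k:ℕ) := fun hv => hh (Fin.ext hv)
                omega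
            · rintro (hh | ⟨h1, h2, h3, h4⟩)
              · subst hh; exact ⟨hik, hkj, hc, hd2⟩
              · exact ⟨lt_trans hik h1, h2, h3, h4⟩
          rw [hins, Finset.card_insert_of_notMem]
          simp only [hS2, Finset.mem_filter, Finset.mem_univ, true_and]
          rintro ⟨h1, -⟩; exact absurd h1 (lt_irrefl k)
        rw [hC2, hlv2, hmce, hmC]; omega
      · exact absurd hd2 hukuj
      · -- case B : u k > u j
        have hB2 : permLength v2 = permLength (u * Equiv.swap i j) + 1 := by
          have hw1 : (u * Equiv.swap i j) i = u j := by
            rw [Equiv.Perm.mul_apply, Equiv.swap_apply_left]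
          have hw2 : (u * Equiv.swap i j) k = u k := by
            rw [hfin, Equiv.Perm.mul_apply, Equiv.swap_apply_right, hv2i]
          have := permLength_mul_adj_swap (u := u * Equiv.swap i j) hkadj
            (by rw [hw1, hw2]; exact hd2)
          rw [hfin, hswss, ← hfin] at this
          omega
        have hmB : midcount u i j = S2.card := by
          unfold midcount
          congr 1
          apply Finset.filter_congr
          intro x _
          constructor
          · rintro ⟨h1, h2, h3, h4⟩
            have hxk : x ≠ k := by
              intro hh; subst hh; exact absurd h4 (not_lt.2 hd2.le)
            refine ⟨?_, h2, h3, h4⟩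
            rw [Fin.lt_def] at h1 ⊢
            have : (x:ℕ) ≠ (k:ℕ) := fun hv => hxk (Fin.ext hv)
            omega
          · rintro ⟨h1, h2, h3, h4⟩
            exact ⟨lt_trans hik h1, h2, h3, h4⟩
        rw [hlv2, hmce] at hB2
        rw [hmB]; omega
  · -- base case : j = i + 1
    have hij1 : (j:ℕ) = (i:ℕ) + 1 := by
      have := hij; rw [Fin.lt_def] at this; omega
    have hmc : midcount u i j = 0 := by
      unfold midcount
      rw [Finset.card_eq_zero]
      apply Finset.filter_false_of_mem
      intro x _
      rintro ⟨h1, h2, -⟩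
      rw [Fin.lt_def] at h1 h2; omega
    rw [hmc, permLength_mul_adj_swap hij1 huv]

lemma mul_swap_swap (u : Equiv.Perm (Fin n)) (i j : Fin n) :
    u * Equiv.swap i j * Equiv.swap i j = u := by
  rw [mul_assoc, Equiv.swap_mul_self, mul_one]

/-- If `i < j` and the cover relation `b = a * swap i j` with length `+1` holds,
then `a i < a j`. -/
lemma cover_orient {a : Equiv.Perm (Fin n)} {i j : Fin n} (hij : i < j)
    (hlen : permLength (a * Equiv.swap i j) = permLength a + 1) : a i < a j := by
  rcases lt_trichotomy (a i) (a j) with h | h | h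
  · exact h
  · exact absurd (a.injective h) (Fin.ne_of_lt hij)
  · exfalso
    set b := a * Equiv.swap i j with hb
    have hbi : b i = a j := by simp [hb, Equiv.Perm.mul_apply]
    have hbj : b j = a i := by simp [hb, Equiv.Perm.mul_apply]
    have := permLength_swap_formula b i j hij (by rw [hbi, hbj]; exact h)
    rw [mul_swap_swap] at this
    omega

lemma sum_split_one (a : Fin n) (F : Fin n → ℕ) :
    ∑ x, F x = F a + ∑ x ∈ Finset.univ.erase a, F x :=
  (Finset.add_sum_erase _ F (Finset.mem_univ a)).symm

lemma sum_split_two {i j : Fin n} (hij : i ≠ j) (F : Fin n → ℕ) :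
    ∑ x, F x = F i + F j + ∑ x ∈ (Finset.univ.erase i).erase j, F x := by
  rw [sum_split_one i F, add_assoc]
  congr 1
  exact (Finset.add_sum_erase _ F (Finset.mem_erase.2 ⟨hij.symm, Finset.mem_univ j⟩)).symm

/-- rank matrix count: `#{x < k : u x ≥ l}` -/
def dmat (u : Equiv.Perm (Fin n)) (k l : ℕ) : ℕ :=
  ∑ x : Fin n, if (x : ℕ) < k ∧ l ≤ (u x : ℕ) then 1 else 0

def mcount (u : Equiv.Perm (Fin n)) (a k l : ℕ) : ℕ :=
  ∑ x : Fin n, if a ≤ (x : ℕ) ∧ (x : ℕ) < k ∧ l ≤ (u x : ℕ) then 1 else 0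

lemma dmat_split (u : Equiv.Perm (Fin n)) {a k : ℕ} (hak : a ≤ k) (l : ℕ) :
    dmat u k l = dmat u a l + mcount u a k l := by
  unfold dmat mcount
  rw [← Finset.sum_add_distrib]
  apply Finset.sum_congr rfl
  intro x _
  split_ifs <;> omega

lemma dmat_congr_prefix {u w : Equiv.Perm (Fin n)} {k : ℕ}
    (h : ∀ x : Fin n, (x : ℕ) < k → u x = w x) (l : ℕ) :
    dmat u k l = dmat w k l := by
  unfold dmat
  apply Finset.sum_congr rfl
  intro x _
  by_cases hx : (x : ℕ) < k
  · rw [h x hx]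
  · simp [hx]

lemma dmat_succ (u : Equiv.Perm (Fin n)) {k : ℕ} (hk : k < n) (l : ℕ) :
    dmat u (k + 1) l = dmat u k l + if l ≤ (u ⟨k, hk⟩ : ℕ) then 1 else 0 := by
  unfold dmat
  rw [sum_split_one ⟨k, hk⟩, sum_split_one ⟨k, hk⟩ (fun x => if (x:ℕ) < k ∧ l ≤ (u x : ℕ) then 1 else 0)]
  have he : ∀ x ∈ Finset.univ.erase (⟨k, hk⟩ : Fin n),
      (if (x:ℕ) < k + 1 ∧ l ≤ (u x : ℕ) then (1:ℕ) else 0) =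
      (if (x:ℕ) < k ∧ l ≤ (u x : ℕ) then 1 else 0) := by
    intro x hx
    have : (x : ℕ) ≠ k := by
      intro hh; exact (Finset.mem_erase.1 hx).1 (Fin.ext hh)
    split_ifs <;> omega
  rw [Finset.sum_congr rfl he]
  simp only [Fin.val_mk]
  split_ifs <;> omega

lemma dmat_mul_swap (u : Equiv.Perm (Fin n)) {i j : Fin n} (hij : i < j) (huv : u i < u j)
    (k l : ℕ) :
    dmat (u * Equiv.swap i j) k l = dmat u k l +
      if (i:ℕ) < k ∧ k ≤ (j:ℕ) ∧ (u i : ℕ) < l ∧ l ≤ (u j : ℕ) then 1 else 0 := by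
  have hne : i ≠ j := Fin.ne_of_lt hij
  have hij' : (i:ℕ) < (j:ℕ) := hij
  have huv' : (u i : ℕ) < (u j : ℕ) := huv
  have h1 : dmat (u * Equiv.swap i j) k l =
      ∑ x : Fin n, if ((Equiv.swap i j x : Fin n) : ℕ) < k ∧ l ≤ (u x : ℕ) then 1 else 0 := by
    unfold dmat
    exact Fintype.sum_equiv (Equiv.swap i j) _ _
      (fun x => by simp [Equiv.Perm.mul_apply, Equiv.swap_apply_self]; congr)
  rw [h1]
  unfold dmat
  rw [sum_split_two hne (fun x => if ((Equiv.swap i j x : Fin n) : ℕ) < k ∧ l ≤ (u x:ℕ) then 1 else 0), sum_split_two hne (fun x => if (x:ℕ) < k ∧ l ≤ (u x:ℕ) then 1 else 0)]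
  have he : ∀ x ∈ (Finset.univ.erase i).erase j,
      (if ((Equiv.swap i j x : Fin n) : ℕ) < k ∧ l ≤ (u x : ℕ) then (1:ℕ) else 0) =
      (if (x:ℕ) < k ∧ l ≤ (u x : ℕ) then 1 else 0) := by
    intro x hx
    have hxj : x ≠ j := (Finset.mem_erase.1 hx).1
    have hxi : x ≠ i := (Finset.mem_erase.1 ((Finset.mem_erase.1 hx).2)).1
    rw [Equiv.swap_apply_of_ne_of_ne hxi hxj]
  rw [Finset.sum_congr rfl he, Equiv.swap_apply_left, Equiv.swap_apply_right]
  split_ifs <;> omega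

/-- E1 step -/
lemma dmat_le_of_cover {a b : Equiv.Perm (Fin n)}
    (h : (∃ i j : Fin n, i ≠ j ∧ b = a * Equiv.swap i j) ∧
      permLength b = permLength a + 1) (k l : ℕ) :
    dmat a k l ≤ dmat b k l := by
  obtain ⟨⟨i, j, hne, hb⟩, hlen⟩ := h
  -- wlog i < j
  rcases hne.lt_or_gt with hij | hij
  · subst hb
    have := cover_orient hij hlen
    rw [dmat_mul_swap a hij this k l]
    split_ifs <;> omega
  · rw [Equiv.swap_comm] at hb
    subst hb
    have := cover_orient hij hlen
    rw [dmat_mul_swap a hij this k l]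
    split_ifs <;> omega

lemma dmat_le_of_bruhatLE {u w : Equiv.Perm (Fin n)} (h : BruhatLE u w) (k l : ℕ) :
    dmat u k l ≤ dmat w k l := by
  induction h with
  | refl => exact le_refl _
  | tail _ hstep ih => exact le_trans ih (dmat_le_of_cover hstep k l)

lemma step_exists {u w : Equiv.Perm (Fin n)} (h : ∀ k l, dmat u k l ≤ dmat w k l)
    (hne : u ≠ w) :
    ∃ i j : Fin n, i < j ∧ u i < u j ∧ midcount u i j = 0 ∧
      (∀ k l, dmat (u * Equiv.swap i j) k l ≤ dmat w k l) := by
  classical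
  -- the first position where u and w differ
  have hDne : (Finset.univ.filter (fun x : Fin n => u x ≠ w x)).Nonempty := by
    by_contra hD
    apply hne
    rw [Finset.not_nonempty_iff_eq_empty, Finset.filter_eq_empty_iff] at hD
    exact Equiv.ext fun x => by_contra fun hx => hD (Finset.mem_univ x) hx
  set D := Finset.univ.filter (fun x : Fin n => u x ≠ w x) with hD
  set i := D.min' hDne with hi
  have hi_mem : i ∈ D := D.min'_mem hDne
  have hi_ne : u i ≠ w i := (Finset.mem_filter.1 hi_mem).2
  have hprefix : ∀ x : Fin n, (x : ℕ) < (i : ℕ) → u x = w x := by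
    intro x hx
    by_contra hux
    have : i ≤ x := Finset.min'_le D x (Finset.mem_filter.2 ⟨Finset.mem_univ x, hux⟩)
    rw [Fin.le_def] at this; omega
  -- u i < w i
  have hui_wi : (u i : ℕ) < (w i : ℕ) := by
    have hil : (i : ℕ) < n := i.isLt
    have h1 := h ((i : ℕ) + 1) (u i : ℕ)
    rw [dmat_succ u hil, dmat_succ w hil,
        dmat_congr_prefix (w := w) (fun x hx => hprefix x hx) (u i : ℕ)] at h1
    simp only [Fin.eta] at h1
    rw [if_pos (le_refl _)] at h1
    have h2 : (u i : ℕ) ≤ (w i : ℕ) := by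
      by_contra hc
      rw [if_neg (by omega)] at h1
      omega
    have h3 : (u i : ℕ) ≠ (w i : ℕ) := fun hh => hi_ne (by
      have := Fin.ext hh; exact this)
    omega
  -- the position j
  set J := Finset.univ.filter
    (fun x : Fin n => (i:ℕ) < (x:ℕ) ∧ (u i:ℕ) < (u x:ℕ) ∧ (u x:ℕ) ≤ (w i:ℕ)) with hJ
  have hJne : J.Nonempty := by
    refine ⟨u.symm (w i), Finset.mem_filter.2 ⟨Finset.mem_univ _, ?_, ?_, ?_⟩⟩
    · -- i < u.symm (w i)
      have hx0 : u (u.symm (w i)) = w i := u.apply_symm_apply (w i)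
      have hne0 : u.symm (w i) ≠ i := by
        intro hh; rw [hh] at hx0; exact hi_ne hx0
      have hnlt : ¬ ((u.symm (w i) : ℕ) < (i : ℕ)) := by
        intro hlt
        have := hprefix _ hlt
        rw [hx0] at this
        exact hne0 (w.injective this.symm)
      have : (u.symm (w i) : ℕ) ≠ (i : ℕ) := fun hh => hne0 (Fin.ext hh)
      omega
    · rw [u.apply_symm_apply]; exact hui_wi
    · rw [u.apply_symm_apply]
  set j := J.min' hJne with hj
  have hj_mem : j ∈ J := J.min'_mem hJne
  obtain ⟨-, hij, huij, hujwi⟩ := Finset.mem_filter.1 hj_mem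
  have hjmin : ∀ x : Fin n, (x:ℕ) < (j:ℕ) →
      ¬ ((i:ℕ) < (x:ℕ) ∧ (u i:ℕ) < (u x:ℕ) ∧ (u x:ℕ) ≤ (w i:ℕ)) := by
    intro x hx hmem
    have : j ≤ x := Finset.min'_le J x (Finset.mem_filter.2 ⟨Finset.mem_univ x, hmem⟩)
    rw [Fin.le_def] at this; omega
  have hij' : i < j := by rw [Fin.lt_def]; omega
  have huij' : u i < u j := by rw [Fin.lt_def]; omega
  refine ⟨i, j, hij', huij', ?_, ?_⟩
  · -- midcount = 0
    unfold midcount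
    rw [Finset.card_eq_zero, Finset.filter_eq_empty_iff]
    rintro x - ⟨h1, h2, h3, h4⟩
    rw [Fin.lt_def] at h1 h2 h3 h4
    exact hjmin x h2 ⟨h1, h3, by omega⟩
  · -- dominance
    intro k l
    rw [dmat_mul_swap u hij' huij' k l]
    split_ifs with hrect
    · obtain ⟨hik, hkj, huil, hluj⟩ := hrect
      have hik1 : (i:ℕ) + 1 ≤ k := hik
      have hin : (i:ℕ) < n := i.isLt
      have hluj' : l ≤ (w i : ℕ) := le_trans hluj hujwi
      -- prefix equality
      have hpre : ∀ l', dmat u (i:ℕ) l' = dmat w (i:ℕ) l' :=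
        fun l' => dmat_congr_prefix (fun x hx => hprefix x hx) l'
      -- u side
      have hu0 : dmat u ((i:ℕ)+1) l = dmat u (i:ℕ) l := by
        rw [dmat_succ u hin l]
        simp only [Fin.eta]
        rw [if_neg (by omega)]
        omega
      have hu1 : dmat u k l = dmat u (i:ℕ) l + mcount u ((i:ℕ)+1) k l := by
        rw [dmat_split u (a := (i:ℕ)+1) hik1 l, hu0]
      -- w side
      have hw0 : dmat w ((i:ℕ)+1) l = dmat w (i:ℕ) l + 1 := by
        rw [dmat_succ w hin l]
        simp only [Fin.eta]
        rw [if_pos (by omega)]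
      have hw1 : dmat w k l = dmat w (i:ℕ) l + 1 + mcount w ((i:ℕ)+1) k l := by
        rw [dmat_split w (a := (i:ℕ)+1) hik1 l, hw0]
      have claim1 : mcount u ((i:ℕ)+1) k l = mcount u ((i:ℕ)+1) k ((w i:ℕ)+1) := by
        unfold mcount
        apply Finset.sum_congr rfl
        intro x _
        by_cases hx : (i:ℕ)+1 ≤ (x:ℕ) ∧ (x:ℕ) < k
        · have hxj := hjmin x (by omega)
          split_ifs <;> omega
        · split_ifs <;> omega
      have claim2 : mcount u ((i:ℕ)+1) k ((w i:ℕ)+1) ≤ mcount w ((i:ℕ)+1) k ((w i:ℕ)+1) := by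
        have hh := h k ((w i:ℕ)+1)
        rw [dmat_split u (a := (i:ℕ)+1) hik1 _, dmat_split w (a := (i:ℕ)+1) hik1 _,
            dmat_succ u hin, dmat_succ w hin, hpre ((w i:ℕ)+1)] at hh
        simp only [Fin.eta] at hh
        rw [if_neg (by omega), if_neg (by omega)] at hh
        omega
      have claim3 : mcount w ((i:ℕ)+1) k ((w i:ℕ)+1) ≤ mcount w ((i:ℕ)+1) k l := by
        unfold mcount
        apply Finset.sum_le_sum
        intro x _
        split_ifs <;> omega
      rw [hpre l] at hu1
      omega
    · exact h k l

def Msum (u : Equiv.Perm (Fin n)) : ℕ :=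
  ∑ k ∈ Finset.range (n+1), ∑ l ∈ Finset.range (n+1), dmat u k l

lemma Msum_le {u v : Equiv.Perm (Fin n)} (h : ∀ k l, dmat u k l ≤ dmat v k l) :
    Msum u ≤ Msum v :=
  Finset.sum_le_sum (fun k _ => Finset.sum_le_sum (fun l _ => h k l))

lemma Msum_lt_step {u : Equiv.Perm (Fin n)} {i j : Fin n} (hij : i < j) (huv : u i < u j) :
    Msum u < Msum (u * Equiv.swap i j) := by
  have hform := dmat_mul_swap u hij huv
  have hk0 : (i:ℕ)+1 ∈ Finset.range (n+1) := Finset.mem_range.2 (by have := i.isLt; omega)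
  have hl0 : (u i:ℕ)+1 ∈ Finset.range (n+1) :=
    Finset.mem_range.2 (by have := (u i).isLt; omega)
  have hijn : (i:ℕ) < (j:ℕ) := hij
  have huvn : (u i:ℕ) < (u j:ℕ) := huv
  apply Finset.sum_lt_sum
  · intro k _
    apply Finset.sum_le_sum
    intro l _
    rw [hform k l]
    split_ifs <;> omega
  · refine ⟨(i:ℕ)+1, hk0, ?_⟩
    apply Finset.sum_lt_sum
    · intro l _
      rw [hform _ l]
      split_ifs <;> omega
    · refine ⟨(u i:ℕ)+1, hl0, ?_⟩
      rw [hform _ _, if_pos (by omega)]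
      omega

lemma bruhatLE_of_dmat_le {u w : Equiv.Perm (Fin n)} (h : ∀ k l, dmat u k l ≤ dmat w k l) :
    BruhatLE u w := by
  have main : ∀ (t : ℕ) (u : Equiv.Perm (Fin n)), (∀ k l, dmat u k l ≤ dmat w k l) →
      Msum w - Msum u ≤ t → BruhatLE u w := by
    intro t
    induction t with
    | zero =>
      intro u hu hm
      by_cases he : u = w
      · subst he; exact Relation.ReflTransGen.refl
      · exfalso
        obtain ⟨i, j, hij, huv, -, hd⟩ := step_exists hu he
        have h1 := Msum_lt_step hij huv
        have h2 := Msum_le hd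
        omega
    | succ t iht =>
      intro u hu hm
      by_cases he : u = w
      · subst he; exact Relation.ReflTransGen.refl
      · obtain ⟨i, j, hij, huv, hmid, hd⟩ := step_exists hu he
        have hlen : permLength (u * Equiv.swap i j) = permLength u + 1 := by
          rw [permLength_swap_formula u i j hij huv, hmid]
        have h1 := Msum_lt_step hij huv
        have h2 := Msum_le hd
        exact Relation.ReflTransGen.head
          ⟨⟨i, j, Fin.ne_of_lt hij, rfl⟩, hlen⟩
          (iht (u * Equiv.swap i j) hd (by omega))
  exact main (Msum w) u h (by omega)


variable {i₀ i₁ : Fin n}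

lemma swap_val0 (u : Equiv.Perm (Fin n)) : (u * Equiv.swap i₀ i₁) i₀ = u i₁ := by
  simp [Equiv.Perm.mul_apply]

lemma swap_val1 (u : Equiv.Perm (Fin n)) : (u * Equiv.swap i₀ i₁) i₁ = u i₀ := by
  simp [Equiv.Perm.mul_apply]

lemma mul_adj_ne (h01 : (i₁:ℕ) = (i₀:ℕ)+1) (u : Equiv.Perm (Fin n)) (k l : ℕ)
    (hk : k ≠ (i₀:ℕ)+1) : dmat (u * Equiv.swap i₀ i₁) k l = dmat u k l := by
  have hlt : i₀ < i₁ := by rw [Fin.lt_def]; omega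
  rcases lt_trichotomy (u i₀) (u i₁) with hc | hc | hc
  · rw [dmat_mul_swap u hlt hc k l, if_neg (by rintro ⟨a, b, -, -⟩; omega)]
    omega
  · exact absurd (u.injective hc) (Fin.ne_of_lt hlt)
  · have h2 : (u * Equiv.swap i₀ i₁) i₀ < (u * Equiv.swap i₀ i₁) i₁ := by
      rw [swap_val0, swap_val1]; exact hc
    have := dmat_mul_swap (u * Equiv.swap i₀ i₁) hlt h2 k l
    rw [mul_swap_swap] at this
    rw [this, if_neg (by rintro ⟨a, b, -, -⟩; omega)]
    omega

lemma dmat_col1 (u : Equiv.Perm (Fin n)) (l : ℕ) :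
    dmat u ((i₀:ℕ)+1) l = dmat u (i₀:ℕ) l + if l ≤ (u i₀ : ℕ) then 1 else 0 := by
  rw [dmat_succ u i₀.isLt l]

lemma dmat_col2 (h01 : (i₁:ℕ) = (i₀:ℕ)+1) (u : Equiv.Perm (Fin n)) (l : ℕ) :
    dmat u ((i₀:ℕ)+2) l = dmat u (i₀:ℕ) l + (if l ≤ (u i₀ : ℕ) then 1 else 0)
      + (if l ≤ (u i₁ : ℕ) then 1 else 0) := by
  have h1 : (i₀:ℕ)+1 < n := by have := i₁.isLt; omega
  have h2 : (⟨(i₀:ℕ)+1, h1⟩ : Fin n) = i₁ := Fin.ext (by simp [h01])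
  have := dmat_succ u h1 l
  rw [h2] at this
  rw [show (i₀:ℕ)+2 = ((i₀:ℕ)+1)+1 from rfl, this, dmat_col1]

lemma BI (h01 : (i₁:ℕ) = (i₀:ℕ)+1) {W : Equiv.Perm (Fin n)}
    (hdes : (W i₁:ℕ) < (W i₀:ℕ)) (k l : ℕ) :
    dmat (W * Equiv.swap i₀ i₁) k l ≤ dmat W k l := by
  by_cases hk : k = (i₀:ℕ)+1
  · subst hk
    rw [dmat_col1 (W * Equiv.swap i₀ i₁) l, dmat_col1 W l, swap_val0,
      mul_adj_ne h01 W _ l (by omega)]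
    split_ifs <;> omega
  · rw [mul_adj_ne h01 W k l hk]

lemma BII (h01 : (i₁:ℕ) = (i₀:ℕ)+1) {u W : Equiv.Perm (Fin n)}
    (hdes : (W i₁:ℕ) < (W i₀:ℕ))
    (h : ∀ k l, dmat (u * Equiv.swap i₀ i₁) k l ≤ dmat (W * Equiv.swap i₀ i₁) k l) :
    ∀ k l, dmat u k l ≤ dmat W k l := by
  intro k l
  by_cases hk : k = (i₀:ℕ)+1
  · subst hk
    have f1 := h (i₀:ℕ) l
    rw [mul_adj_ne h01 u _ l (by omega), mul_adj_ne h01 W _ l (by omega)] at f1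
    have f2 := h ((i₀:ℕ)+2) l
    rw [mul_adj_ne h01 u _ l (by omega), mul_adj_ne h01 W _ l (by omega),
      dmat_col2 h01 u l, dmat_col2 h01 W l] at f2
    have f3 := h ((i₀:ℕ)+1) l
    rw [dmat_col1 (u * Equiv.swap i₀ i₁) l, dmat_col1 (W * Equiv.swap i₀ i₁) l,
      swap_val0, swap_val0, mul_adj_ne h01 u _ l (by omega),
      mul_adj_ne h01 W _ l (by omega)] at f3
    rw [dmat_col1 u l, dmat_col1 W l]
    split_ifs at f2 f3 ⊢ <;> omega
  · have f := h k l
    rw [mul_adj_ne h01 u k l hk, mul_adj_ne h01 W k l hk] at f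
    exact f

lemma BIII (h01 : (i₁:ℕ) = (i₀:ℕ)+1) {u W : Equiv.Perm (Fin n)}
    (hdes : (W i₁:ℕ) < (W i₀:ℕ))
    (h : ∀ k l, dmat u k l ≤ dmat W k l) :
    (∀ k l, dmat u k l ≤ dmat (W * Equiv.swap i₀ i₁) k l) ∨
    (∀ k l, dmat (u * Equiv.swap i₀ i₁) k l ≤ dmat (W * Equiv.swap i₀ i₁) k l) := by
  by_cases hu : (u i₀ : ℕ) < (u i₁ : ℕ)
  · left
    intro k l
    by_cases hk : k = (i₀:ℕ)+1
    · subst hk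
      have f1 := h (i₀:ℕ) l
      have f2 := h ((i₀:ℕ)+2) l
      rw [dmat_col2 h01 u l, dmat_col2 h01 W l] at f2
      have f3 := h ((i₀:ℕ)+1) l
      rw [dmat_col1 u l, dmat_col1 W l] at f3
      rw [dmat_col1 u l, dmat_col1 (W * Equiv.swap i₀ i₁) l, swap_val0,
        mul_adj_ne h01 W _ l (by omega)]
      split_ifs at f2 f3 ⊢ <;> omega
    · rw [mul_adj_ne h01 W k l hk]; exact h k l
  · right
    have hne01 : i₀ ≠ i₁ := by
      intro hh
      rw [hh] at h01
      omega
    have hu' : (u i₁ : ℕ) < (u i₀ : ℕ) := by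
      have h1 : u i₀ ≠ u i₁ := fun hh => hne01 (u.injective hh)
      have h2 : (u i₀:ℕ) ≠ (u i₁:ℕ) := fun hh => h1 (Fin.ext hh)
      omega
    intro k l
    by_cases hk : k = (i₀:ℕ)+1
    · subst hk
      have f1 := h (i₀:ℕ) l
      have f2 := h ((i₀:ℕ)+2) l
      rw [dmat_col2 h01 u l, dmat_col2 h01 W l] at f2
      have f3 := h ((i₀:ℕ)+1) l
      rw [dmat_col1 u l, dmat_col1 W l] at f3
      rw [dmat_col1 (u * Equiv.swap i₀ i₁) l, dmat_col1 (W * Equiv.swap i₀ i₁) l,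
        swap_val0, swap_val0, mul_adj_ne h01 u _ l (by omega),
        mul_adj_ne h01 W _ l (by omega)]
      split_ifs at f2 f3 ⊢ <;> omega
    · rw [mul_adj_ne h01 u k l hk, mul_adj_ne h01 W k l hk]; exact h k l

lemma Basc (h01 : (i₁:ℕ) = (i₀:ℕ)+1) {u : Equiv.Perm (Fin n)}
    (hasc : u i₀ < u i₁) (k l : ℕ) :
    dmat u k l ≤ dmat (u * Equiv.swap i₀ i₁) k l := by
  rw [dmat_mul_swap u (by rw [Fin.lt_def]; omega) hasc k l]
  split_ifs <;> omega


/-- a minimal sorter is increasing on the blocks of `β` -/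
lemma blockInc_of_min {lam β : Fin n → ℕ} {u : Equiv.Perm (Fin n)}
    (hs : ∀ i, lam (u i) = β i)
    (hmin : ∀ τ : Equiv.Perm (Fin n), (∀ i, lam (τ i) = β i) → permLength u ≤ permLength τ)
    {i j : Fin n} (hij : i < j) (hb : β i = β j) : u i < u j := by
  rcases lt_trichotomy (u i) (u j) with hc | hc | hc
  · exact hc
  · exact absurd (u.injective hc) (Fin.ne_of_lt hij)
  · exfalso
    set v := u * Equiv.swap i j with hv
    have hvi : v i = u j := by simp [hv, Equiv.Perm.mul_apply]
    have hvj : v j = u i := by simp [hv, Equiv.Perm.mul_apply]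
    have hvsorts : ∀ x, lam (v x) = β x := by
      intro x
      rcases eq_or_ne x i with rfl | hxi
      · rw [hvi, hs j, hb]
      · rcases eq_or_ne x j with rfl | hxj
        · rw [hvj, hs i, hb]
        · rw [hv, Equiv.Perm.mul_apply, Equiv.swap_apply_of_ne_of_ne hxi hxj, hs x]
    have hform := permLength_swap_formula v i j hij (by rw [hvi, hvj]; exact hc)
    have hvs : v * Equiv.swap i j = u := by rw [hv, mul_swap_swap]
    rw [hvs] at hform
    have := hmin v hvsorts
    omega

/-- a strictly monotone bijection between two finite sets of `Fin n` is unique -/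
lemma mono_bij_unique : ∀ (N : ℕ) (A L : Finset (Fin n)) (f g : Fin n → Fin n),
    A.card = N →
    (∀ x ∈ A, f x ∈ L) → (∀ x ∈ A, g x ∈ L) →
    (∀ t ∈ L, ∃ x ∈ A, f x = t) → (∀ t ∈ L, ∃ x ∈ A, g x = t) →
    (∀ x ∈ A, ∀ y ∈ A, x < y → f x < f y) → (∀ x ∈ A, ∀ y ∈ A, x < y → g x < g y) →
    ∀ x ∈ A, f x = g x := by
  intro N
  induction N with
  | zero =>
    intro A L f g hcard _ _ _ _ _ _ x hx
    rw [Finset.card_eq_zero] at hcard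
    subst hcard
    exact absurd hx (Finset.notMem_empty x)
  | succ N ih =>
    intro A L f g hcard hfm hgm hfs hgs hfmono hgmono x hx
    have hAne : A.Nonempty := ⟨x, hx⟩
    set a := A.min' hAne with ha
    have haA : a ∈ A := A.min'_mem hAne
    have hLne : L.Nonempty := ⟨f a, hfm a haA⟩
    -- f a = L.min' = g a
    have hkey : ∀ (f : Fin n → Fin n), (∀ x ∈ A, f x ∈ L) → (∀ t ∈ L, ∃ x ∈ A, f x = t) →
        (∀ x ∈ A, ∀ y ∈ A, x < y → f x < f y) → f a = L.min' hLne := by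
      intro f hfm hfs hfmono
      have h1 : L.min' hLne ≤ f a := L.min'_le _ (hfm a haA)
      obtain ⟨y, hyA, hy⟩ := hfs (L.min' hLne) (L.min'_mem hLne)
      have hay : a ≤ y := by rw [ha]; exact A.min'_le y hyA
      rcases eq_or_lt_of_le hay with hya | hya
      · rw [hya]; exact hy
      · have := hfmono a haA y hyA hya
        rw [hy] at this
        exact absurd h1 (not_le.2 this)
    have hfa := hkey f hfm hfs hfmono
    have hga := hkey g hgm hgs hgmono
    -- recurse on A.erase a, L.erase min
    set A' := A.erase a with hA'
    set L' := L.erase (L.min' hLne) with hL'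
    have hinj : ∀ (f : Fin n → Fin n), (∀ x ∈ A, ∀ y ∈ A, x < y → f x < f y) →
        ∀ x ∈ A, ∀ y ∈ A, f x = f y → x = y := by
      intro f hfmono x hxA y hyA hxy
      rcases lt_trichotomy x y with hc | hc | hc
      · exact absurd hxy (Fin.ne_of_lt (hfmono x hxA y hyA hc))
      · exact hc
      · exact absurd hxy.symm (Fin.ne_of_lt (hfmono y hyA x hxA hc))
    have hrec := ih A' L' f g
      (by rw [hA', Finset.card_erase_of_mem haA, hcard]; omega)
      (by
        intro y hy
        have hyA := Finset.mem_of_mem_erase hy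
        have hyne : y ≠ a := (Finset.mem_erase.1 hy).1
        refine Finset.mem_erase.2 ⟨?_, hfm y hyA⟩
        rw [← hfa]
        exact fun hh => hyne (hinj f hfmono y hyA a haA hh))
      (by
        intro y hy
        have hyA := Finset.mem_of_mem_erase hy
        have hyne : y ≠ a := (Finset.mem_erase.1 hy).1
        refine Finset.mem_erase.2 ⟨?_, hgm y hyA⟩
        rw [← hga]
        exact fun hh => hyne (hinj g hgmono y hyA a haA hh))
      (by
        intro t ht
        obtain ⟨y, hyA, hy⟩ := hfs t (Finset.mem_of_mem_erase ht)
        refine ⟨y, Finset.mem_erase.2 ⟨?_, hyA⟩, hy⟩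
        intro hh
        rw [hh, hfa] at hy
        exact (Finset.mem_erase.1 ht).1 hy.symm)
      (by
        intro t ht
        obtain ⟨y, hyA, hy⟩ := hgs t (Finset.mem_of_mem_erase ht)
        refine ⟨y, Finset.mem_erase.2 ⟨?_, hyA⟩, hy⟩
        intro hh
        rw [hh, hga] at hy
        exact (Finset.mem_erase.1 ht).1 hy.symm)
      (fun x hx y hy hxy => hfmono x (Finset.mem_of_mem_erase hx) y (Finset.mem_of_mem_erase hy) hxy)
      (fun x hx y hy hxy => hgmono x (Finset.mem_of_mem_erase hx) y (Finset.mem_of_mem_erase hy) hxy)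
    rcases eq_or_ne x a with rfl | hxa
    · rw [hfa, hga]
    · exact hrec x (Finset.mem_erase.2 ⟨hxa, hx⟩)

/-- block-increasing sorters are unique -/
lemma sorter_unique {lam β : Fin n → ℕ} {u v : Equiv.Perm (Fin n)}
    (hsu : ∀ i, lam (u i) = β i) (hbu : ∀ i j : Fin n, i < j → β i = β j → u i < u j)
    (hsv : ∀ i, lam (v i) = β i) (hbv : ∀ i j : Fin n, i < j → β i = β j → v i < v j) :
    u = v := by
  apply Equiv.ext
  intro x
  set A := Finset.univ.filter (fun y : Fin n => β y = β x) with hA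
  set L := Finset.univ.filter (fun t : Fin n => lam t = β x) with hL
  have hxA : x ∈ A := Finset.mem_filter.2 ⟨Finset.mem_univ x, rfl⟩
  refine mono_bij_unique A.card A L u v rfl ?_ ?_ ?_ ?_ ?_ ?_ x hxA
  · intro y hy
    refine Finset.mem_filter.2 ⟨Finset.mem_univ _, ?_⟩
    rw [hsu y, (Finset.mem_filter.1 hy).2]
  · intro y hy
    refine Finset.mem_filter.2 ⟨Finset.mem_univ _, ?_⟩
    rw [hsv y, (Finset.mem_filter.1 hy).2]
  · intro t ht
    refine ⟨u.symm t, Finset.mem_filter.2 ⟨Finset.mem_univ _, ?_⟩, u.apply_symm_apply t⟩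
    have h2 := hsu (u.symm t)
    rw [u.apply_symm_apply] at h2
    rw [← h2]
    exact (Finset.mem_filter.1 ht).2
  · intro t ht
    refine ⟨v.symm t, Finset.mem_filter.2 ⟨Finset.mem_univ _, ?_⟩, v.apply_symm_apply t⟩
    have h2 := hsv (v.symm t)
    rw [v.apply_symm_apply] at h2
    rw [← h2]
    exact (Finset.mem_filter.1 ht).2
  · intro y hy z hz hyz
    exact hbu y z hyz (by rw [(Finset.mem_filter.1 hy).2, (Finset.mem_filter.1 hz).2])
  · intro y hy z hz hyz
    exact hbv y z hyz (by rw [(Finset.mem_filter.1 hy).2, (Finset.mem_filter.1 hz).2])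

/-- existence of a minimal sorter -/
lemma exists_min_sorter {lam β : Fin n → ℕ} (h : ∃ τ : Equiv.Perm (Fin n), ∀ i, lam (τ i) = β i) :
    ∃ u : Equiv.Perm (Fin n), (∀ i, lam (u i) = β i) ∧
      ∀ τ : Equiv.Perm (Fin n), (∀ i, lam (τ i) = β i) → permLength u ≤ permLength τ := by
  classical
  obtain ⟨τ₀, hτ₀⟩ := h
  set T := Finset.univ.filter (fun τ : Equiv.Perm (Fin n) => ∀ i, lam (τ i) = β i) with hT
  have hTne : T.Nonempty := ⟨τ₀, Finset.mem_filter.2 ⟨Finset.mem_univ _, hτ₀⟩⟩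
  obtain ⟨u, huT, humin⟩ := Finset.exists_min_image T permLength hTne
  exact ⟨u, (Finset.mem_filter.1 huT).2,
    fun τ hτ => humin τ (Finset.mem_filter.2 ⟨Finset.mem_univ _, hτ⟩)⟩

/-- transfer of block-increasing sorters along an adjacent swap -/
lemma blockInc_transfer {lam β γ : Fin n → ℕ} {i₀ i₁ : Fin n} (h01 : (i₁:ℕ) = (i₀:ℕ)+1)
    {v : Equiv.Perm (Fin n)}
    (hβγ : ∀ i, β i = γ (Equiv.swap i₀ i₁ i)) (hne : γ i₀ ≠ γ i₁)
    (hsv : ∀ i, lam (v i) = γ i)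
    (hbv : ∀ i j : Fin n, i < j → γ i = γ j → v i < v j) :
    (∀ i, lam ((v * Equiv.swap i₀ i₁) i) = β i) ∧
      (∀ i j : Fin n, i < j → β i = β j → (v * Equiv.swap i₀ i₁) i < (v * Equiv.swap i₀ i₁) j) := by
  constructor
  · intro i
    rw [Equiv.Perm.mul_apply, hsv, hβγ]
  · intro i j hij hb
    rw [hβγ, hβγ] at hb
    rcases Decidable.em (i = i₀ ∧ j = i₁) with ⟨rfl, rfl⟩ | hcase
    · rw [Equiv.swap_apply_left, Equiv.swap_apply_right] at hb
      exact absurd hb.symm hne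
    · have hcase2 : ¬(i = i₁ ∧ j = i₀) := by
        rintro ⟨rfl, rfl⟩
        rw [Fin.lt_def] at hij; omega
      have horder : Equiv.swap i₀ i₁ i < Equiv.swap i₀ i₁ j :=
        (adj_swap_order h01 hcase hcase2).2 hij
      exact hbv _ _ horder hb


lemma midcount_adj_zero {i₀ i₁ : Fin n} (h01 : (i₁:ℕ) = (i₀:ℕ)+1) (u : Equiv.Perm (Fin n)) :
    midcount u i₀ i₁ = 0 := by
  unfold midcount
  rw [Finset.card_eq_zero, Finset.filter_eq_empty_iff]
  rintro x - ⟨h1, h2, -⟩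
  rw [Fin.lt_def] at h1 h2
  omega

end VAux

open VAux in
/-- If `α_r < α_{r+1}` and `α' = α·s_r`, then
`V(α) = V(α') ∪ {v·s_r : v ∈ V(α')}`. -/
theorem Vset_decomposition (n r : ℕ) (hr : r + 1 < n)
    (α α' lam : Fin n → ℕ) (hanti : Antitone lam)
    (s : Equiv.Perm (Fin n))
    (hs : s = Equiv.swap ⟨r, Nat.lt_of_succ_lt hr⟩ ⟨r + 1, hr⟩)
    (hlt : α ⟨r, Nat.lt_of_succ_lt hr⟩ < α ⟨r + 1, hr⟩)
    (hα' : ∀ i, α' i = α (s i))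
    (wα : Equiv.Perm (Fin n)) (hwα : ∀ i, lam (wα i) = α i)
    (hmin : ∀ τ : Equiv.Perm (Fin n), (∀ i, lam (τ i) = α i) →
      permLength wα ≤ permLength τ)
    (wα' : Equiv.Perm (Fin n)) (hwα' : ∀ i, lam (wα' i) = α' i)
    (hmin' : ∀ τ : Equiv.Perm (Fin n), (∀ i, lam (τ i) = α' i) →
      permLength wα' ≤ permLength τ) :
    Vset lam wα = Vset lam wα' ∪ {β | ∃ v ∈ Vset lam wα', β = fun i => v (s i)} := by
  subst hs
  set i₀ : Fin n := ⟨r, Nat.lt_of_succ_lt hr⟩ with hi₀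
  set i₁ : Fin n := ⟨r + 1, hr⟩ with hi₁
  have h01 : (i₁ : ℕ) = (i₀ : ℕ) + 1 := rfl
  have hlt01 : i₀ < i₁ := by rw [Fin.lt_def]; omega
  have hsl : Equiv.swap i₀ i₁ i₀ = i₁ := Equiv.swap_apply_left i₀ i₁
  have hsr : Equiv.swap i₀ i₁ i₁ = i₀ := Equiv.swap_apply_right i₀ i₁
  have hssi : ∀ x, Equiv.swap i₀ i₁ (Equiv.swap i₀ i₁ x) = x :=
    fun x => Equiv.swap_apply_self i₀ i₁ x
  -- descent of wα
  have hWdes : wα i₁ < wα i₀ := by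
    have h1 : lam (wα i₀) < lam (wα i₁) := by rw [hwα i₀, hwα i₁]; exact hlt
    by_contra hc
    push_neg at hc
    exact absurd (hanti hc) (by omega)
  have hWdes' : (wα i₁ : ℕ) < (wα i₀ : ℕ) := hWdes
  -- ascent of wα'
  have hW'asc : wα' i₀ < wα' i₁ := by
    have h1 : lam (wα' i₁) < lam (wα' i₀) := by
      rw [hwα' i₀, hwα' i₁, hα' i₀, hα' i₁, hsl, hsr]; exact hlt
    by_contra hc
    push_neg at hc
    exact absurd (hanti hc) (by omega)
  -- sorting properties across the swap
  have hW's_sorts : ∀ i, lam ((wα' * Equiv.swap i₀ i₁) i) = α i := by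
    intro i
    rw [Equiv.Perm.mul_apply, hwα', hα', hssi]
  have hWs_sorts : ∀ i, lam ((wα * Equiv.swap i₀ i₁) i) = α' i := by
    intro i
    rw [Equiv.Perm.mul_apply, hwα, ← hα']
  -- length bookkeeping
  have hlen1 : permLength wα = permLength (wα * Equiv.swap i₀ i₁) + 1 := by
    have hasc : (wα * Equiv.swap i₀ i₁) i₀ < (wα * Equiv.swap i₀ i₁) i₁ := by
      rw [swap_val0, swap_val1]; exact hWdes
    have := permLength_swap_formula (wα * Equiv.swap i₀ i₁) i₀ i₁ hlt01 hasc
    rw [mul_swap_swap, midcount_adj_zero h01] at this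
    omega
  have hlen2 : permLength (wα' * Equiv.swap i₀ i₁) = permLength wα' + 1 := by
    have := permLength_swap_formula wα' i₀ i₁ hlt01 hW'asc
    rw [midcount_adj_zero h01] at this
    omega
  have hle1 : permLength wα' ≤ permLength (wα * Equiv.swap i₀ i₁) := hmin' _ hWs_sorts
  have hle2 : permLength wα ≤ permLength (wα' * Equiv.swap i₀ i₁) := hmin _ hW's_sorts
  have hW'smin : ∀ τ : Equiv.Perm (Fin n), (∀ i, lam (τ i) = α i) →
      permLength (wα' * Equiv.swap i₀ i₁) ≤ permLength τ := by
    intro τ hτ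
    have := hmin τ hτ
    omega
  -- wα = wα' * s
  have hWs' : wα = wα' * Equiv.swap i₀ i₁ :=
    sorter_unique hwα (fun i j a b => blockInc_of_min hwα hmin a b)
      hW's_sorts (fun i j a b => blockInc_of_min hW's_sorts hW'smin a b)
  have hWs2 : wα * Equiv.swap i₀ i₁ = wα' := by rw [hWs', mul_swap_swap]
  -- the two directions
  ext β
  simp only [Vset, Set.mem_union, Set.mem_setOf_eq]
  constructor
  · rintro ⟨⟨τ, hτ⟩, hall⟩
    obtain ⟨u, hu_s, hu_min⟩ := exists_min_sorter ⟨τ, fun i => (hτ i).symm⟩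
    have hu_bru : BruhatLE u wα := hall u ⟨hu_s, hu_min⟩
    have hd : ∀ k l, dmat u k l ≤ dmat wα k l := fun k l => dmat_le_of_bruhatLE hu_bru k l
    rcases BIII h01 hWdes' hd with hL | hR
    · -- β ∈ V(α')
      left
      refine ⟨⟨τ, hτ⟩, ?_⟩
      rintro wβ ⟨hws, hwm⟩
      have hwu : wβ = u := sorter_unique hws (fun i j a b => blockInc_of_min hws hwm a b)
        hu_s (fun i j a b => blockInc_of_min hu_s hu_min a b)
      subst hwu
      apply bruhatLE_of_dmat_le
      intro k l
      have := hL k l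
      rwa [hWs2] at this
    · by_cases hββ : β i₀ = β i₁
      · -- still β ∈ V(α') via the ascent of u
        left
        refine ⟨⟨τ, hτ⟩, ?_⟩
        rintro wβ ⟨hws, hwm⟩
        have hwu : wβ = u := sorter_unique hws (fun i j a b => blockInc_of_min hws hwm a b)
          hu_s (fun i j a b => blockInc_of_min hu_s hu_min a b)
        subst hwu
        apply bruhatLE_of_dmat_le
        intro k l
        have h1 : wβ i₀ < wβ i₁ := blockInc_of_min hu_s hu_min hlt01 hββ
        have h2 := Basc h01 h1 k l
        have h3 := hR k l
        rw [hWs2] at h3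
        omega
      · -- β = γ ∘ s with γ ∈ V(α')
        right
        refine ⟨fun i => β (Equiv.swap i₀ i₁ i), ⟨⟨τ * Equiv.swap i₀ i₁, fun i => hτ _⟩, ?_⟩,
          funext fun i => by simp only [hssi]⟩
        rintro wβ ⟨hws, hwm⟩
        obtain ⟨hsus, hbus⟩ := blockInc_transfer (lam := lam) h01
          (fun i => rfl) hββ hu_s (fun i j a b => blockInc_of_min hu_s hu_min a b)
        have hwu : wβ = u * Equiv.swap i₀ i₁ :=
          sorter_unique hws (fun i j a b => blockInc_of_min hws hwm a b) hsus hbus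
        subst hwu
        apply bruhatLE_of_dmat_le
        intro k l
        have := hR k l
        rwa [hWs2] at this
  · rintro (⟨⟨τ, hτ⟩, hall'⟩ | ⟨γ, ⟨⟨τγ, hτγ⟩, hallγ⟩, hβeq⟩)
    · -- V(α') ⊆ V(α)
      refine ⟨⟨τ, hτ⟩, ?_⟩
      rintro wβ ⟨hws, hwm⟩
      have h1 : BruhatLE wβ wα' := hall' wβ ⟨hws, hwm⟩
      apply bruhatLE_of_dmat_le
      intro k l
      have h2 := dmat_le_of_bruhatLE h1 k l
      have h3 := BI h01 hWdes' k l
      rw [hWs2] at h3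
      omega
    · -- the image part
      subst hβeq
      refine ⟨⟨τγ * Equiv.swap i₀ i₁, fun i => hτγ _⟩, ?_⟩
      rintro wβ ⟨hws, hwm⟩
      by_cases hγγ : γ i₀ = γ i₁
      · -- γ ∘ s = γ
        have hγs : ∀ i, γ (Equiv.swap i₀ i₁ i) = γ i := by
          intro i
          rcases eq_or_ne i i₀ with rfl | h1
          · rw [hsl]; exact hγγ.symm
          · rcases eq_or_ne i i₁ with rfl | h2
            · rw [hsr]; exact hγγ
            · rw [Equiv.swap_apply_of_ne_of_ne h1 h2]
        have hws' : ∀ i, lam (wβ i) = γ i := fun i => (hws i).trans (hγs i)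
        have hwm' : ∀ τ : Equiv.Perm (Fin n), (∀ i, lam (τ i) = γ i) →
            permLength wβ ≤ permLength τ :=
          fun τ hτ2 => hwm τ (fun i => (hτ2 i).trans (hγs i).symm)
        have h1 : BruhatLE wβ wα' := hallγ wβ ⟨hws', hwm'⟩
        apply bruhatLE_of_dmat_le
        intro k l
        have h2 := dmat_le_of_bruhatLE h1 k l
        have h3 := BI h01 hWdes' k l
        rw [hWs2] at h3
        omega
      · obtain ⟨v, hv_s, hv_min⟩ := exists_min_sorter ⟨τγ, fun i => (hτγ i).symm⟩
        have hv_bru : BruhatLE v wα' := hallγ v ⟨hv_s, hv_min⟩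
        obtain ⟨hsvs, hbvs⟩ := blockInc_transfer (lam := lam) h01
          (fun i => rfl) hγγ hv_s (fun i j a b => blockInc_of_min hv_s hv_min a b)
        have hwv : wβ = v * Equiv.swap i₀ i₁ :=
          sorter_unique hws (fun i j a b => blockInc_of_min hws hwm a b) hsvs hbvs
        apply bruhatLE_of_dmat_le
        apply BII h01 hWdes'
        intro k l
        rw [hwv, mul_swap_swap, hWs2]
        exact dmat_le_of_bruhatLE hv_bru k l
end

section
/- Let α be a composition with α_r < α_{r+1}, and let w ∈ S_n be a permutation in which the value r appears before the value r+1 (i.e., w^{-1}(r) < w^{-1}(r+1)). Then x(w) = x(s_r w)·s_r, where x(w) is the vertex vector of the Schubitope S_{D(α)} counting appearances of each value in the greedy filling F_w(D(α)), s_r w swaps the values r and r+1 in w, and v·s_r swaps coordinates r and r+1 of v. -/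
/-- Column `j` (0-indexed) of the skyline diagram of `α`. -/
def skyCol {n : ℕ} (α : Fin n → ℕ) (j : Fin n) : Finset (Fin n) :=
  Finset.univ.filter (fun i => (j : ℕ) < α i)

/-- One greedy step on a column `C`: place `v` into the topmost empty box of
`C` with row index `≥ v`, skipping if none exists. -/
def fillStep {n : ℕ} (C : Finset (Fin n)) (st : Finset (Fin n × Fin n)) (v : Fin n) :
    Finset (Fin n × Fin n) :=
  let avail := (C \ st.image Prod.fst).filter (fun i => v ≤ i)
  if h : avail.Nonempty then insert (avail.min' h, v) st else st

/-- The greedy filling `F_w(C)` of a column `C` by the one-line word of `w`. -/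
def fillCol {n : ℕ} (C : Finset (Fin n)) (w : Equiv.Perm (Fin n)) :
    Finset (Fin n × Fin n) :=
  ((List.finRange n).map w).foldl (fillStep C) ∅

/-- `x(w)_k` = number of appearances of the value `k` in `F_w(D(α))`. -/
def xvec {n : ℕ} (α : Fin n → ℕ) (w : Equiv.Perm (Fin n)) : Fin n → ℕ :=
  fun k => ∑ j : Fin n, ((fillCol (skyCol α j) w).filter (fun p => p.2 = k)).card

namespace XAux

variable {n : ℕ}

/-- occupied rows -/
def occ (st : Finset (Fin n × Fin n)) : Finset (Fin n) := st.image Prod.fst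

/-- count of value k -/
def cnt (st : Finset (Fin n × Fin n)) (k : Fin n) : ℕ :=
  (st.filter (fun p => p.2 = k)).card

/-- available boxes -/
def avail (C : Finset (Fin n)) (st : Finset (Fin n × Fin n)) (v : Fin n) :
    Finset (Fin n) := (C \ occ st).filter (fun i => v ≤ i)

lemma fillStep_eq (C : Finset (Fin n)) (st : Finset (Fin n × Fin n)) (v : Fin n) :
    fillStep C st v =
      if h : (avail C st v).Nonempty then insert ((avail C st v).min' h, v) st else st := rfl

lemma mem_avail {C : Finset (Fin n)} {st : Finset (Fin n × Fin n)} {v i : Fin n} :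
    i ∈ avail C st v ↔ i ∈ C ∧ i ∉ occ st ∧ v ≤ i := by
  simp [avail, Finset.mem_filter, Finset.mem_sdiff, and_assoc]

lemma avail_congr {C : Finset (Fin n)} {st st' : Finset (Fin n × Fin n)}
    (h : occ st = occ st') (v : Fin n) : avail C st v = avail C st' v := by
  simp [avail, h]

lemma occ_insert (p : Fin n × Fin n) (st : Finset (Fin n × Fin n)) :
    occ (insert p st) = insert p.1 (occ st) := Finset.image_insert _ p st

lemma occ_subset_fillStep (C : Finset (Fin n)) (st : Finset (Fin n × Fin n)) (v : Fin n) :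
    occ st ⊆ occ (fillStep C st v) := by
  rw [fillStep_eq]
  split
  · rw [occ_insert]; exact Finset.subset_insert _ _
  · exact subset_rfl

lemma cnt_insert {m v : Fin n} {st : Finset (Fin n × Fin n)} (h : m ∉ occ st) (k : Fin n) :
    cnt (insert (m, v) st) k = cnt st k + if v = k then 1 else 0 := by
  have hnm : (m, v) ∉ st := fun hmem => h (Finset.mem_image_of_mem Prod.fst hmem)
  unfold cnt
  rw [Finset.filter_insert]
  by_cases hvk : v = k
  · rw [if_pos hvk, if_pos hvk,
      Finset.card_insert_of_notMem (fun hc => hnm (Finset.mem_of_mem_filter _ hc))]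
  · rw [if_neg hvk, if_neg hvk, Nat.add_zero]

lemma cnt_eq_zero_iff {st : Finset (Fin n × Fin n)} {k : Fin n} :
    cnt st k = 0 ↔ ∀ p ∈ st, p.2 ≠ k := by
  unfold cnt
  rw [Finset.card_eq_zero, Finset.filter_eq_empty_iff]

lemma min'_eq {S : Finset (Fin n)} (h : S.Nonempty) {m : Fin n} (hm : m ∈ S)
    (hall : ∀ x ∈ S, m ≤ x) : S.min' h = m :=
  le_antisymm (Finset.min'_le S m hm) (Finset.le_min' S h m hall)

end XAux


namespace XAux

variable {n : ℕ} {C : Finset (Fin n)} {a b : Fin n}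

lemma ne_ab (hab : (a : ℕ) + 1 = (b : ℕ)) : a ≠ b := by
  intro h; rw [h] at hab; omega

lemma lt_ab (hab : (a : ℕ) + 1 = (b : ℕ)) : a < b := by
  rw [Fin.lt_def]; omega

lemma b_le_of_lt (hab : (a : ℕ) + 1 = (b : ℕ)) {v : Fin n} (h : a < v) : b ≤ v := by
  rw [Fin.lt_def] at h; rw [Fin.le_def]; omega

lemma le_a_of_lt (hab : (a : ℕ) + 1 = (b : ℕ)) {v : Fin n} (h : v < b) : v ≤ a := by
  rw [Fin.lt_def] at h; rw [Fin.le_def]; omega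

lemma swap_sq (k : Fin n) : Equiv.swap a b (Equiv.swap a b k) = k := Equiv.swap_apply_self a b k

lemma eq_a_swap_iff (k : Fin n) : a = Equiv.swap a b k ↔ b = k := by
  constructor
  · intro h
    have := congrArg (Equiv.swap a b) h
    rwa [swap_sq, Equiv.swap_apply_left] at this
  · rintro rfl; rw [Equiv.swap_apply_right]

lemma eq_b_swap_iff (k : Fin n) : b = Equiv.swap a b k ↔ a = k := by
  constructor
  · intro h
    have := congrArg (Equiv.swap a b) h
    rwa [swap_sq, Equiv.swap_apply_right] at this
  · rintro rfl; rw [Equiv.swap_apply_left]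

lemma swap_fix_iff {v : Fin n} (hv : v ≠ a) (hv' : v ≠ b) (k : Fin n) :
    v = k ↔ v = Equiv.swap a b k := by
  constructor
  · rintro rfl; exact (Equiv.swap_apply_of_ne_of_ne hv hv').symm ▸ (by
      rw [← swap_sq (a := a) (b := b) v, Equiv.swap_apply_of_ne_of_ne hv hv'])
  · intro h
    rcases eq_or_ne k a with rfl | hka
    · rw [Equiv.swap_apply_left] at h; exact absurd h hv'
    · rcases eq_or_ne k b with rfl | hkb
      · rw [Equiv.swap_apply_right] at h; exact absurd h hv
      · rwa [Equiv.swap_apply_of_ne_of_ne hka hkb] at h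

lemma cnt_swap_base {u : Finset (Fin n × Fin n)} (ha : cnt u a = 0) (hb : cnt u b = 0)
    (k : Fin n) : cnt u k = cnt u (Equiv.swap a b k) := by
  rcases eq_or_ne k a with rfl | hka
  · rw [Equiv.swap_apply_left, ha, hb]
  · rcases eq_or_ne k b with rfl | hkb
    · rw [Equiv.swap_apply_right, ha, hb]
    · rw [Equiv.swap_apply_of_ne_of_ne hka hkb]

/-- Phase-2 invariant. -/
def Rgen (C : Finset (Fin n)) (a b : Fin n)
    (st st' : Finset (Fin n × Fin n)) : Prop :=
  occ st = occ st' ∧ (a ∈ C → a ∈ occ st) ∧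
    ∀ k, cnt st k = cnt st' (Equiv.swap a b k)

/-- Phase-1 invariant (case B, before merging). -/
def R2 (C : Finset (Fin n)) (a b : Fin n)
    (st st' : Finset (Fin n × Fin n)) : Prop :=
  ∃ u, st = insert (a, a) u ∧ st' = insert (b, b) u ∧
    a ∉ occ u ∧ b ∉ occ u ∧ a ∈ C ∧ b ∈ C ∧ cnt u a = 0 ∧ cnt u b = 0

/-- Phase-0 invariant: structural facts about greedy fillings by words
avoiding the values `a` and `b`. -/
def P0 (C : Finset (Fin n)) (a b : Fin n) (st : Finset (Fin n × Fin n)) : Prop :=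
  (∀ p ∈ st, p.2 ≤ p.1) ∧
  (∀ p ∈ st, ∀ e, e ∈ C → p.2 ≤ e → e < p.1 → e ∈ occ st) ∧
  cnt st a = 0 ∧ cnt st b = 0

lemma P0_init : P0 C a b (∅ : Finset (Fin n × Fin n)) := by
  refine ⟨by simp, by simp, ?_, ?_⟩ <;> simp [cnt]

lemma P0_step {v : Fin n} (hv : v ≠ a) (hv' : v ≠ b) {st : Finset (Fin n × Fin n)}
    (h : P0 C a b st) : P0 C a b (fillStep C st v) := by
  obtain ⟨h1, h2, h3, h4⟩ := h
  rw [fillStep_eq]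
  split
  case isFalse => exact ⟨h1, h2, h3, h4⟩
  case isTrue hne =>
    set m := (avail C st v).min' hne with hm
    have hmem : m ∈ avail C st v := (avail C st v).min'_mem hne
    rw [mem_avail] at hmem
    obtain ⟨hmC, hmocc, hvm⟩ := hmem
    refine ⟨?_, ?_, ?_, ?_⟩
    · intro p hp
      rcases Finset.mem_insert.1 hp with rfl | hp
      · exact hvm
      · exact h1 p hp
    · intro p hp e heC hle hlt
      rw [occ_insert]
      rcases Finset.mem_insert.1 hp with rfl | hp
      · -- p = (m, v)
        by_cases heo : e ∈ occ st
        · exact Finset.mem_insert_of_mem heo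
        · exfalso
          have : e ∈ avail C st v := mem_avail.2 ⟨heC, heo, hle⟩
          exact absurd (Finset.min'_le _ e this) (not_le.2 hlt)
      · exact Finset.mem_insert_of_mem (h2 p hp e heC hle hlt)
    · rw [cnt_insert hmocc, if_neg hv, Nat.add_zero]; exact h3
    · rw [cnt_insert hmocc, if_neg hv', Nat.add_zero]; exact h4

end XAux

namespace XAux

variable {n : ℕ} {C : Finset (Fin n)} {a b : Fin n}

lemma Rgen_step {v : Fin n} (hv : v ≠ a) (hv' : v ≠ b) {st st' : Finset (Fin n × Fin n)}
    (h : Rgen C a b st st') : Rgen C a b (fillStep C st v) (fillStep C st' v) := by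
  obtain ⟨ho, hac, hcnt⟩ := h
  rw [fillStep_eq, fillStep_eq, avail_congr ho]
  split
  case isFalse => exact ⟨ho, hac, hcnt⟩
  case isTrue hne =>
    set m := (avail C st' v).min' hne with hm
    have hmem : m ∈ avail C st' v := (avail C st' v).min'_mem hne
    rw [mem_avail] at hmem
    have hm' : m ∉ occ st := ho ▸ hmem.2.1
    refine ⟨?_, ?_, ?_⟩
    · rw [occ_insert, occ_insert, ho]
    · intro hCa; exact (occ_insert _ _) ▸ Finset.mem_insert_of_mem (hac hCa)
    · intro k
      rw [cnt_insert hm', cnt_insert hmem.2.1, hcnt k,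
        if_congr (swap_fix_iff hv hv' k) rfl rfl]

lemma Rgen_final (hab : (a : ℕ) + 1 = (b : ℕ)) {st st' : Finset (Fin n × Fin n)}
    (h : Rgen C a b st st') : Rgen C a b (fillStep C st b) (fillStep C st' a) := by
  obtain ⟨ho, hac, hcnt⟩ := h
  have havail : avail C st b = avail C st' a := by
    ext i
    rw [mem_avail, mem_avail, ← ho]
    constructor
    · rintro ⟨h1, h2, h3⟩
      exact ⟨h1, h2, le_trans (le_of_lt (lt_ab hab)) h3⟩
    · rintro ⟨h1, h2, h3⟩
      refine ⟨h1, h2, ?_⟩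
      have : i ≠ a := by rintro rfl; exact h2 (hac h1)
      exact b_le_of_lt hab (lt_of_le_of_ne h3 (Ne.symm this))
  rw [fillStep_eq, fillStep_eq, havail]
  split
  case isFalse => exact ⟨ho, hac, hcnt⟩
  case isTrue hne =>
    set m := (avail C st' a).min' hne with hm
    have hmem : m ∈ avail C st' a := (avail C st' a).min'_mem hne
    rw [mem_avail] at hmem
    have hm' : m ∉ occ st := ho ▸ hmem.2.1
    refine ⟨by rw [occ_insert, occ_insert, ho], ?_, ?_⟩
    · intro hCa; exact (occ_insert _ _) ▸ Finset.mem_insert_of_mem (hac hCa)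
    · intro k
      rw [cnt_insert hm', cnt_insert hmem.2.1, hcnt k,
        if_congr (eq_a_swap_iff k).symm rfl rfl]

end XAux

namespace XAux

variable {n : ℕ} {C : Finset (Fin n)} {a b : Fin n}

lemma fillStep_self {v : Fin n} {st : Finset (Fin n × Fin n)}
    (hvC : v ∈ C) (hvocc : v ∉ occ st) : fillStep C st v = insert (v, v) st := by
  have hv : v ∈ avail C st v := mem_avail.2 ⟨hvC, hvocc, le_refl v⟩
  rw [fillStep_eq, dif_pos ⟨v, hv⟩]
  have : (avail C st v).min' ⟨v, hv⟩ = v :=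
    min'_eq ⟨v, hv⟩ hv (fun x hx => (mem_avail.1 hx).2.2)
  rw [this]

lemma R2_final (hab : (a : ℕ) + 1 = (b : ℕ)) {st st' : Finset (Fin n × Fin n)}
    (h : R2 C a b st st') : Rgen C a b (fillStep C st b) (fillStep C st' a) := by
  obtain ⟨u, rfl, rfl, hau, hbu, haC, hbC, hca, hcb⟩ := h
  have hne := ne_ab hab
  have hb1 : b ∉ occ (insert ((a : Fin n), a) u) := by
    rw [occ_insert]; simp only [Finset.mem_insert]
    rintro (h | h); exact hne h.symm; exact hbu h
  have ha1 : a ∉ occ (insert ((b : Fin n), b) u) := by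
    rw [occ_insert]; simp only [Finset.mem_insert]
    rintro (h | h); exact hne h; exact hau h
  rw [fillStep_self hbC hb1, fillStep_self haC ha1]
  refine ⟨?_, ?_, ?_⟩
  · rw [occ_insert, occ_insert, occ_insert, occ_insert]
    exact Finset.insert_comm _ _ _
  · intro _
    rw [occ_insert, occ_insert]
    exact Finset.mem_insert_of_mem (Finset.mem_insert_self _ _)
  · intro k
    rw [cnt_insert hb1, cnt_insert ha1, cnt_insert hau, cnt_insert hbu,
      if_congr (eq_b_swap_iff k) rfl rfl, if_congr (eq_a_swap_iff k) rfl rfl,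
      cnt_swap_base hca hcb k]

lemma R2_step (hab : (a : ℕ) + 1 = (b : ℕ)) {v : Fin n} (hv : v ≠ a) (hv' : v ≠ b)
    {st st' : Finset (Fin n × Fin n)} (h : R2 C a b st st') :
    R2 C a b (fillStep C st v) (fillStep C st' v) ∨
      Rgen C a b (fillStep C st v) (fillStep C st' v) := by
  obtain ⟨u, rfl, rfl, hau, hbu, haC, hbC, hca, hcb⟩ := h
  have hne := ne_ab hab
  have hltab := lt_ab hab
  have hA1 : ∀ i, i ∈ avail C (insert ((a:Fin n), a) u) v ↔
      (i ∈ C ∧ i ∉ occ u ∧ i ≠ a ∧ v ≤ i) := by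
    intro i
    rw [mem_avail, occ_insert, Finset.mem_insert]
    tauto
  have hA2 : ∀ i, i ∈ avail C (insert ((b:Fin n), b) u) v ↔
      (i ∈ C ∧ i ∉ occ u ∧ i ≠ b ∧ v ≤ i) := by
    intro i
    rw [mem_avail, occ_insert, Finset.mem_insert]
    tauto
  rcases le_or_gt v a with hva | hav
  · -- v ≤ a
    have hbA1 : b ∈ avail C (insert ((a:Fin n), a) u) v :=
      (hA1 b).2 ⟨hbC, hbu, hne.symm, le_trans hva (le_of_lt hltab)⟩
    have haA2 : a ∈ avail C (insert ((b:Fin n), b) u) v :=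
      (hA2 a).2 ⟨haC, hau, hne, hva⟩
    by_cases hEx : ∃ e, e ∈ C ∧ e ∉ occ u ∧ v ≤ e ∧ e < a
    · -- common small available box: both fillings place v there
      obtain ⟨e, heC, heu, hve, hea⟩ := hEx
      have heA1 : e ∈ avail C (insert ((a:Fin n), a) u) v :=
        (hA1 e).2 ⟨heC, heu, ne_of_lt hea, hve⟩
      have heA2 : e ∈ avail C (insert ((b:Fin n), b) u) v :=
        (hA2 e).2 ⟨heC, heu, ne_of_lt (lt_trans hea hltab), hve⟩
      have hne1 : (avail C (insert ((a:Fin n), a) u) v).Nonempty := ⟨e, heA1⟩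
      have hne2 : (avail C (insert ((b:Fin n), b) u) v).Nonempty := ⟨e, heA2⟩
      set m₁ := (avail C (insert ((a:Fin n), a) u) v).min' hne1 with hm₁
      set m₂ := (avail C (insert ((b:Fin n), b) u) v).min' hne2 with hm₂
      have hm₁m : m₁ ∈ _ := Finset.min'_mem _ hne1
      have hm₂m : m₂ ∈ _ := Finset.min'_mem _ hne2
      rw [hA1] at hm₁m; rw [hA2] at hm₂m
      have hm₁a : m₁ < a := lt_of_le_of_lt (Finset.min'_le _ e heA1) hea
      have hm₂a : m₂ < a := lt_of_le_of_lt (Finset.min'_le _ e heA2) hea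
      have h12 : m₁ = m₂ := by
        apply le_antisymm
        · exact Finset.min'_le _ _ ((hA1 m₂).2
            ⟨hm₂m.1, hm₂m.2.1, ne_of_lt hm₂a, hm₂m.2.2.2⟩)
        · exact Finset.min'_le _ _ ((hA2 m₁).2
            ⟨hm₁m.1, hm₁m.2.1, ne_of_lt (lt_trans hm₁a hltab), hm₁m.2.2.2⟩)
      left
      rw [fillStep_eq, fillStep_eq, dif_pos hne1, dif_pos hne2, ← hm₁, ← hm₂, ← h12]
      refine ⟨insert (m₁, v) u, Finset.insert_comm _ _ _, Finset.insert_comm _ _ _,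
        ?_, ?_, haC, hbC, ?_, ?_⟩
      · rw [occ_insert, Finset.mem_insert]
        rintro (h | h); exact absurd h.symm (ne_of_lt hm₁a); exact hau h
      · rw [occ_insert, Finset.mem_insert]
        rintro (h | h); exact absurd h.symm (ne_of_lt (lt_trans hm₁a hltab)); exact hbu h
      · rw [cnt_insert hm₁m.2.1, if_neg hv, Nat.add_zero]; exact hca
      · rw [cnt_insert hm₁m.2.1, if_neg hv', Nat.add_zero]; exact hcb
    · -- merge: v goes to box b in st and box a in st'
      push_neg at hEx
      have hmin1 : (avail C (insert ((a:Fin n), a) u) v).min' ⟨b, hbA1⟩ = b := by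
        apply min'_eq _ hbA1
        intro x hx
        rw [hA1] at hx
        obtain ⟨hx1, hx2, hx3, hx4⟩ := hx
        rcases lt_or_ge x a with hxa | hax
        · exact absurd hxa (not_lt.2 (hEx x hx1 hx2 hx4))
        · exact b_le_of_lt hab (lt_of_le_of_ne hax (Ne.symm hx3))
      have hmin2 : (avail C (insert ((b:Fin n), b) u) v).min' ⟨a, haA2⟩ = a := by
        apply min'_eq _ haA2
        intro x hx
        rw [hA2] at hx
        obtain ⟨hx1, hx2, hx3, hx4⟩ := hx
        rcases lt_or_ge x a with hxa | hax
        · exact absurd hxa (not_lt.2 (hEx x hx1 hx2 hx4))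
        · exact hax
      right
      rw [fillStep_eq, fillStep_eq, dif_pos ⟨b, hbA1⟩, dif_pos ⟨a, haA2⟩, hmin1, hmin2]
      have hb1 : b ∉ occ (insert ((a : Fin n), a) u) := by
        rw [occ_insert, Finset.mem_insert]
        rintro (h | h); exact hne h.symm; exact hbu h
      have ha1 : a ∉ occ (insert ((b : Fin n), b) u) := by
        rw [occ_insert, Finset.mem_insert]
        rintro (h | h); exact hne h; exact hau h
      refine ⟨?_, ?_, ?_⟩
      · rw [occ_insert, occ_insert, occ_insert, occ_insert]
        exact Finset.insert_comm _ _ _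
      · intro _
        rw [occ_insert, occ_insert]
        exact Finset.mem_insert_of_mem (Finset.mem_insert_self _ _)
      · intro k
        rw [cnt_insert hb1, cnt_insert ha1, cnt_insert hau, cnt_insert hbu,
          if_congr (eq_b_swap_iff k) rfl rfl, if_congr (swap_fix_iff hv hv' k) rfl rfl,
          cnt_swap_base hca hcb k]
  · -- a < v, hence b < v
    have hbv : b < v := lt_of_le_of_ne (b_le_of_lt hab hav) (Ne.symm hv')
    have hEq : avail C (insert ((a:Fin n), a) u) v = avail C (insert ((b:Fin n), b) u) v := by
      ext i
      rw [hA1, hA2]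
      constructor
      · rintro ⟨h1, h2, _, h4⟩
        exact ⟨h1, h2, ne_of_gt (lt_of_lt_of_le hbv h4), h4⟩
      · rintro ⟨h1, h2, _, h4⟩
        exact ⟨h1, h2, ne_of_gt (lt_of_lt_of_le (lt_trans hltab hbv) h4), h4⟩
    rw [fillStep_eq, fillStep_eq, hEq]
    split
    case isFalse =>
      left
      exact ⟨u, rfl, rfl, hau, hbu, haC, hbC, hca, hcb⟩
    case isTrue hone =>
      set m := (avail C (insert ((b:Fin n), b) u) v).min' hone with hm
      have hmm : m ∈ _ := Finset.min'_mem _ hone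
      rw [hA2] at hmm
      have hvm : v ≤ m := hmm.2.2.2
      have hma : m ≠ a := ne_of_gt (lt_of_lt_of_le (lt_trans hltab hbv) hvm)
      left
      refine ⟨insert (m, v) u, Finset.insert_comm _ _ _, Finset.insert_comm _ _ _,
        ?_, ?_, haC, hbC, ?_, ?_⟩
      · rw [occ_insert, Finset.mem_insert]
        rintro (h | h); exact hma h.symm; exact hau h
      · rw [occ_insert, Finset.mem_insert]
        rintro (h | h); exact hmm.2.2.1 h.symm; exact hbu h
      · rw [cnt_insert hmm.2.1, if_neg hv, Nat.add_zero]; exact hca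
      · rw [cnt_insert hmm.2.1, if_neg hv', Nat.add_zero]; exact hcb

lemma A_step (hab : (a : ℕ) + 1 = (b : ℕ)) (hC : a ∈ C → b ∈ C)
    {st : Finset (Fin n × Fin n)} (h : P0 C a b st) :
    R2 C a b (fillStep C st a) (fillStep C st b) ∨
      Rgen C a b (fillStep C st a) (fillStep C st b) := by
  obtain ⟨h1, h2, h3, h4⟩ := h
  by_cases hA : a ∈ C ∧ a ∉ occ st
  · -- case B : a is available
    left
    have hbocc : b ∉ occ st := by
      intro hb
      obtain ⟨p, hp, hp1⟩ := Finset.mem_image.1 hb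
      have hpb : p.2 ≠ b := cnt_eq_zero_iff.1 h4 p hp
      have : p.2 ≤ a := le_a_of_lt hab (lt_of_le_of_ne (hp1 ▸ h1 p hp) hpb)
      exact hA.2 (h2 p hp a hA.1 this (hp1 ▸ lt_ab hab))
    rw [fillStep_self hA.1 hA.2, fillStep_self (hC hA.1) hbocc]
    exact ⟨st, rfl, rfl, hA.2, hbocc, hA.1, hC hA.1, h3, h4⟩
  · -- case A : a is not available
    right
    push_neg at hA
    have hEq : avail C st a = avail C st b := by
      ext i
      rw [mem_avail, mem_avail]
      constructor
      · rintro ⟨hi1, hi2, hi3⟩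
        have : i ≠ a := by rintro rfl; exact hi2 (hA hi1)
        exact ⟨hi1, hi2, b_le_of_lt hab (lt_of_le_of_ne hi3 (Ne.symm this))⟩
      · rintro ⟨hi1, hi2, hi3⟩
        exact ⟨hi1, hi2, le_trans (le_of_lt (lt_ab hab)) hi3⟩
    by_cases hone : (avail C st b).Nonempty
    · rw [fillStep_eq, fillStep_eq, hEq, dif_pos hone, dif_pos hone]
      set m := (avail C st b).min' hone with hm
      have hmm : m ∈ _ := Finset.min'_mem _ hone
      rw [mem_avail] at hmm
      refine ⟨by rw [occ_insert, occ_insert], ?_, ?_⟩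
      · intro hCa
        rw [occ_insert]
        exact Finset.mem_insert_of_mem (hA hCa)
      · intro k
        rw [cnt_insert hmm.2.1, cnt_insert hmm.2.1,
          if_congr (eq_b_swap_iff k).symm rfl rfl, cnt_swap_base h3 h4 k]
    · rw [fillStep_eq, fillStep_eq, hEq, dif_neg hone, dif_neg hone]
      exact ⟨rfl, hA, cnt_swap_base h3 h4⟩

end XAux

namespace XAux

variable {n : ℕ} {C : Finset (Fin n)} {a b : Fin n}

lemma P0_fold {L : List (Fin n)} (hL : ∀ v ∈ L, v ≠ a ∧ v ≠ b)
    {st : Finset (Fin n × Fin n)} (h : P0 C a b st) :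
    P0 C a b (L.foldl (fillStep C) st) := by
  induction L generalizing st with
  | nil => exact h
  | cons v L ih =>
    rw [List.foldl_cons]
    exact ih (fun x hx => hL x (List.mem_cons_of_mem _ hx))
      (P0_step (hL v (List.mem_cons_self)).1 (hL v (List.mem_cons_self)).2 h)

lemma Rgen_fold {L : List (Fin n)} (hL : ∀ v ∈ L, v ≠ a ∧ v ≠ b)
    {st st' : Finset (Fin n × Fin n)} (h : Rgen C a b st st') :
    Rgen C a b (L.foldl (fillStep C) st) (L.foldl (fillStep C) st') := by
  induction L generalizing st st' with
  | nil => exact h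
  | cons v L ih =>
    rw [List.foldl_cons, List.foldl_cons]
    exact ih (fun x hx => hL x (List.mem_cons_of_mem _ hx))
      (Rgen_step (hL v (List.mem_cons_self)).1 (hL v (List.mem_cons_self)).2 h)

lemma Q_fold (hab : (a : ℕ) + 1 = (b : ℕ)) {L : List (Fin n)}
    (hL : ∀ v ∈ L, v ≠ a ∧ v ≠ b) {st st' : Finset (Fin n × Fin n)}
    (h : R2 C a b st st' ∨ Rgen C a b st st') :
    R2 C a b (L.foldl (fillStep C) st) (L.foldl (fillStep C) st') ∨
      Rgen C a b (L.foldl (fillStep C) st) (L.foldl (fillStep C) st') := by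
  induction L generalizing st st' with
  | nil => exact h
  | cons v L ih =>
    rw [List.foldl_cons, List.foldl_cons]
    refine ih (fun x hx => hL x (List.mem_cons_of_mem _ hx)) ?_
    rcases h with h | h
    · exact R2_step hab (hL v (List.mem_cons_self)).1 (hL v (List.mem_cons_self)).2 h
    · exact Or.inr (Rgen_step (hL v (List.mem_cons_self)).1
        (hL v (List.mem_cons_self)).2 h)

lemma col_main (hab : (a : ℕ) + 1 = (b : ℕ)) (hC : a ∈ C → b ∈ C)
    (L₁ L₂ L₃ : List (Fin n))
    (h₁ : ∀ v ∈ L₁, v ≠ a ∧ v ≠ b) (h₂ : ∀ v ∈ L₂, v ≠ a ∧ v ≠ b)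
    (h₃ : ∀ v ∈ L₃, v ≠ a ∧ v ≠ b) (k : Fin n) :
    cnt ((L₁ ++ a :: (L₂ ++ b :: L₃)).foldl (fillStep C) ∅) k =
      cnt ((L₁ ++ b :: (L₂ ++ a :: L₃)).foldl (fillStep C) ∅) (Equiv.swap a b k) := by
  rw [List.foldl_append, List.foldl_cons, List.foldl_append, List.foldl_cons,
    List.foldl_append, List.foldl_cons, List.foldl_append, List.foldl_cons]
  have hst₀ : P0 C a b (L₁.foldl (fillStep C) ∅) := P0_fold h₁ P0_init
  have hQ := A_step hab hC hst₀
  have hQ2 := Q_fold hab h₂ hQ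
  have hR : Rgen C a b
      (fillStep C (L₂.foldl (fillStep C) (fillStep C (L₁.foldl (fillStep C) ∅) a)) b)
      (fillStep C (L₂.foldl (fillStep C) (fillStep C (L₁.foldl (fillStep C) ∅) b)) a) := by
    rcases hQ2 with h | h
    · exact R2_final hab h
    · exact Rgen_final hab h
  exact (Rgen_fold h₃ hR).2.2 k

end XAux

/-- If `α_r < α_{r+1}` and the value `r` appears before `r+1` in the one-line
notation of `w` (i.e. `w⁻¹(r) < w⁻¹(r+1)`), then `x(w) = x(s_r w)·s_r`, i.e.
`x(w)_k = x(s_r w)_{s_r(k)}` for every `k`. -/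
theorem xvec_swap_values (n r : ℕ) (hr : r + 1 < n)
    (α : Fin n → ℕ) (s : Equiv.Perm (Fin n))
    (hs : s = Equiv.swap ⟨r, Nat.lt_of_succ_lt hr⟩ ⟨r + 1, hr⟩)
    (hlt : α ⟨r, Nat.lt_of_succ_lt hr⟩ < α ⟨r + 1, hr⟩)
    (w : Equiv.Perm (Fin n))
    (hw : w.symm ⟨r, Nat.lt_of_succ_lt hr⟩ < w.symm ⟨r + 1, hr⟩) :
    ∀ k : Fin n, xvec α w k = xvec α (s * w) (s k) := by
  intro k
  set a : Fin n := ⟨r, Nat.lt_of_succ_lt hr⟩ with ha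
  set b : Fin n := ⟨r + 1, hr⟩ with hb
  have hab : (a : ℕ) + 1 = (b : ℕ) := rfl
  have hane : a ≠ b := XAux.ne_ab hab
  subst hs
  set L : List (Fin n) := (List.finRange n).map w with hLdef
  have hlen : L.length = n := by simp [hLdef]
  set p := ((w.symm a : Fin n) : ℕ) with hp
  set q := ((w.symm b : Fin n) : ℕ) with hq
  have hpq : p < q := hw
  have hqn : q < n := (w.symm b).isLt
  have hgetp : ∀ (h : p < L.length), L[p] = a := by
    intro h
    simp [hLdef, List.getElem_finRange, hp]
  have hgetq : ∀ (h : q < L.length), L[q] = b := by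
    intro h
    simp [hLdef, List.getElem_finRange, hq]
  set L₁ := L.take p with hL₁
  set L₂ := (L.drop (p + 1)).take (q - (p + 1)) with hL₂
  set L₃ := L.drop (q + 1) with hL₃
  have hd1 : L = L₁ ++ a :: (L₂ ++ b :: L₃) := by
    conv_lhs => rw [← List.take_append_drop p L]
    congr 1
    rw [List.drop_eq_getElem_cons (by omega : p < L.length), hgetp]
    congr 1
    conv_lhs => rw [← List.take_append_drop (q - (p + 1)) (L.drop (p + 1))]
    congr 1
    rw [List.drop_drop]
    have hqq : p + 1 + (q - (p + 1)) = q := by omega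
    rw [hqq, List.drop_eq_getElem_cons (by omega : q < L.length), hgetq]
  have hndL : L.Nodup := (List.nodup_finRange n).map w.injective
  have hmemaL : a ∈ L := List.mem_map.2 ⟨w.symm a, List.mem_finRange _, by simp⟩
  have hmembL : b ∈ L := List.mem_map.2 ⟨w.symm b, List.mem_finRange _, by simp⟩
  have hcA : L.count a = 1 := List.count_eq_one_of_mem hndL hmemaL
  have hcB : L.count b = 1 := List.count_eq_one_of_mem hndL hmembL
  rw [hd1, List.count_append, List.count_cons_self, List.count_append,
    List.count_cons_of_ne hane.symm] at hcA
  rw [hd1, List.count_append, List.count_cons_of_ne hane, List.count_append,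
    List.count_cons_self] at hcB
  have ha1 : a ∉ L₁ := List.count_eq_zero.1 (by omega)
  have ha2 : a ∉ L₂ := List.count_eq_zero.1 (by omega)
  have ha3 : a ∉ L₃ := List.count_eq_zero.1 (by omega)
  have hb1 : b ∉ L₁ := List.count_eq_zero.1 (by omega)
  have hb2 : b ∉ L₂ := List.count_eq_zero.1 (by omega)
  have hb3 : b ∉ L₃ := List.count_eq_zero.1 (by omega)
  have h₁ : ∀ v ∈ L₁, v ≠ a ∧ v ≠ b :=
    fun v hv => ⟨fun e => ha1 (e ▸ hv), fun e => hb1 (e ▸ hv)⟩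
  have h₂ : ∀ v ∈ L₂, v ≠ a ∧ v ≠ b :=
    fun v hv => ⟨fun e => ha2 (e ▸ hv), fun e => hb2 (e ▸ hv)⟩
  have h₃ : ∀ v ∈ L₃, v ≠ a ∧ v ≠ b :=
    fun v hv => ⟨fun e => ha3 (e ▸ hv), fun e => hb3 (e ▸ hv)⟩
  have hmap : L.map (Equiv.swap a b) = L₁ ++ b :: (L₂ ++ a :: L₃) := by
    conv_lhs => rw [hd1]
    rw [List.map_append, List.map_cons, List.map_append, List.map_cons,
      Equiv.swap_apply_left, Equiv.swap_apply_right]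
    have e₁ : L₁.map (Equiv.swap a b) = L₁ := by
      rw [List.map_congr_left (fun x hx =>
        Equiv.swap_apply_of_ne_of_ne (h₁ x hx).1 (h₁ x hx).2), List.map_id']
    have e₂ : L₂.map (Equiv.swap a b) = L₂ := by
      rw [List.map_congr_left (fun x hx =>
        Equiv.swap_apply_of_ne_of_ne (h₂ x hx).1 (h₂ x hx).2), List.map_id']
    have e₃ : L₃.map (Equiv.swap a b) = L₃ := by
      rw [List.map_congr_left (fun x hx =>
        Equiv.swap_apply_of_ne_of_ne (h₃ x hx).1 (h₃ x hx).2), List.map_id']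
    rw [e₁, e₂, e₃]
  unfold xvec
  apply Finset.sum_congr rfl
  intro j _
  have hCj : a ∈ skyCol α j → b ∈ skyCol α j := by
    simp only [skyCol, Finset.mem_filter, Finset.mem_univ, true_and]
    intro h
    exact lt_trans h hlt
  have e1 : fillCol (skyCol α j) w = L.foldl (fillStep (skyCol α j)) ∅ := rfl
  have e2 : fillCol (skyCol α j) (Equiv.swap a b * w) =
      (L.map (Equiv.swap a b)).foldl (fillStep (skyCol α j)) ∅ := by
    unfold fillCol
    congr 1
    rw [hLdef, List.map_map]
    rfl
  show XAux.cnt (fillCol (skyCol α j) w) k =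
    XAux.cnt (fillCol (skyCol α j) (Equiv.swap a b * w)) (Equiv.swap a b k)
  rw [e1, e2, hmap]
  conv_lhs => rw [hd1]
  exact XAux.col_main hab hCj L₁ L₂ L₃ h₁ h₂ h₃ k
end

section
/- Let α be a composition with α_r < α_{r+1}, α' = α·s_r, and w ∈ S_n a permutation in which the value r appears before the value r+1. Then the vertex vectors agree: x(w) computed from D(α) equals x'(w) computed from D(α'). -/
namespace XvecAux

variable {n : ℕ}

/-- The set of available rows. -/
def avail (C : Finset (Fin n)) (st : Finset (Fin n × Fin n)) (v : Fin n) : Finset (Fin n) :=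
  (C \ st.image Prod.fst).filter (fun i => v ≤ i)

lemma mem_avail {C : Finset (Fin n)} {st : Finset (Fin n × Fin n)} {v x : Fin n}
    (hx : x ∈ avail C st v) : x ∈ C ∧ x ∉ st.image Prod.fst ∧ v ≤ x := by
  simp only [avail, Finset.mem_filter, Finset.mem_sdiff] at hx
  exact ⟨hx.1.1, hx.1.2, hx.2⟩

lemma fillStep_eq (C : Finset (Fin n)) (st : Finset (Fin n × Fin n)) (v : Fin n) :
    fillStep C st v =
      if h : (avail C st v).Nonempty then insert ((avail C st v).min' h, v) st else st := rfl

lemma occ_mono (C : Finset (Fin n)) (st : Finset (Fin n × Fin n)) (v : Fin n) :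
    st.image Prod.fst ⊆ (fillStep C st v).image Prod.fst := by
  rw [fillStep_eq]
  split
  · rw [Finset.image_insert]
    exact Finset.subset_insert _ _
  · exact subset_rfl

section Swap

variable {a b : Fin n}

lemma swap_lt_swap (hab : (a : ℕ) + 1 = (b : ℕ)) {x y : Fin n}
    (hx : x ≠ a) (hy : y ≠ a) (hxy : x < y) :
    Equiv.swap a b x < Equiv.swap a b y := by
  have hab' : a < b := by rw [Fin.lt_iff_val_lt_val]; omega
  have hxy' : (x : ℕ) < (y : ℕ) := Fin.lt_iff_val_lt_val.mp hxy
  rcases eq_or_ne x b with hxb | hxb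
  · rcases eq_or_ne y b with hyb | hyb
    · have h1 : (x : ℕ) = (b : ℕ) := congrArg Fin.val hxb
      have h2 : (y : ℕ) = (b : ℕ) := congrArg Fin.val hyb
      exact absurd hxy' (by omega)
    · rw [hxb, Equiv.swap_apply_right, Equiv.swap_apply_of_ne_of_ne hy hyb]
      exact lt_trans hab' (hxb ▸ hxy)
  · rcases eq_or_ne y b with hyb | hyb
    · rw [hyb, Equiv.swap_apply_right, Equiv.swap_apply_of_ne_of_ne hx hxb]
      have h1 : (x : ℕ) ≠ (a : ℕ) := fun h => hx (Fin.ext h)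
      have h3 : (y : ℕ) = (b : ℕ) := congrArg Fin.val hyb
      exact Fin.lt_iff_val_lt_val.mpr (by omega)
    · rw [Equiv.swap_apply_of_ne_of_ne hx hxb, Equiv.swap_apply_of_ne_of_ne hy hyb]
      exact hxy

lemma swap_le_swap (hab : (a : ℕ) + 1 = (b : ℕ)) {x y : Fin n}
    (hx : x ≠ a) (hy : y ≠ a) (hxy : x ≤ y) :
    Equiv.swap a b x ≤ Equiv.swap a b y := by
  rcases eq_or_lt_of_le hxy with rfl | h
  · exact le_rfl
  · exact le_of_lt (swap_lt_swap hab hx hy h)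

lemma le_swap_iff (hab : (a : ℕ) + 1 = (b : ℕ)) {v x : Fin n}
    (hv : v ≠ b) (hx : x ≠ a) : v ≤ Equiv.swap a b x ↔ v ≤ x := by
  rcases eq_or_ne x b with hxb | hxb
  · rw [hxb, Equiv.swap_apply_right]
    have hv' : (v : ℕ) ≠ (b : ℕ) := fun h => hv (Fin.ext h)
    have hxb' : (x : ℕ) = (b : ℕ) := congrArg Fin.val hxb
    rw [Fin.le_iff_val_le_val, Fin.le_iff_val_le_val]
    omega
  · rw [Equiv.swap_apply_of_ne_of_ne hx hxb]

lemma avail_image (hab : (a : ℕ) + 1 = (b : ℕ)) (C : Finset (Fin n))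
    (st : Finset (Fin n × Fin n)) (hC0 : a ∉ C) (v : Fin n) (hv : v ≠ b) :
    avail (C.image (Equiv.swap a b)) (st.image (Prod.map (Equiv.swap a b) id)) v
      = (avail C st v).image (Equiv.swap a b) := by
  unfold avail
  have h1 : (st.image (Prod.map (Equiv.swap a b) id)).image Prod.fst
      = (st.image Prod.fst).image (Equiv.swap a b) := by
    rw [Finset.image_image, Finset.image_image]; rfl
  rw [h1, ← Finset.image_sdiff _ _ (Equiv.swap a b).injective, Finset.filter_image]
  congr 1
  apply Finset.filter_congr
  intro x hx
  have hxC : x ∈ C := (Finset.mem_sdiff.mp hx).1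
  have hxa : x ≠ a := fun h => hC0 (h ▸ hxC)
  simp only [le_swap_iff hab hv hxa]

lemma stepA (hab : (a : ℕ) + 1 = (b : ℕ)) (C : Finset (Fin n))
    (st : Finset (Fin n × Fin n)) (hC0 : a ∉ C) (v : Fin n) (hv : v ≠ b) :
    fillStep (C.image (Equiv.swap a b)) (st.image (Prod.map (Equiv.swap a b) id)) v
      = (fillStep C st v).image (Prod.map (Equiv.swap a b) id) := by
  rw [fillStep_eq, fillStep_eq, avail_image hab C st hC0 v hv]
  by_cases h : (avail C st v).Nonempty
  · have h' : ((avail C st v).image (Equiv.swap a b)).Nonempty := h.image _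
    rw [dif_pos h', dif_pos h]
    have hne : ∀ x ∈ avail C st v, x ≠ a := by
      intro x hx h
      exact hC0 (h ▸ (Finset.mem_sdiff.mp (Finset.mem_filter.mp hx).1).1)
    have hmin : ((avail C st v).image (Equiv.swap a b)).min' h'
        = Equiv.swap a b ((avail C st v).min' h) := by
      apply le_antisymm
      · exact Finset.min'_le _ _ (Finset.mem_image_of_mem _ ((avail C st v).min'_mem h))
      · apply Finset.le_min'
        intro y hy
        obtain ⟨x, hx, rfl⟩ := Finset.mem_image.mp hy
        exact swap_le_swap hab (hne _ ((avail C st v).min'_mem h)) (hne _ hx)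
          (Finset.min'_le _ _ hx)
      
    rw [hmin, Finset.image_insert]
    rfl
  · have h' : ¬ ((avail C st v).image (Equiv.swap a b)).Nonempty := by
      rw [Finset.image_nonempty]; exact h
    rw [dif_neg h', dif_neg h]

lemma stepB (C : Finset (Fin n)) (st : Finset (Fin n × Fin n)) (hC0 : a ∉ C)
    (hocc : b ∈ st.image Prod.fst) :
    fillStep (C.image (Equiv.swap a b)) (st.image (Prod.map (Equiv.swap a b) id)) b
      = (fillStep C st b).image (Prod.map (Equiv.swap a b) id) := by
  have hfix : ∀ x ∈ avail C st b, Equiv.swap a b x = x := by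
    intro x hx
    simp only [avail, Finset.mem_filter, Finset.mem_sdiff] at hx
    have hxa : x ≠ a := fun h => hC0 (h ▸ hx.1.1)
    have hxb : x ≠ b := fun h => hx.1.2 (h ▸ hocc)
    exact Equiv.swap_apply_of_ne_of_ne hxa hxb
  have hav : avail (C.image (Equiv.swap a b)) (st.image (Prod.map (Equiv.swap a b) id)) b
      = avail C st b := by
    have h1 : (st.image (Prod.map (Equiv.swap a b) id)).image Prod.fst
        = (st.image Prod.fst).image (Equiv.swap a b) := by
      rw [Finset.image_image, Finset.image_image]; rfl
    unfold avail
    rw [h1, ← Finset.image_sdiff _ _ (Equiv.swap a b).injective, Finset.filter_image]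
    have h2 : ((C \ st.image Prod.fst).filter fun x => b ≤ Equiv.swap a b x)
        = avail C st b := by
      unfold avail
      apply Finset.filter_congr
      intro x hx
      have hxa : x ≠ a := fun h => hC0 (h ▸ (Finset.mem_sdiff.mp hx).1)
      have hxb : x ≠ b := fun h => (Finset.mem_sdiff.mp hx).2 (h ▸ hocc)
      rw [Equiv.swap_apply_of_ne_of_ne hxa hxb]
    rw [h2]
    ext x
    simp only [Finset.mem_image]
    constructor
    · rintro ⟨y, hy, rfl⟩
      rwa [hfix y hy]
    · intro hx
      exact ⟨x, hx, hfix x hx⟩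
  rw [fillStep_eq, fillStep_eq, hav]
  by_cases h : (avail C st b).Nonempty
  · rw [dif_pos h, dif_pos h, Finset.image_insert]
    have : Prod.map (Equiv.swap a b) id ((avail C st b).min' h, b)
        = ((avail C st b).min' h, b) := by
      simp [Prod.map, hfix _ ((avail C st b).min'_mem h)]
    rw [this]
  · rw [dif_neg h, dif_neg h]

lemma stepC (hab : (a : ℕ) + 1 = (b : ℕ)) (C : Finset (Fin n))
    (st : Finset (Fin n × Fin n)) (hC1 : b ∈ C) (hC0 : a ∉ C) :
    b ∈ (fillStep C st a).image Prod.fst := by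
  by_cases hocc : b ∈ st.image Prod.fst
  · exact occ_mono C st a hocc
  · have hb : b ∈ avail C st a := by
      rw [avail, Finset.mem_filter, Finset.mem_sdiff]
      refine ⟨⟨hC1, hocc⟩, ?_⟩
      rw [Fin.le_iff_val_le_val]; omega
    have h : (avail C st a).Nonempty := ⟨b, hb⟩
    rw [fillStep_eq, dif_pos h]
    have hm : (avail C st a).min' h = b := by
      have h1 : ((avail C st a).min' h : ℕ) ≤ (b : ℕ) :=
        Fin.le_iff_val_le_val.mp (Finset.min'_le _ _ hb)
      have hmem := mem_avail ((avail C st a).min'_mem h)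
      have hma : ((avail C st a).min' h : ℕ) ≠ (a : ℕ) :=
        fun h' => hC0 ((Fin.ext h' : (avail C st a).min' h = a) ▸ hmem.1)
      have h2 : (a : ℕ) ≤ ((avail C st a).min' h : ℕ) :=
        Fin.le_iff_val_le_val.mp hmem.2.2
      apply Fin.ext
      omega
    rw [hm, Finset.image_insert]
    exact Finset.mem_insert_self _ _

lemma fold_eq (hab : (a : ℕ) + 1 = (b : ℕ)) (C : Finset (Fin n))
    (hC1 : b ∈ C) (hC0 : a ∉ C) (l : List (Fin n)) :
    ∀ st : Finset (Fin n × Fin n),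
      (b ∈ st.image Prod.fst ∨ ∃ l1 l2, l = l1 ++ a :: l2 ∧ b ∉ l1) →
      List.foldl (fillStep (C.image (Equiv.swap a b)))
          (st.image (Prod.map (Equiv.swap a b) id)) l
        = (List.foldl (fillStep C) st l).image (Prod.map (Equiv.swap a b) id) := by
  induction l with
  | nil => intro st _; rfl
  | cons v t ih =>
    intro st hinv
    have hne : a ≠ b := by intro h; rw [h] at hab; omega
    simp only [List.foldl_cons]
    by_cases hv : v = b
    · subst hv
      have hocc : v ∈ st.image Prod.fst := by
        rcases hinv with h | ⟨l1, l2, heq, hb1⟩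
        · exact h
        · cases l1 with
          | nil =>
            simp only [List.nil_append, List.cons.injEq] at heq
            exact absurd heq.1.symm hne
          | cons x l1' =>
            simp only [List.cons_append, List.cons.injEq] at heq
            exact absurd (List.mem_cons_self : x ∈ x :: l1') (heq.1 ▸ hb1)
      rw [stepB C st hC0 hocc]
      exact ih _ (Or.inl (occ_mono C st v hocc))
    · rw [stepA hab C st hC0 v hv]
      apply ih
      rcases hinv with h | ⟨l1, l2, heq, hb1⟩
      · exact Or.inl (occ_mono C st v h)
      · cases l1 with
        | nil =>
          simp only [List.nil_append, List.cons.injEq] at heq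
          obtain ⟨rfl, rfl⟩ := heq
          exact Or.inl (stepC hab C st hC1 hC0)
        | cons x l1' =>
          simp only [List.cons_append, List.cons.injEq] at heq
          obtain ⟨rfl, rfl⟩ := heq
          exact Or.inr ⟨l1', l2, rfl, fun h => hb1 (List.mem_cons_of_mem _ h)⟩

lemma fillCol_image (hab : (a : ℕ) + 1 = (b : ℕ)) (C : Finset (Fin n))
    (hC1 : b ∈ C) (hC0 : a ∉ C) (w : Equiv.Perm (Fin n))
    (hw : w.symm a < w.symm b) :
    fillCol (C.image (Equiv.swap a b)) w
      = (fillCol C w).image (Prod.map (Equiv.swap a b) id) := by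
  have hk : ((w.symm a : Fin n) : ℕ) < (List.finRange n).length := by
    rw [List.length_finRange]; exact (w.symm a).isLt
  have hsplit : List.finRange n
      = (List.finRange n).take (w.symm a : ℕ) ++ w.symm a ::
          (List.finRange n).drop ((w.symm a : ℕ) + 1) := by
    conv_lhs => rw [← List.take_append_drop (w.symm a : ℕ) (List.finRange n)]
    congr 1
    rw [List.drop_eq_getElem_cons hk]
    congr 1
    simp
  have hmem : ∃ l1 l2, (List.finRange n).map w = l1 ++ a :: l2 ∧ b ∉ l1 := by
    refine ⟨((List.finRange n).take (w.symm a : ℕ)).map w,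
      ((List.finRange n).drop ((w.symm a : ℕ) + 1)).map w, ?_, ?_⟩
    · conv_lhs => rw [hsplit]
      rw [List.map_append, List.map_cons, Equiv.apply_symm_apply]
    · intro hb
      obtain ⟨x, hx, hwx⟩ := List.mem_map.mp hb
      rw [List.mem_take_iff_getElem] at hx
      obtain ⟨i, hi, hix⟩ := hx
      have hxval : (x : ℕ) < (w.symm a : ℕ) := by
        rw [← hix]
        simp only [List.getElem_finRange]
        exact lt_of_lt_of_le (Nat.lt_min.mp hi).1 le_rfl
      have : x = w.symm b := by
        apply_fun w.symm at hwx
        rwa [Equiv.symm_apply_apply] at hwx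
      rw [this] at hxval
      rw [Fin.lt_iff_val_lt_val] at hw
      omega
  unfold fillCol
  have h := fold_eq hab C hC1 hC0 ((List.finRange n).map w) ∅ (Or.inr hmem)
  rwa [Finset.image_empty] at h

lemma count_image (S : Finset (Fin n × Fin n)) (k : Fin n) :
    ((S.image (Prod.map (Equiv.swap a b) id)).filter (fun p => p.2 = k)).card
      = (S.filter (fun p => p.2 = k)).card := by
  rw [Finset.filter_image]
  have hinj : Function.Injective (Prod.map (Equiv.swap a b) (id : Fin n → Fin n)) :=
    Function.Injective.prodMap (Equiv.swap a b).injective Function.injective_id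
  rw [Finset.card_image_of_injective _ hinj]
  congr 1

lemma image_swap_eq_self {s : Finset (Fin n)} (h : a ∈ s ↔ b ∈ s) :
    s.image (Equiv.swap a b) = s := by
  have key : ∀ x, x ∈ s → Equiv.swap a b x ∈ s := by
    intro x hx
    rcases eq_or_ne x a with hxa | hxa
    · rw [hxa, Equiv.swap_apply_left]; exact h.mp (hxa ▸ hx)
    rcases eq_or_ne x b with hxb | hxb
    · rw [hxb, Equiv.swap_apply_right]; exact h.mpr (hxb ▸ hx)
    · rwa [Equiv.swap_apply_of_ne_of_ne hxa hxb]
  ext x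
  simp only [Finset.mem_image]
  constructor
  · rintro ⟨y, hy, rfl⟩
    exact key y hy
  · intro hx
    exact ⟨Equiv.swap a b x, key x hx, Equiv.swap_apply_self a b x⟩

end Swap

end XvecAux

/-- If `α_r < α_{r+1}`, `α' = α·s_r`, and the value `r` appears before `r+1`
in the one-line notation of `w`, then the vertex vectors computed from `D(α)`
and from `D(α')` agree: `x(w) = x'(w)`. -/
theorem xvec_swap_composition (n r : ℕ) (hr : r + 1 < n)
    (α α' : Fin n → ℕ) (s : Equiv.Perm (Fin n))
    (hs : s = Equiv.swap ⟨r, Nat.lt_of_succ_lt hr⟩ ⟨r + 1, hr⟩)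
    (hlt : α ⟨r, Nat.lt_of_succ_lt hr⟩ < α ⟨r + 1, hr⟩)
    (hα' : ∀ i, α' i = α (s i))
    (w : Equiv.Perm (Fin n))
    (hw : w.symm ⟨r, Nat.lt_of_succ_lt hr⟩ < w.symm ⟨r + 1, hr⟩) :
    ∀ k : Fin n, xvec α w k = xvec α' w k := by
  intro k
  set a : Fin n := ⟨r, Nat.lt_of_succ_lt hr⟩ with ha
  set b : Fin n := ⟨r + 1, hr⟩ with hb
  have hab : (a : ℕ) + 1 = (b : ℕ) := rfl
  have hsky : ∀ j : Fin n, skyCol α' j = (skyCol α j).image (Equiv.swap a b) := by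
    intro j
    ext i
    simp only [skyCol, Finset.mem_filter, Finset.mem_univ, true_and, Finset.mem_image]
    constructor
    · intro h
      rw [hα', hs] at h
      exact ⟨Equiv.swap a b i, h, Equiv.swap_apply_self a b i⟩
    · rintro ⟨x, hx, rfl⟩
      rw [hα', hs, Equiv.swap_apply_self]
      exact hx
  unfold xvec
  apply Finset.sum_congr rfl
  intro j _
  rw [hsky j]
  by_cases h1 : (j : ℕ) < α a
  · have h2 : (j : ℕ) < α b := lt_trans h1 hlt
    rw [XvecAux.image_swap_eq_self (by
      simp only [skyCol, Finset.mem_filter, Finset.mem_univ, true_and]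
      exact iff_of_true h1 h2)]
  · by_cases h2 : (j : ℕ) < α b
    · rw [XvecAux.fillCol_image hab _ (by
          simp only [skyCol, Finset.mem_filter, Finset.mem_univ, true_and]; exact h2)
        (by simp only [skyCol, Finset.mem_filter, Finset.mem_univ, true_and]; exact h1)
        w hw, XvecAux.count_image]
    · have h1' : ¬ (j : ℕ) < α a := h1
      rw [XvecAux.image_swap_eq_self (by
        simp only [skyCol, Finset.mem_filter, Finset.mem_univ, true_and]
        exact iff_of_false h1' h2)]
end
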